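/- arXiv:1007.3416 — 10 statements merged into one kernel-verified Lean document; each statement's English description precedes it below -/
import Mathlib

section
/- Let f : ℂ → ℂ be holomorphic. Then the real-valued function U(z) = ln( 8|f'(z)|² / (1+|f(z)|²)² ) satisfies the Liouville equation ΔU + e^U = 0 at every point z of the open set {z ∈ ℂ : f'(z) ≠ 0}. -/
open Complex ContinuousLinearMap

noncomputable def mulC (b : ℂ) : ℂ →L[ℝ] ℂ := ContinuousLinearMap.mul ℝ ℂ b
@[simp] lemma mulC_apply (b v : ℂ) : mulC b v = b * v := rfl

noncomputable def mulRe (c : ℂ) : ℂ →L[ℝ] ℝ :=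
  Complex.reCLM.comp (mulC c)
@[simp] lemma mulRe_apply (c v : ℂ) : mulRe c v = (c * v).re := rfl

lemma hasFDerivAt_of_holo {h : ℂ → ℂ} {w : ℂ} (hh : DifferentiableAt ℂ h w) :
    HasFDerivAt h (mulC (deriv h w)) w := by
  have := (hh.hasDerivAt).hasFDerivAt.restrictScalars ℝ
  refine this.congr_fderiv ?_
  ext v
  simp [smul_eq_mul, mul_comm]

lemma hasFDerivAt_normSq_comp {h : ℂ → ℂ} {w : ℂ} (hh : DifferentiableAt ℂ h w) :
    HasFDerivAt (fun u => Complex.normSq (h u)) (mulRe (2 * (starRingEnd ℂ) (h w) * deriv h w)) w := by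
  have h1 := hasFDerivAt_of_holo hh
  have hconj : HasFDerivAt (fun u => (starRingEnd ℂ) (h u))
      ((Complex.conjCLE.toContinuousLinearMap).comp (mulC (deriv h w))) w :=
    (Complex.conjCLE.toContinuousLinearMap.hasFDerivAt).comp w h1
  have hmul := hconj.mul h1
  have hre := Complex.reCLM.hasFDerivAt.comp w hmul
  have hfun : (fun u => Complex.normSq (h u)) = fun u => ((starRingEnd ℂ) (h u) * h u).re := by
    funext u
    simp [Complex.normSq_apply, Complex.mul_re, Complex.conj_re, Complex.conj_im]
  rw [hfun]
  refine (hre : HasFDerivAt (fun u => ((starRingEnd ℂ) (h u) * h u).re) _ w).congr_fderiv ?_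
  symm
  ext v
  simp [Complex.mul_re, Complex.mul_im, Complex.conj_re, Complex.conj_im]
  ring

lemma hasFDerivAt_log_comp {q : ℂ → ℝ} {L : ℂ →L[ℝ] ℝ} {w : ℂ}
    (hq : HasFDerivAt q L w) (hpos : 0 < q w) :
    HasFDerivAt (fun u => Real.log (q u)) ((q w)⁻¹ • L) w := by
  exact (Real.hasDerivAt_log hpos.ne').comp_hasFDerivAt w hq

lemma differentiable_deriv' {f : ℂ → ℂ} (hf : Differentiable ℂ f) :
    Differentiable ℂ (deriv f) := by
  have h1 : Differentiable ℂ (fderiv ℂ f) := fun w => ((hf.analyticAt w).fderiv).differentiableAt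
  exact ((ContinuousLinearMap.apply ℂ ℂ (1:ℂ)).differentiable).comp h1

/-- The Euclidean Laplacian on ℝ² ≅ ℂ of a real-valued function:
`Δf = ∂²f/∂x² + ∂²f/∂y²`. -/
noncomputable def planeLaplacian (f : ℂ → ℝ) (z : ℂ) : ℝ :=
  fderiv ℝ (fun w => fderiv ℝ f w 1) z 1 +
    fderiv ℝ (fun w => fderiv ℝ f w Complex.I) z Complex.I

/-- **Liouville's formula.** If `f` is holomorphic on `ℂ`, then
`U(z) = ln(8|f'(z)|²/(1+|f(z)|²)²)` solves `ΔU + e^U = 0` wherever `f'(z) ≠ 0`. -/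
theorem liouville_formula (f : ℂ → ℂ) (hf : Differentiable ℂ f)
    (U : ℂ → ℝ)
    (hU : ∀ z, U z =
      Real.log (8 * ‖deriv f z‖ ^ 2 / (1 + ‖f z‖ ^ 2) ^ 2)) :
    ∀ z : ℂ, deriv f z ≠ 0 → planeLaplacian U z + Real.exp (U z) = 0 := by
  set g : ℂ → ℂ := deriv f with hgdef
  have hg : Differentiable ℂ g := differentiable_deriv' hf
  have hgg : Differentiable ℂ (deriv g) := differentiable_deriv' hg
  have hΩ : IsOpen {w : ℂ | g w ≠ 0} := isOpen_ne.preimage hg.continuous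
  set c : ℂ → ℂ := fun w => 2 * deriv g w / g w -
      4 * (starRingEnd ℂ) (f w) * g w * ((((1 + Complex.normSq (f w))⁻¹ : ℝ)) : ℂ) with hcdef
  -- first derivative of the explicit formula
  have hV : ∀ w, g w ≠ 0 → HasFDerivAt
      (fun u => Real.log 8 + Real.log (Complex.normSq (g u))
        - 2 * Real.log (1 + Complex.normSq (f u))) (mulRe (c w)) w := by
    intro w hw
    have hq1 := hasFDerivAt_normSq_comp (hg w)
    have hq2 := hasFDerivAt_normSq_comp (hf w)
    have hs2 := hq2.const_add 1
    have hn1 : 0 < Complex.normSq (g w) := Complex.normSq_pos.mpr hw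
    have hspos : 0 < 1 + Complex.normSq (f w) := by have := Complex.normSq_nonneg (f w); linarith
    have l1 := hasFDerivAt_log_comp hq1 hn1
    have l2 := hasFDerivAt_log_comp hs2 hspos
    have hsum := (l1.const_add (Real.log 8)).sub (l2.const_mul 2)
    refine hsum.congr_fderiv ?_
    symm
    ext v
    have e1 : (g w).re * (g w).re + (g w).im * (g w).im ≠ 0 := by
      have := hn1; rw [Complex.normSq_apply] at this; exact this.ne'
    have e2 : (1:ℝ) + ((f w).re * (f w).re + (f w).im * (f w).im) ≠ 0 := by
      have := hspos; rw [Complex.normSq_apply] at this; exact this.ne'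
    simp only [mulRe_apply, ContinuousLinearMap.sub_apply, ContinuousLinearMap.smul_apply,
      smul_eq_mul, hcdef]
    simp only [Complex.sub_re, Complex.sub_im, Complex.add_re, Complex.add_im,
      Complex.mul_re, Complex.mul_im, Complex.div_re, Complex.div_im,
      Complex.inv_re, Complex.inv_im, Complex.normSq_apply,
      Complex.conj_re, Complex.conj_im, Complex.ofReal_re, Complex.ofReal_im,
      Complex.one_re, Complex.one_im, Complex.re_ofNat, Complex.im_ofNat]
    field_simp
    ring
  intro z hz
  have hzg : g z ≠ 0 := hz
  -- U agrees with the explicit formula on Ω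
  have hUeq : ∀ w, g w ≠ 0 → U w = Real.log 8 + Real.log (Complex.normSq (g w))
      - 2 * Real.log (1 + Complex.normSq (f w)) := by
    intro w hw
    have hn1 : 0 < Complex.normSq (g w) := Complex.normSq_pos.mpr hw
    have hspos : 0 < 1 + Complex.normSq (f w) := by have := Complex.normSq_nonneg (f w); linarith
    have habs : ‖f w‖ ^ 2 = Complex.normSq (f w) := Complex.sq_norm _
    have habs2 : ‖deriv f w‖ ^ 2 = Complex.normSq (g w) := Complex.sq_norm _
    rw [hU w, habs, habs2,
      Real.log_div (mul_pos (by norm_num : (0:ℝ) < 8) hn1).ne' (pow_ne_zero 2 hspos.ne'),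
      Real.log_mul (by norm_num) hn1.ne', Real.log_pow]
    push_cast
    ring
  have hfd : ∀ w, g w ≠ 0 → fderiv ℝ U w = mulRe (c w) := by
    intro w hw
    have hev : U =ᶠ[nhds w] (fun u => Real.log 8 + Real.log (Complex.normSq (g u))
        - 2 * Real.log (1 + Complex.normSq (f u))) :=
      Filter.eventuallyEq_of_mem (hΩ.mem_nhds hw) (fun u hu => hUeq u hu)
    rw [hev.fderiv_eq, (hV w hw).fderiv]
  -- second derivative data at z
  have hA := hasFDerivAt_of_holo (hf z)
  have hB := hasFDerivAt_of_holo (hg z)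
  have hconjA : HasFDerivAt (fun w => (starRingEnd ℂ) (f w))
      ((Complex.conjCLE.toContinuousLinearMap).comp (mulC (deriv f z))) z :=
    (Complex.conjCLE.toContinuousLinearMap.hasFDerivAt).comp z hA
  have hq2 := hasFDerivAt_normSq_comp (hf z)
  have hs2 := hq2.const_add 1
  have hspos : 0 < 1 + Complex.normSq (f z) := by have := Complex.normSq_nonneg (f z); linarith
  have hinv := (hasDerivAt_inv hspos.ne').comp_hasFDerivAt z hs2
  have hofr := Complex.ofRealCLM.hasFDerivAt.comp z hinv
  have hc1 : DifferentiableAt ℂ (fun w => 2 * deriv g w / g w) z :=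
    ((hgg z).const_mul 2).div (hg z) hzg
  have hterm1 := hasFDerivAt_of_holo hc1
  have hterm2 := ((hconjA.const_mul (4:ℂ)).mul hB).mul hofr
  have hc : HasFDerivAt c _ z := hterm1.sub hterm2
  have h2nd : ∀ e : ℂ, fderiv ℝ (fun w => fderiv ℝ U w e) z e
      = ((fderiv ℝ c z) e * e).re := by
    intro e
    have hev2 : (fun w => fderiv ℝ U w e) =ᶠ[nhds z] (fun w => (c w * e).re) :=
      Filter.eventuallyEq_of_mem (hΩ.mem_nhds hzg)
        (fun u hu => by rw [hfd u hu, mulRe_apply])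
    rw [hev2.fderiv_eq]
    have hcomp := (Complex.reCLM.comp ((ContinuousLinearMap.mul ℝ ℂ).flip e)).hasFDerivAt.comp z hc
    rw [show (⇑(Complex.reCLM.comp ((ContinuousLinearMap.mul ℝ ℂ).flip e)) ∘ c)
        = (fun w => (c w * e).re) from rfl] at hcomp
    rw [hcomp.fderiv, hc.fderiv]
    rfl
  have hexp : Real.exp (U z) =
      8 * Complex.normSq (g z) / (1 + Complex.normSq (f z)) ^ 2 := by
    have hn1 : 0 < Complex.normSq (g z) := Complex.normSq_pos.mpr hzg
    rw [hU z, Complex.sq_norm, Complex.sq_norm, Real.exp_log (by positivity)]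
  rw [planeLaplacian, h2nd 1, h2nd Complex.I, hexp, hc.fderiv]
  simp only [ContinuousLinearMap.sub_apply, ContinuousLinearMap.add_apply,
    ContinuousLinearMap.smul_apply, ContinuousLinearMap.comp_apply,
    ContinuousLinearMap.smulRight_apply, ContinuousLinearMap.coe_smul',
    Pi.smul_apply, mulC_apply, mulRe_apply, smul_eq_mul,
    ContinuousLinearMap.one_apply, Complex.ofRealCLM_apply,
    ContinuousLinearEquiv.coe_coe, Complex.conjCLE_apply]
  simp only [Function.comp_apply, Complex.ofRealCLM_apply, ← hgdef, mul_one, Pi.mul_apply]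
  have hne : (1:ℝ) + ((f z).re * (f z).re + (f z).im * (f z).im) ≠ 0 := by
    have := hspos; rw [Complex.normSq_apply] at this; exact this.ne'
  simp only [Complex.sub_re, Complex.sub_im, Complex.add_re, Complex.add_im,
    Complex.mul_re, Complex.mul_im, Complex.neg_re, Complex.neg_im,
    Complex.conj_re, Complex.conj_im, Complex.ofReal_re, Complex.ofReal_im,
    Complex.I_re, Complex.I_im, Complex.one_re, Complex.one_im,
    Complex.re_ofNat, Complex.im_ofNat, Complex.normSq_apply]
  field_simp
  ring
end

section
/- Let N ∈ ℕ and let f : ℂ → ℂ be holomorphic such that f' has a zero of multiplicity exactly N at the origin (i.e. f'(z) = z^N g(z) with g holomorphic and g(0) ≠ 0). Then the function U(z) = ln( 8|f'(z)|² / (1+|f(z)|²)² ) − ln |z|^{2N} satisfies the singular Liouville equation ΔU + |z|^{2N} e^U = 0 at every point of the set {z ∈ ℂ \ {0} : f'(z) ≠ 0}. -/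
open Complex Filter Topology ComplexConjugate

noncomputable def cmul (t : ℂ) : ℂ →L[ℝ] ℂ := ContinuousLinearMap.mul ℝ ℂ t
@[simp] lemma cmul_apply (t c : ℂ) : cmul t c = t * c := rfl

lemma HasDerivAt.toRealFD {φ : ℂ → ℂ} {φ' w : ℂ} (h : HasDerivAt φ φ' w) :
    HasFDerivAt φ (cmul φ') w := by
  have h2 := h.hasFDerivAt.restrictScalars ℝ
  refine h2.congr_fderiv ?_
  refine ContinuousLinearMap.ext fun c => ?_
  simp [cmul, mul_comm]

lemma re_hasFDerivAt {φ : ℂ → ℂ} {φ' w : ℂ} (h : HasDerivAt φ φ' w) :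
    HasFDerivAt (fun x => (φ x).re) (Complex.reCLM.comp (cmul φ')) w :=
  (Complex.reCLM.hasFDerivAt).comp w h.toRealFD

lemma nsq_hasFDerivAt {f : ℂ → ℂ} {b w : ℂ} (h : HasDerivAt f b w) :
    HasFDerivAt (fun x => Complex.normSq (f x)) (2 • (innerSL ℝ (f w)).comp (cmul b)) w := by
  have hfn : (fun x => Complex.normSq (f x)) = (‖f ·‖ ^ 2) := by
    funext x; simp [Complex.normSq_eq_norm_sq]
  rw [hfn]; exact h.toRealFD.norm_sq

lemma fderiv_V (f g : ℂ → ℂ) (hf : Differentiable ℂ f) (hg : Differentiable ℂ g)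
    (z w : ℂ) (hgz : g z ≠ 0) (hgw : g w ≠ 0) (hslit : g w / g z ∈ Complex.slitPlane) (c : ℂ) :
    fderiv ℝ (fun x => (Real.log 8 + 2 * Real.log ‖g z‖) +
      (2 * (Complex.log (g x / g z)).re - 2 * Real.log (1 + Complex.normSq (f x)))) w c
    = ((2 * (deriv g w / g w) +
        (-4 * conj (f w) * deriv f w) * (1 + conj (f w) * f w)⁻¹) * c).re := by
  have hq0 : (1 : ℝ) + Complex.normSq (f w) ≠ 0 :=
    ne_of_gt (by have := Complex.normSq_nonneg (f w); linarith)
  have h1 : HasDerivAt (fun x => Complex.log (g x / g z)) (deriv g w / g w) w := by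
    have := (Complex.hasDerivAt_log hslit).comp w ((hg w).hasDerivAt.div_const (g z))
    refine this.congr_deriv ?_
    field_simp
  have h1' := (re_hasFDerivAt h1).const_mul (2:ℝ)
  have h2 := (((nsq_hasFDerivAt (hf w).hasDerivAt).const_add 1).log hq0).const_mul (2:ℝ)
  have hV := (h1'.sub h2).const_add (Real.log 8 + 2 * Real.log ‖g z‖)
  rw [show fderiv ℝ (fun x => (Real.log 8 + 2 * Real.log ‖g z‖) +
      (2 * (Complex.log (g x / g z)).re - 2 * Real.log (1 + Complex.normSq (f x)))) w = _ from hV.fderiv]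
  have hcast : 1 + conj (f w) * f w = ((1 + Complex.normSq (f w) : ℝ) : ℂ) := by
    rw [← Complex.normSq_eq_conj_mul_self]; push_cast; ring
  rw [hcast]
  simp only [ContinuousLinearMap.coe_smul', ContinuousLinearMap.coe_comp', Pi.smul_apply,
    Function.comp_apply, ContinuousLinearMap.coe_sub', Pi.sub_apply, ContinuousLinearMap.smul_apply,
    ContinuousLinearMap.comp_apply, cmul_apply, Complex.reCLM_apply, innerSL_apply_apply,
    smul_eq_mul]
  rw [Complex.inner]
  simp only [Complex.mul_re, Complex.add_re, Complex.mul_im, Complex.add_im, Complex.inv_re,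
    Complex.inv_im, Complex.ofReal_re, Complex.ofReal_im, Complex.normSq_ofReal,
    Complex.conj_re, Complex.conj_im, Complex.neg_re, Complex.neg_im, Complex.re_ofNat,
    Complex.im_ofNat]
  field_simp
  ring

/-- **Singular Liouville formula.** If `f` is holomorphic and `f'` has a zero of
multiplicity exactly `N` at the origin, then
`U(z) = ln(8|f'(z)|²/(1+|f(z)|²)²) - ln |z|^{2N}` solves `ΔU + |z|^{2N} e^U = 0`
on `{z ≠ 0 : f'(z) ≠ 0}`. -/
theorem singular_liouville_formula (N : ℕ) (f g : ℂ → ℂ)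
    (hf : Differentiable ℂ f) (hg : Differentiable ℂ g) (hg0 : g 0 ≠ 0)
    (hfg : ∀ z : ℂ, deriv f z = z ^ N * g z)
    (U : ℂ → ℝ)
    (hU : ∀ z : ℂ, U z =
      Real.log (8 * ‖deriv f z‖ ^ 2 / (1 + ‖f z‖ ^ 2) ^ 2) -
        Real.log (‖z‖ ^ (2 * N))) :
    ∀ z : ℂ, z ≠ 0 → deriv f z ≠ 0 →
      planeLaplacian U z + ‖z‖ ^ (2 * N) * Real.exp (U z) = 0 := by
  intro z hz hfz
  have hgz : g z ≠ 0 := by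
    intro h; apply hfz; rw [hfg z, h, mul_zero]
  have hdf : Differentiable ℂ (deriv f) := by
    rw [show deriv f = fun w => w ^ N * g w from funext hfg]
    exact fun w => (differentiableAt_pow N).mul (hg w)
  have hdgd : DifferentiableAt ℂ (deriv g) z := by
    have hag : AnalyticOnNhd ℂ g Set.univ := hg.differentiableOn.analyticOnNhd isOpen_univ
    exact (hag.deriv z (Set.mem_univ z)).differentiableAt
  -- abbreviations
  have hq1 : (0:ℝ) < 1 + Complex.normSq (f z) := by
    have := Complex.normSq_nonneg (f z); linarith
  -- the nonlinear term
  have hb0 : ‖deriv f z‖ ≠ 0 := norm_ne_zero_iff.mpr hfz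
  have habs : ‖z‖ ^ (2 * N) * Real.exp (U z)
      = 8 * Complex.normSq (deriv f z) / (1 + Complex.normSq (f z)) ^ 2 := by
    have hX : (0:ℝ) < 8 * ‖deriv f z‖ ^ 2 / (1 + ‖f z‖ ^ 2) ^ 2 := by
      have h1 : (0:ℝ) < ‖deriv f z‖ := lt_of_le_of_ne (norm_nonneg _) (Ne.symm hb0)
      positivity
    have hA0 : (0:ℝ) < ‖z‖ ^ (2 * N) := pow_pos (norm_pos_iff.mpr hz) _
    rw [hU z, Real.exp_sub, Real.exp_log hX, Real.exp_log hA0]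
    rw [← Complex.sq_norm (f z), ← Complex.sq_norm (deriv f z)]
    field_simp
  -- eventual conditions
  have hev : ∀ᶠ w in 𝓝 z, w ≠ 0 ∧ g w ≠ 0 ∧ g w / g z ∈ Complex.slitPlane := by
    have e1 : ∀ᶠ w in 𝓝 z, w ≠ 0 := eventually_ne_nhds hz
    have e2 : ∀ᶠ w in 𝓝 z, g w ≠ 0 := (hg.continuous.continuousAt).eventually_ne hgz
    have e3 : ∀ᶠ w in 𝓝 z, g w / g z ∈ Complex.slitPlane := by
      have hc : ContinuousAt (fun w => g w / g z) z :=
        (hg.continuous.continuousAt).div_const _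
      refine hc.eventually_mem (Complex.isOpen_slitPlane.mem_nhds ?_)
      rw [div_self hgz]
      exact Complex.one_mem_slitPlane
    filter_upwards [e1, e2, e3] with w h1 h2 h3 using ⟨h1, h2, h3⟩
  -- U agrees near z with V
  have hUV : U =ᶠ[𝓝 z] (fun x => (Real.log 8 + 2 * Real.log ‖g z‖) +
      (2 * (Complex.log (g x / g z)).re - 2 * Real.log (1 + Complex.normSq (f x)))) := by
    filter_upwards [hev] with w hw
    obtain ⟨hw0, hgw, -⟩ := hw
    rw [hU w]
    have hb2 : ‖deriv f w‖ ^ 2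
        = ‖w‖ ^ (2 * N) * ‖g w‖ ^ 2 := by
      rw [hfg w, norm_mul, norm_pow, mul_pow, ← pow_mul, mul_comm N 2]
    have hA : (0:ℝ) < ‖w‖ ^ (2 * N) := pow_pos (norm_pos_iff.mpr hw0) _
    have hG : (0:ℝ) < ‖g w‖ := norm_pos_iff.mpr hgw
    have hQw : (0:ℝ) < 1 + ‖f w‖ ^ 2 := by positivity
    rw [hb2]
    have e1 : Real.log (8 * (‖w‖ ^ (2 * N) * ‖g w‖ ^ 2)
          / (1 + ‖f w‖ ^ 2) ^ 2)
        = Real.log 8 + Real.log (‖w‖ ^ (2 * N)) + 2 * Real.log ‖g w‖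
          - 2 * Real.log (1 + ‖f w‖ ^ 2) := by
      rw [Real.log_div (by positivity) (by positivity),
        Real.log_mul (by norm_num) (by positivity),
        Real.log_mul (by positivity) (by positivity),
        Real.log_pow, Real.log_pow, Real.log_pow]
      push_cast; ring
    have e2 : (Complex.log (g w / g z)).re
        = Real.log ‖g w‖ - Real.log ‖g z‖ := by
      rw [Complex.log_re, norm_div,
        Real.log_div (norm_ne_zero_iff.mpr hgw) (norm_ne_zero_iff.mpr hgz)]
    have e3 : (1 : ℝ) + Complex.normSq (f w) = 1 + ‖f w‖ ^ 2 := by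
      rw [Complex.sq_norm]
    rw [e1, e2, e3]
    ring
  -- eventual derivative formula
  have hevd : ∀ c : ℂ, (fun w => fderiv ℝ U w c) =ᶠ[𝓝 z]
      (fun w => ((2 * (deriv g w / g w) +
        (-4 * conj (f w) * deriv f w) * (1 + conj (f w) * f w)⁻¹) * c).re) := by
    intro c
    filter_upwards [hUV.fderiv (𝕜 := ℝ), hev] with w hw1 hw2
    obtain ⟨hw0, hgw, hslit⟩ := hw2
    rw [show fderiv ℝ U w = _ from hw1]
    exact fderiv_V f g hf hg z w hgz hgw hslit c
  set a := f z with ha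
  set b := deriv f z with hb
  set b2 := deriv (deriv f) z with hb2d
  have hfa : HasFDerivAt f (cmul b) z := (hf z).hasDerivAt.toRealFD
  have hconj : HasFDerivAt (fun w => conj (f w))
      ((((starL' ℝ : ℂ ≃L[ℝ] ℂ) : ℂ →L[ℝ] ℂ)).comp (cmul b)) z := hfa.star
  have hdfz : HasFDerivAt (deriv f) (cmul b2) z := (hdf z).hasDerivAt.toRealFD
  have hY := (hconj.const_mul (-4:ℂ)).mul hdfz
  have hW := (hconj.mul hfa).const_add (1:ℂ)
  have hWcast : (1 : ℂ) + conj a * a = ((1 + Complex.normSq a : ℝ) : ℂ) := by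
    rw [← Complex.normSq_eq_conj_mul_self]; push_cast; ring
  have hWz0 : (1 : ℂ) + conj a * a ≠ 0 := by
    rw [hWcast]
    exact_mod_cast ne_of_gt hq1
  have hinv := (hasDerivAt_inv hWz0).toRealFD.comp z hW
  have hB := hY.mul hinv
  obtain ⟨K, hK⟩ : ∃ K, HasDerivAt (fun w => 2 * (deriv g w / g w)) K z :=
    ⟨_, ((hdgd.hasDerivAt.div (hg z).hasDerivAt hgz).const_mul (2:ℂ))⟩
  have hH := hK.toRealFD.add hB
  have hre : ∀ c : ℂ, HasFDerivAt (fun w => ((2 * (deriv g w / g w) +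
        (-4 * conj (f w) * deriv f w) * (1 + conj (f w) * f w)⁻¹) * c).re)
      ((Complex.reCLM.comp (cmul c)).comp (cmul K +
        ((-4 * conj a * b) • ((cmul (-(((1:ℂ) + conj a * a) ^ 2)⁻¹)).comp
            ((conj a) • cmul b + a • ((((starL' ℝ : ℂ ≃L[ℝ] ℂ) : ℂ →L[ℝ] ℂ)).comp (cmul b)))) +
          ((1:ℂ) + conj a * a)⁻¹ • ((-4 * conj a) • cmul b2 +
            b • ((-4:ℂ) • ((((starL' ℝ : ℂ ≃L[ℝ] ℂ) : ℂ →L[ℝ] ℂ)).comp (cmul b))))))) z := by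
    intro c
    have h0 := ((Complex.reCLM.comp (cmul c)).hasFDerivAt).comp z hH
    have hfun : (fun w => ((2 * (deriv g w / g w) +
        (-4 * conj (f w) * deriv f w) * (1 + conj (f w) * f w)⁻¹) * c).re)
        = fun w => (Complex.reCLM.comp (cmul c)) ((2 * (deriv g w / g w) +
        (-4 * conj (f w) * deriv f w) * (1 + conj (f w) * f w)⁻¹)) := by
      funext w; simp [mul_comm]
    rw [hfun]
    exact h0
  rw [habs]
  show fderiv ℝ (fun w => fderiv ℝ U w 1) z 1 +
      fderiv ℝ (fun w => fderiv ℝ U w Complex.I) z Complex.I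
      + 8 * Complex.normSq b / (1 + Complex.normSq a) ^ 2 = 0
  rw [(hevd 1).fderiv_eq, (hevd Complex.I).fderiv_eq, (hre 1).fderiv, (hre Complex.I).fderiv]
  rw [hWcast]
  simp only [ContinuousLinearMap.coe_comp', Function.comp_apply, ContinuousLinearMap.add_apply,
    ContinuousLinearMap.coe_smul', Pi.smul_apply, cmul_apply, Complex.reCLM_apply,
    ContinuousLinearEquiv.coe_coe, smul_eq_mul, mul_one, one_mul]
  have hs1 : ∀ u : ℂ, (starL' ℝ : ℂ ≃L[ℝ] ℂ) u = conj u := fun u => rfl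
  simp only [hs1, map_mul, Complex.conj_I]
  set q1 : ℝ := 1 + Complex.normSq a with hq1d
  have hq10 : q1 ≠ 0 := ne_of_gt hq1
  simp only [← Complex.ofReal_pow, ← Complex.ofReal_inv, ← Complex.ofReal_neg]
  simp only [Complex.mul_re, Complex.mul_im, Complex.add_re, Complex.add_im, Complex.neg_re,
    Complex.neg_im, Complex.I_re, Complex.I_im, Complex.ofReal_re, Complex.ofReal_im,
    Complex.conj_re, Complex.conj_im, Complex.normSq_apply, Complex.re_ofNat]
  field_simp
  simp only [hq1d, Complex.normSq_apply]
  ring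
end

section
/- Let c ∈ ℂ, N ∈ ℕ, k ∈ ℕ and τ ∈ ℂ. The function U_{τ,k}(z) = ln( 8(N+1)² |1 + τ((N+1+k)/(N+1)) z^k|² / (1+|z^{N+1}(1+τz^k)−c|²)² ) satisfies the singular Liouville equation ΔU + |z|^{2N} e^U = 0 at every point of the open set {z ∈ ℂ \ {0} : 1 + τ((N+1+k)/(N+1)) z^k ≠ 0}. -/
open Complex Filter Topology

lemma fderiv_re_comp {φ : ℂ → ℂ} {w : ℂ} (h : DifferentiableAt ℂ φ w) (v : ℂ) :
    fderiv ℝ (fun x => (φ x).re) w v = (deriv φ w * v).re := by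
  have h1 : HasFDerivAt φ (ContinuousLinearMap.smulRight (1 : ℂ →L[ℂ] ℂ) (deriv φ w)) w :=
    h.hasDerivAt.hasFDerivAt
  have h2 : HasFDerivAt (fun x => (φ x).re)
      (Complex.reCLM.comp ((ContinuousLinearMap.smulRight (1 : ℂ →L[ℂ] ℂ)
        (deriv φ w)).restrictScalars ℝ)) w :=
    (Complex.reCLM.hasFDerivAt).comp w (h1.restrictScalars ℝ)
  rw [h2.fderiv]
  simp [mul_comm]

lemma fderiv_im_comp {φ : ℂ → ℂ} {w : ℂ} (h : DifferentiableAt ℂ φ w) (v : ℂ) :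
    fderiv ℝ (fun x => (φ x).im) w v = (deriv φ w * v).im := by
  have h1 : HasFDerivAt φ (ContinuousLinearMap.smulRight (1 : ℂ →L[ℂ] ℂ) (deriv φ w)) w :=
    h.hasDerivAt.hasFDerivAt
  have h2 : HasFDerivAt (fun x => (φ x).im)
      (Complex.imCLM.comp ((ContinuousLinearMap.smulRight (1 : ℂ →L[ℂ] ℂ)
        (deriv φ w)).restrictScalars ℝ)) w :=
    (Complex.imCLM.hasFDerivAt).comp w (h1.restrictScalars ℝ)
  rw [h2.fderiv]
  simp [mul_comm]

lemma planeLaplacian_of (f p1 p2 : ℂ → ℝ) (z : ℂ)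
    (h1 : ∀ᶠ w in 𝓝 z, fderiv ℝ f w 1 = p1 w)
    (h2 : ∀ᶠ w in 𝓝 z, fderiv ℝ f w Complex.I = p2 w) :
    planeLaplacian f z = fderiv ℝ p1 z 1 + fderiv ℝ p2 z Complex.I := by
  unfold planeLaplacian
  rw [Filter.EventuallyEq.fderiv_eq h1, Filter.EventuallyEq.fderiv_eq h2]

lemma planeLaplacian_re_holo {H : ℂ → ℂ} {z : ℂ}
    (h : ∀ᶠ w in 𝓝 z, DifferentiableAt ℂ H w) :
    planeLaplacian (fun w => (H w).re) z = 0 := by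
  obtain ⟨s, hs_mem, hs_open, hs⟩ : ∃ s, s ∈ 𝓝 z ∧ IsOpen s ∧
      ∀ w ∈ s, DifferentiableAt ℂ H w := by
    obtain ⟨s, hsub, hso, hzs⟩ := mem_nhds_iff.1 h
    exact ⟨s, hso.mem_nhds hzs, hso, fun w hw => hsub hw⟩
  have hA : AnalyticOnNhd ℂ H s := fun w hw =>
    (DifferentiableOn.analyticAt (fun x hx => (hs x hx).differentiableWithinAt)
      (hs_open.mem_nhds hw))
  have hA' : AnalyticOnNhd ℂ (deriv H) s := hA.deriv
  have hd' : DifferentiableAt ℂ (deriv H) z := (hA' z (mem_of_mem_nhds hs_mem)).differentiableAt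
  have e1 : ∀ᶠ w in 𝓝 z, fderiv ℝ (fun x => (H x).re) w 1 = (deriv H w).re := by
    filter_upwards [h] with w hw
    rw [fderiv_re_comp hw]; simp
  have e2 : ∀ᶠ w in 𝓝 z, fderiv ℝ (fun x => (H x).re) w Complex.I
      = -(deriv H w).im := by
    filter_upwards [h] with w hw
    rw [fderiv_re_comp hw]; simp
  rw [planeLaplacian_of _ (fun w => (deriv H w).re) (fun w => -(deriv H w).im) z e1 e2]
  have t1 : fderiv ℝ (fun w => (deriv H w).re) z 1 = (deriv (deriv H) z).re := by
    rw [fderiv_re_comp hd']; simp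
  have t2 : fderiv ℝ (fun w => -(deriv H w).im) z Complex.I = -(deriv (deriv H) z).re := by
    have : (fun w => -(deriv H w).im) = fun w => -((fun x => (deriv H x).im) w) := rfl
    rw [this, fderiv_fun_neg, ContinuousLinearMap.neg_apply, fderiv_im_comp hd']; simp
  rw [t1, t2]; ring

lemma logS_fderiv (G : ℂ → ℂ) (hG : Differentiable ℂ G) (w v : ℂ) :
    fderiv ℝ (fun x => Real.log (1 + Complex.normSq (G x))) w v =
      (2 * (G w).re * ((deriv G w) * v).re + 2 * (G w).im * ((deriv G w) * v).im)
        * (1 + Complex.normSq (G w))⁻¹ := by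
  have hg : HasFDerivAt G (ContinuousLinearMap.smulRight (1 : ℂ →L[ℂ] ℂ) (deriv G w)) w :=
    (hG w).hasDerivAt.hasFDerivAt
  have hre : HasFDerivAt (fun x => (G x).re)
      (Complex.reCLM.comp ((ContinuousLinearMap.smulRight (1 : ℂ →L[ℂ] ℂ)
        (deriv G w)).restrictScalars ℝ)) w :=
    Complex.reCLM.hasFDerivAt.comp w (hg.restrictScalars ℝ)
  have him : HasFDerivAt (fun x => (G x).im)
      (Complex.imCLM.comp ((ContinuousLinearMap.smulRight (1 : ℂ →L[ℂ] ℂ)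
        (deriv G w)).restrictScalars ℝ)) w :=
    Complex.imCLM.hasFDerivAt.comp w (hg.restrictScalars ℝ)
  have hS := ((hre.mul hre).add (him.mul him)).const_add (1 : ℝ)
  have hpos : (0:ℝ) < 1 + ((G w).re * (G w).re + (G w).im * (G w).im) := by nlinarith [mul_self_nonneg (G w).re, mul_self_nonneg (G w).im]
  have hlog := (Real.hasDerivAt_log hpos.ne').comp_hasFDerivAt w hS
  have heq : (fun x => Real.log (1 + Complex.normSq (G x)))
      = fun x => Real.log (1 + ((G x).re * (G x).re + (G x).im * (G x).im)) := by
    funext x; rw [Complex.normSq_apply]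
  have hlog2 : HasFDerivAt
      (fun x => Real.log (1 + ((G x).re * (G x).re + (G x).im * (G x).im))) _ w := hlog
  rw [heq, hlog2.fderiv]
  simp [Complex.normSq_apply, smul_eq_mul]
  ring

lemma planeLaplacian_logS (G : ℂ → ℂ) (hG : Differentiable ℂ G)
    (hG' : Differentiable ℂ (deriv G)) (z : ℂ) :
    planeLaplacian (fun x => Real.log (1 + Complex.normSq (G x))) z
      = 4 * Complex.normSq (deriv G z) / (1 + Complex.normSq (G z)) ^ 2 := by
  have h1 : ∀ᶠ w in 𝓝 z, fderiv ℝ (fun x => Real.log (1 + Complex.normSq (G x))) w 1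
      = (fun w => (2 * (G w).re * (deriv G w).re + 2 * (G w).im * (deriv G w).im)
          * (1 + ((G w).re * (G w).re + (G w).im * (G w).im))⁻¹) w := by
    refine Filter.Eventually.of_forall fun w => ?_
    rw [logS_fderiv G hG w 1]; simp [Complex.normSq_apply]
  have h2 : ∀ᶠ w in 𝓝 z, fderiv ℝ (fun x => Real.log (1 + Complex.normSq (G x))) w Complex.I
      = (fun w => (2 * (G w).re * (-(deriv G w).im) + 2 * (G w).im * (deriv G w).re)
          * (1 + ((G w).re * (G w).re + (G w).im * (G w).im))⁻¹) w := by
    refine Filter.Eventually.of_forall fun w => ?_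
    rw [logS_fderiv G hG w Complex.I]; simp [Complex.normSq_apply]
  rw [planeLaplacian_of _ _ _ z h1 h2]
  -- now compute the two second derivatives
  have hg : HasFDerivAt G (ContinuousLinearMap.smulRight (1 : ℂ →L[ℂ] ℂ) (deriv G z)) z :=
    (hG z).hasDerivAt.hasFDerivAt
  have hg' : HasFDerivAt (deriv G)
      (ContinuousLinearMap.smulRight (1 : ℂ →L[ℂ] ℂ) (deriv (deriv G) z)) z :=
    (hG' z).hasDerivAt.hasFDerivAt
  have hre : HasFDerivAt (fun x => (G x).re)
      (Complex.reCLM.comp ((ContinuousLinearMap.smulRight (1 : ℂ →L[ℂ] ℂ)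
        (deriv G z)).restrictScalars ℝ)) z :=
    Complex.reCLM.hasFDerivAt.comp z (hg.restrictScalars ℝ)
  have him : HasFDerivAt (fun x => (G x).im)
      (Complex.imCLM.comp ((ContinuousLinearMap.smulRight (1 : ℂ →L[ℂ] ℂ)
        (deriv G z)).restrictScalars ℝ)) z :=
    Complex.imCLM.hasFDerivAt.comp z (hg.restrictScalars ℝ)
  have hgr : HasFDerivAt (fun x => (deriv G x).re)
      (Complex.reCLM.comp ((ContinuousLinearMap.smulRight (1 : ℂ →L[ℂ] ℂ)
        (deriv (deriv G) z)).restrictScalars ℝ)) z :=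
    Complex.reCLM.hasFDerivAt.comp z (hg'.restrictScalars ℝ)
  have hgi : HasFDerivAt (fun x => (deriv G x).im)
      (Complex.imCLM.comp ((ContinuousLinearMap.smulRight (1 : ℂ →L[ℂ] ℂ)
        (deriv (deriv G) z)).restrictScalars ℝ)) z :=
    Complex.imCLM.hasFDerivAt.comp z (hg'.restrictScalars ℝ)
  have hS := ((hre.mul hre).add (him.mul him)).const_add (1 : ℝ)
  have hpos : (0:ℝ) < 1 + ((G z).re * (G z).re + (G z).im * (G z).im) := by
    nlinarith [mul_self_nonneg (G z).re, mul_self_nonneg (G z).im]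
  have hSinv := (hasDerivAt_inv hpos.ne').comp_hasFDerivAt z hS
  have hT1 := ((hre.const_mul 2).mul hgr).add ((him.const_mul 2).mul hgi)
  have hT2 := ((hre.const_mul 2).mul hgi.neg).add ((him.const_mul 2).mul hgr)
  have hp1 := hT1.mul hSinv
  have hp2 := hT2.mul hSinv
  have hp1' : HasFDerivAt (fun w =>
      (2 * (G w).re * (deriv G w).re + 2 * (G w).im * (deriv G w).im) *
        (1 + ((G w).re * (G w).re + (G w).im * (G w).im))⁻¹) _ z := hp1
  have hp2' : HasFDerivAt (fun w =>
      (2 * (G w).re * -(deriv G w).im + 2 * (G w).im * (deriv G w).re) *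
        (1 + ((G w).re * (G w).re + (G w).im * (G w).im))⁻¹) _ z := hp2
  rw [hp1'.fderiv, hp2'.fderiv]
  simp only [ContinuousLinearMap.add_apply, ContinuousLinearMap.smul_apply,
    ContinuousLinearMap.coe_comp', Function.comp_apply,
    ContinuousLinearMap.coe_restrictScalars', ContinuousLinearMap.smulRight_apply,
    ContinuousLinearMap.one_apply, ContinuousLinearMap.neg_apply,
    Complex.reCLM_apply, Complex.imCLM_apply, smul_eq_mul,
    Complex.normSq_apply, one_smul, Complex.mul_re, Complex.mul_im,
    Complex.one_re, Complex.one_im, Complex.I_re, Complex.I_im,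
    Pi.mul_apply, Pi.add_apply, Pi.neg_apply, Function.comp_apply]
  have hSne : (1 + ((G z).re * (G z).re + (G z).im * (G z).im)) ≠ 0 := hpos.ne'
  field_simp
  ring

lemma planeLaplacian_congr {f g : ℂ → ℝ} {z : ℂ} (h : f =ᶠ[𝓝 z] g) :
    planeLaplacian f z = planeLaplacian g z := by
  unfold planeLaplacian
  have hd := h.fderiv (𝕜 := ℝ)
  have h1 : (fun w => fderiv ℝ f w 1) =ᶠ[𝓝 z] fun w => fderiv ℝ g w 1 := by
    filter_upwards [hd] with w hw; rw [hw]
  have h2 : (fun w => fderiv ℝ f w Complex.I) =ᶠ[𝓝 z] fun w => fderiv ℝ g w Complex.I := by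
    filter_upwards [hd] with w hw; rw [hw]
  rw [h1.fderiv_eq, h2.fderiv_eq]

lemma planeLaplacian_combine (a b1 b2 : ℝ) (f1 f2 : ℂ → ℝ) (z : ℂ)
    (h1 : ∀ᶠ w in 𝓝 z, DifferentiableAt ℝ f1 w)
    (h2 : ∀ᶠ w in 𝓝 z, DifferentiableAt ℝ f2 w)
    (hd11 : DifferentiableAt ℝ (fun w => fderiv ℝ f1 w 1) z)
    (hd1I : DifferentiableAt ℝ (fun w => fderiv ℝ f1 w Complex.I) z)
    (hd21 : DifferentiableAt ℝ (fun w => fderiv ℝ f2 w 1) z)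
    (hd2I : DifferentiableAt ℝ (fun w => fderiv ℝ f2 w Complex.I) z) :
    planeLaplacian (fun w => a + (b1 * f1 w + b2 * f2 w)) z
      = b1 * planeLaplacian f1 z + b2 * planeLaplacian f2 z := by
  unfold planeLaplacian
  have key : ∀ v : ℂ, (fun w => fderiv ℝ (fun w => a + (b1 * f1 w + b2 * f2 w)) w v)
      =ᶠ[𝓝 z] fun w => b1 * fderiv ℝ f1 w v + b2 * fderiv ℝ f2 w v := by
    intro v
    filter_upwards [h1, h2] with w hw1 hw2
    have : HasFDerivAt (fun w => a + (b1 * f1 w + b2 * f2 w))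
        (b1 • fderiv ℝ f1 w + b2 • fderiv ℝ f2 w) w :=
      (((hw1.hasFDerivAt.const_mul b1)).add ((hw2.hasFDerivAt.const_mul b2))).const_add a
    rw [this.fderiv]; simp
  have e1 := (key 1).fderiv_eq (𝕜 := ℝ)
  have eI := (key Complex.I).fderiv_eq (𝕜 := ℝ)
  rw [e1, eI]
  have r1 : fderiv ℝ (fun w => b1 * fderiv ℝ f1 w 1 + b2 * fderiv ℝ f2 w 1) z
      = b1 • fderiv ℝ (fun w => fderiv ℝ f1 w 1) z + b2 • fderiv ℝ (fun w => fderiv ℝ f2 w 1) z := by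
    rw [fderiv_fun_add ((hd11.const_mul b1)) ((hd21.const_mul b2)),
      fderiv_const_mul hd11, fderiv_const_mul hd21]
  have rI : fderiv ℝ (fun w => b1 * fderiv ℝ f1 w Complex.I + b2 * fderiv ℝ f2 w Complex.I) z
      = b1 • fderiv ℝ (fun w => fderiv ℝ f1 w Complex.I) z
        + b2 • fderiv ℝ (fun w => fderiv ℝ f2 w Complex.I) z := by
    exact (((hd1I.hasFDerivAt.const_mul b1)).add ((hd2I.hasFDerivAt.const_mul b2))).fderiv
  rw [r1, rI]; simp; ring

lemma deriv_differentiableAt_of_eventually {H : ℂ → ℂ} {z : ℂ}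
    (h : ∀ᶠ w in 𝓝 z, DifferentiableAt ℂ H w) :
    DifferentiableAt ℂ (deriv H) z := by
  obtain ⟨s, hsub, hso, hzs⟩ := mem_nhds_iff.1 h
  have hA : AnalyticOnNhd ℂ H s := fun w hw =>
    DifferentiableOn.analyticAt (fun x hx => (hsub hx).differentiableWithinAt)
      (hso.mem_nhds hw)
  exact (hA.deriv z hzs).differentiableAt

/-- The family `U_{τ,k}` solves the singular Liouville equation
`ΔU + |z|^{2N} e^U = 0` away from the origin and from the zeroes of
`1 + τ((N+1+k)/(N+1)) z^k`. -/
theorem family_solves_singular_liouville (c : ℂ) (N k : ℕ) (τ : ℂ)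
    (U : ℂ → ℝ)
    (hU : ∀ z : ℂ, U z = Real.log
      (8 * (N + 1) ^ 2 *
          ‖1 + τ * (((N : ℂ) + 1 + k) / ((N : ℂ) + 1)) * z ^ k‖ ^ 2 /
        (1 + ‖z ^ (N + 1) * (1 + τ * z ^ k) - c‖ ^ 2) ^ 2)) :
    ∀ z : ℂ, z ≠ 0 → 1 + τ * (((N : ℂ) + 1 + k) / ((N : ℂ) + 1)) * z ^ k ≠ 0 →
      planeLaplacian U z + ‖z‖ ^ (2 * N) * Real.exp (U z) = 0 := by
  intro z hz hghz
  set q : ℂ := ((N : ℂ) + 1 + k) / ((N : ℂ) + 1) with hq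
  set gh : ℂ → ℂ := fun w => 1 + τ * q * w ^ k with hgh
  set G : ℂ → ℂ := fun w => w ^ (N + 1) * (1 + τ * w ^ k) - c with hGdef
  have hN1 : ((N : ℂ) + 1) ≠ 0 := by
    have : ((N + 1 : ℕ) : ℂ) ≠ 0 := Nat.cast_ne_zero.2 (Nat.succ_ne_zero N)
    push_cast at this; exact this
  -- differentiability of G
  have hG : Differentiable ℂ G := by
    apply Differentiable.sub_const
    exact (differentiable_pow (N + 1)).mul
      (((differentiable_pow k).const_mul τ).const_add 1)
  -- the derivative of G
  have hderiv : deriv G = fun w => ((N : ℂ) + 1) * w ^ N * gh w := by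
    funext w
    have h1 : HasDerivAt (fun w : ℂ => w ^ (N + 1)) (((N : ℂ) + 1) * w ^ N) w := by
      simpa using hasDerivAt_pow (N + 1) w
    have h2 : HasDerivAt (fun w : ℂ => 1 + τ * w ^ k)
        (τ * ((k : ℂ) * w ^ (k - 1))) w :=
      ((hasDerivAt_pow k w).const_mul τ).const_add 1
    have h3 : HasDerivAt G
        (((N : ℂ) + 1) * w ^ N * (1 + τ * w ^ k)
          + w ^ (N + 1) * (τ * ((k : ℂ) * w ^ (k - 1)))) w :=
      (h1.mul h2).sub_const c
    rw [h3.deriv, hgh, hq]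
    rcases k with _ | k
    · simp [div_self hN1]
    · simp only [Nat.add_sub_cancel, Nat.cast_add, Nat.cast_one]
      field_simp
      ring
  have hG' : Differentiable ℂ (deriv G) := by
    rw [hderiv]
    exact ((differentiable_pow N).const_mul _).mul
      (((differentiable_pow k).const_mul (τ * q)).const_add 1)
  -- gh is differentiable / continuous
  have dgh : Differentiable ℂ gh :=
    ((differentiable_pow k).const_mul (τ * q)).const_add 1
  -- local holomorphic logarithm of gh
  set H : ℂ → ℂ := fun w => Complex.log (gh w * (gh z)⁻¹) with hH
  have hmem1 : gh z * (gh z)⁻¹ ∈ Complex.slitPlane := by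
    rw [mul_inv_cancel₀ hghz]; exact Complex.one_mem_slitPlane
  have hmem : ∀ᶠ w in 𝓝 z, gh w * (gh z)⁻¹ ∈ Complex.slitPlane :=
    ((dgh z).continuousAt.mul continuousAt_const).eventually_mem
      (Complex.isOpen_slitPlane.mem_nhds hmem1)
  have hHdiff : ∀ᶠ w in 𝓝 z, DifferentiableAt ℂ H w := by
    filter_upwards [hmem] with w hw
    exact (Complex.differentiableAt_log hw).comp w ((dgh w).mul_const _)
  have hne : ∀ᶠ w in 𝓝 z, gh w ≠ 0 := (dgh z).continuousAt.eventually_ne hghz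
  -- positivity facts
  have hApos : (0:ℝ) < 8 * ((N:ℝ) + 1) ^ 2 := by positivity
  have hSpos : ∀ w, (0:ℝ) < 1 + Complex.normSq (G w) := fun w => by
    have := Complex.normSq_nonneg (G w); linarith
  have habsz : ∀ {w : ℂ}, gh w ≠ 0 → 0 < ‖gh w‖ := fun h => norm_pos_iff.mpr h
  -- local decomposition of U
  have hUV : U =ᶠ[𝓝 z] fun w =>
      (Real.log (8 * ((N:ℝ) + 1) ^ 2) + 2 * Real.log ‖gh z‖)
        + (2 * ((fun w => (H w).re) w) + (-2) * ((fun w =>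
            Real.log (1 + Complex.normSq (G w))) w)) := by
    filter_upwards [hne] with w hw
    have h1 : (H w).re = Real.log ‖gh w‖ - Real.log ‖gh z‖ := by
      rw [hH]
      simp only [Complex.log_re, norm_mul, norm_inv]
      rw [Real.log_mul (habsz hw).ne' (inv_ne_zero (habsz hghz).ne'), Real.log_inv]
      ring
    have h2 : (1 : ℝ) + ‖G w‖ ^ 2 = 1 + Complex.normSq (G w) := by
      rw [Complex.sq_norm]
    rw [hU w]
    have e1 : (8 : ℝ) * (N + 1) ^ 2 * ‖gh w‖ ^ 2 ≠ 0 :=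
      (mul_pos hApos (pow_pos (habsz hw) 2)).ne'
    have e2 : ((1 : ℝ) + ‖G w‖ ^ 2) ^ 2 ≠ 0 := by
      rw [h2]; exact (pow_pos (hSpos w) 2).ne'
    rw [Real.log_div e1 e2,
      Real.log_mul hApos.ne' (pow_pos (habsz hw) 2).ne',
      Real.log_pow, Real.log_pow, h1, h2]
    push_cast
    ring
  rw [planeLaplacian_congr hUV]
  -- derivative of H is differentiable at z
  have hderivH : DifferentiableAt ℂ (deriv H) z := deriv_differentiableAt_of_eventually hHdiff
  -- differentiability hypotheses for the combination lemma
  have h1ev : ∀ᶠ w in 𝓝 z, DifferentiableAt ℝ (fun w => (H w).re) w := by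
    filter_upwards [hHdiff] with w hw
    exact Complex.reCLM.differentiableAt.comp w (hw.restrictScalars ℝ)
  have h2ev : ∀ᶠ w in 𝓝 z, DifferentiableAt ℝ
      (fun w => Real.log (1 + Complex.normSq (G w))) w := by
    refine Filter.Eventually.of_forall fun w => ?_
    have hre : DifferentiableAt ℝ (fun x => (G x).re) w :=
      Complex.reCLM.differentiableAt.comp w ((hG w).restrictScalars ℝ)
    have him : DifferentiableAt ℝ (fun x => (G x).im) w :=
      Complex.imCLM.differentiableAt.comp w ((hG w).restrictScalars ℝ)
    have hS : DifferentiableAt ℝ (fun x => 1 + Complex.normSq (G x)) w := by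
      have : (fun x => 1 + Complex.normSq (G x))
          = fun x => 1 + ((G x).re * (G x).re + (G x).im * (G x).im) := by
        funext x; rw [Complex.normSq_apply]
      rw [this]
      exact ((hre.mul hre).add (him.mul him)).const_add 1
    exact (Real.differentiableAt_log (hSpos w).ne').comp w hS
  have hd11 : DifferentiableAt ℝ
      (fun w => fderiv ℝ (fun w => (H w).re) w 1) z := by
    have he : (fun w => fderiv ℝ (fun w => (H w).re) w 1)
        =ᶠ[𝓝 z] fun w => (deriv H w).re := by
      filter_upwards [hHdiff] with w hw
      rw [fderiv_re_comp hw]; simp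
    rw [he.differentiableAt_iff]
    exact Complex.reCLM.differentiableAt.comp z (hderivH.restrictScalars ℝ)
  have hd1I : DifferentiableAt ℝ
      (fun w => fderiv ℝ (fun w => (H w).re) w Complex.I) z := by
    have he : (fun w => fderiv ℝ (fun w => (H w).re) w Complex.I)
        =ᶠ[𝓝 z] fun w => -(deriv H w).im := by
      filter_upwards [hHdiff] with w hw
      rw [fderiv_re_comp hw]; simp
    rw [he.differentiableAt_iff]
    exact (Complex.imCLM.differentiableAt.comp z (hderivH.restrictScalars ℝ)).neg
  have hcomp : ∀ w : ℂ, DifferentiableAt ℝ (fun x => (G x).re) w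
      ∧ DifferentiableAt ℝ (fun x => (G x).im) w
      ∧ DifferentiableAt ℝ (fun x => (deriv G x).re) w
      ∧ DifferentiableAt ℝ (fun x => (deriv G x).im) w := fun w =>
    ⟨Complex.reCLM.differentiableAt.comp w ((hG w).restrictScalars ℝ),
     Complex.imCLM.differentiableAt.comp w ((hG w).restrictScalars ℝ),
     Complex.reCLM.differentiableAt.comp w ((hG' w).restrictScalars ℝ),
     Complex.imCLM.differentiableAt.comp w ((hG' w).restrictScalars ℝ)⟩
  have hSd : ∀ w : ℂ, DifferentiableAt ℝ
      (fun x => (1 + ((G x).re * (G x).re + (G x).im * (G x).im))⁻¹) w := fun w => by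
    obtain ⟨hre, him, -, -⟩ := hcomp w
    have hSpos' : (0:ℝ) < 1 + ((G w).re * (G w).re + (G w).im * (G w).im) := by
      have := hSpos w; rwa [Complex.normSq_apply] at this
    exact (((hre.mul hre).add (him.mul him)).const_add 1).inv hSpos'.ne'
  have hd21 : DifferentiableAt ℝ
      (fun w => fderiv ℝ (fun w => Real.log (1 + Complex.normSq (G w))) w 1) z := by
    have he : (fun w => fderiv ℝ (fun w => Real.log (1 + Complex.normSq (G w))) w 1)
        = fun w => (2 * (G w).re * (deriv G w).re + 2 * (G w).im * (deriv G w).im)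
            * (1 + ((G w).re * (G w).re + (G w).im * (G w).im))⁻¹ := by
      funext w; rw [logS_fderiv G hG w 1]; simp [Complex.normSq_apply]
    rw [he]
    obtain ⟨hre, him, hgr, hgi⟩ := hcomp z
    exact (((hre.const_mul 2).mul hgr).add ((him.const_mul 2).mul hgi)).mul (hSd z)
  have hd2I : DifferentiableAt ℝ
      (fun w => fderiv ℝ (fun w => Real.log (1 + Complex.normSq (G w))) w Complex.I) z := by
    have he : (fun w => fderiv ℝ (fun w => Real.log (1 + Complex.normSq (G w))) w Complex.I)
        = fun w => (2 * (G w).re * -(deriv G w).im + 2 * (G w).im * (deriv G w).re)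
            * (1 + ((G w).re * (G w).re + (G w).im * (G w).im))⁻¹ := by
      funext w; rw [logS_fderiv G hG w Complex.I]; simp [Complex.normSq_apply]
    rw [he]
    obtain ⟨hre, him, hgr, hgi⟩ := hcomp z
    exact (((hre.const_mul 2).mul hgi.neg).add ((him.const_mul 2).mul hgr)).mul (hSd z)
  rw [planeLaplacian_combine _ 2 (-2) _ _ z h1ev h2ev hd11 hd1I hd21 hd2I,
    planeLaplacian_re_holo hHdiff, planeLaplacian_logS G hG hG' z]
  -- now pure computation
  have hXs : Complex.normSq (deriv G z)
      = ((N:ℝ) + 1) ^ 2 * Complex.normSq z ^ N * Complex.normSq (gh z) := by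
    rw [hderiv]
    have hc : Complex.normSq ((N : ℂ) + 1) = ((N:ℝ) + 1) ^ 2 := by
      have h0 : ((N : ℂ) + 1) = (((N:ℝ) + 1 : ℝ) : ℂ) := by push_cast; ring
      rw [h0, Complex.normSq_ofReal]; ring
    simp only [map_mul, map_pow, hc]
  have hExp : Real.exp (U z)
      = 8 * ((N:ℝ) + 1) ^ 2 * Complex.normSq (gh z) / (1 + Complex.normSq (G z)) ^ 2 := by
    rw [hU z]
    rw [Real.exp_log]
    · rw [Complex.sq_norm, Complex.sq_norm]
    · have h1 := habsz hghz
      have h2 : (0:ℝ) < 1 + ‖G z‖ ^ 2 := by positivity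
      positivity
  have habs2N : ‖z‖ ^ (2 * N) = Complex.normSq z ^ N := by
    rw [pow_mul, Complex.sq_norm]
  rw [hExp, hXs, habs2N]
  have hS := hSpos z
  field_simp
  ring
end

section
/- Let c ∈ ℂ, N ∈ ℕ and k ∈ ℕ. The complex-valued function φ_k(z) = z^k ( (N+1+k)/(N+1) − 2 z^{N+1} \overline{(z^{N+1}−c)} / (1+|z^{N+1}−c|²) ) satisfies Δφ_k + V φ_k = 0 on all of ℂ, where V(z) = 8(N+1)²|z|^{2N}/(1+|z^{N+1}−c|²)². In particular both Re φ_k and Im φ_k are real-valued solutions of Δφ + Vφ = 0 on ℂ. -/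
/-- The Euclidean Laplacian on ℝ² ≅ ℂ of a complex-valued function,
applied componentwise. -/
noncomputable def planeLaplacianC (f : ℂ → ℂ) (z : ℂ) : ℂ :=
  fderiv ℝ (fun w => fderiv ℝ f w 1) z 1 +
    fderiv ℝ (fun w => fderiv ℝ f w Complex.I) z Complex.I

open Complex
noncomputable def LM (a b : ℂ) : ℂ →L[ℝ] ℂ :=
  a • (ContinuousLinearMap.id ℝ ℂ) + b • (Complex.conjCLE : ℂ →L[ℝ] ℂ)

@[simp] lemma LM_apply (a b h : ℂ) : LM a b h = a * h + b * (starRingEnd ℂ) h := by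
  simp [LM, Complex.conjCLE_apply, smul_eq_mul]

def Wir (f : ℂ → ℂ) (z a b : ℂ) : Prop := HasFDerivAt f (LM a b) z

lemma Wir.congr_coeff {f : ℂ → ℂ} {z a b a' b' : ℂ} (h : Wir f z a b) (ha : a = a')
    (hb : b = b') : Wir f z a' b' := ha ▸ hb ▸ h

lemma wir_of_eq {f : ℂ → ℂ} {z a b : ℂ} {L : ℂ →L[ℝ] ℂ} (h : HasFDerivAt f L z)
    (e : ∀ x, L x = a * x + b * (starRingEnd ℂ) x) : Wir f z a b := by
  have hL : L = LM a b := ContinuousLinearMap.ext fun x => by simp [e x]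
  show HasFDerivAt f (LM a b) z
  rw [← hL]; exact h

lemma wir_const (c z : ℂ) : Wir (fun _ => c) z 0 0 :=
  wir_of_eq (hasFDerivAt_const c z) (fun x => by simp)

lemma wir_pow (p : ℕ) (z : ℂ) : Wir (fun w => w ^ p) z ((p : ℂ) * z ^ (p - 1)) 0 :=
  wir_of_eq ((hasDerivAt_pow p z).hasFDerivAt.restrictScalars ℝ)
    (fun x => by simp [ContinuousLinearMap.smulRight_apply, smul_eq_mul]; ring)

lemma wir_conj_pow (p : ℕ) (z : ℂ) :
    Wir (fun w => ((starRingEnd ℂ) w) ^ p) z 0 ((p : ℂ) * ((starRingEnd ℂ) z) ^ (p - 1)) := by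
  have hc : HasFDerivAt (fun w => (starRingEnd ℂ) w) (Complex.conjCLE : ℂ →L[ℝ] ℂ) z :=
    (Complex.conjCLE : ℂ →L[ℝ] ℂ).hasFDerivAt
  exact wir_of_eq
    (((hasDerivAt_pow p ((starRingEnd ℂ) z)).hasFDerivAt.restrictScalars ℝ).comp z hc)
    (fun x => by
      simp [ContinuousLinearMap.smulRight_apply, smul_eq_mul, Complex.conjCLE_apply]; ring)

lemma Wir.add {f g : ℂ → ℂ} {z a b a' b' : ℂ} (hf : Wir f z a b) (hg : Wir g z a' b') :
    Wir (fun w => f w + g w) z (a + a') (b + b') :=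
  wir_of_eq (HasFDerivAt.add hf hg) (fun x => by simp; ring)

lemma Wir.sub {f g : ℂ → ℂ} {z a b a' b' : ℂ} (hf : Wir f z a b) (hg : Wir g z a' b') :
    Wir (fun w => f w - g w) z (a - a') (b - b') :=
  wir_of_eq (HasFDerivAt.sub hf hg) (fun x => by simp; ring)

lemma Wir.mul {f g : ℂ → ℂ} {z a b a' b' : ℂ} (hf : Wir f z a b) (hg : Wir g z a' b') :
    Wir (fun w => f w * g w) z (f z * a' + g z * a) (f z * b' + g z * b) :=
  wir_of_eq (HasFDerivAt.mul (𝕜 := ℝ) hf hg) (fun x => by simp [smul_eq_mul]; ring)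

lemma Wir.inv {g : ℂ → ℂ} {z a b : ℂ} (hg : Wir g z a b) (h0 : g z ≠ 0) :
    Wir (fun w => (g w)⁻¹) z (-(a / g z ^ 2)) (-(b / g z ^ 2)) :=
  wir_of_eq ((hasFDerivAt_inv' (𝕜 := ℝ) (R := ℂ) h0).comp z hg)
    (fun x => by
      simp [ContinuousLinearMap.mulLeftRight_apply]
      field_simp
      ring)

lemma Wir.div {f g : ℂ → ℂ} {z a b a' b' : ℂ} (hf : Wir f z a b) (hg : Wir g z a' b')
    (h0 : g z ≠ 0) :
    Wir (fun w => f w / g w) z ((a * g z - f z * a') / g z ^ 2)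
      ((b * g z - f z * b') / g z ^ 2) := by
  have h := hf.mul (hg.inv h0)
  simp only [div_eq_mul_inv]
  refine h.congr_coeff ?_ ?_ <;> field_simp <;> ring
open Complex

noncomputable def wE (c : ℂ) (N : ℕ) (z : ℂ) : ℂ := z ^ (N + 1) - c
noncomputable def wbE (c : ℂ) (N : ℕ) (z : ℂ) : ℂ :=
  ((starRingEnd ℂ) z) ^ (N + 1) - (starRingEnd ℂ) c
noncomputable def DE (c : ℂ) (N : ℕ) (z : ℂ) : ℂ := 1 + wE c N z * wbE c N z

lemma wbE_eq (c : ℂ) (N : ℕ) (z : ℂ) :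
    wbE c N z = (starRingEnd ℂ) (z ^ (N + 1) - c) := by
  simp [wbE]

lemma DE_eq (c : ℂ) (N : ℕ) (z : ℂ) :
    DE c N z = ((1 + ‖z ^ (N + 1) - c‖ ^ 2 : ℝ) : ℂ) := by
  rw [DE, wbE_eq, wE, Complex.mul_conj, Complex.normSq_eq_norm_sq]
  push_cast
  ring

lemma DE_ne (c : ℂ) (N : ℕ) (z : ℂ) : DE c N z ≠ 0 := by
  rw [DE_eq, Ne, Complex.ofReal_eq_zero]
  positivity

noncomputable def QE (c : ℂ) (N k : ℕ) (z : ℂ) : ℂ :=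
  ((N : ℂ) + 1 + k) / ((N : ℂ) + 1) - 2 * z ^ (N + 1) * wbE c N z / DE c N z
noncomputable def φE (c : ℂ) (N k : ℕ) (z : ℂ) : ℂ := z ^ k * QE c N k z
noncomputable def QaE (c : ℂ) (N : ℕ) (z : ℂ) : ℂ :=
  -(2 * ((N : ℂ) + 1) * z ^ N * wbE c N z * (1 - c * wbE c N z) / DE c N z ^ 2)
noncomputable def QbE (c : ℂ) (N : ℕ) (z : ℂ) : ℂ :=
  -(2 * ((N : ℂ) + 1) * z ^ (N + 1) * ((starRingEnd ℂ) z) ^ N / DE c N z ^ 2)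
noncomputable def AE (c : ℂ) (N k : ℕ) (z : ℂ) : ℂ :=
  (k : ℂ) * z ^ (k - 1) * QE c N k z -
    2 * ((N : ℂ) + 1) * z ^ (k + N) * wbE c N z * (1 - c * wbE c N z) / DE c N z ^ 2
noncomputable def BE (c : ℂ) (N k : ℕ) (z : ℂ) : ℂ :=
  -2 * ((N : ℂ) + 1) * z ^ (k + N + 1) * ((starRingEnd ℂ) z) ^ N / DE c N z ^ 2
noncomputable def A1E (c : ℂ) (N k : ℕ) (z : ℂ) : ℂ :=
  (k : ℂ) * ((k - 1 : ℕ) : ℂ) * z ^ (k - 1 - 1) * QE c N k z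
    + (k : ℂ) * z ^ (k - 1) * QaE c N z
    - 2 * ((N : ℂ) + 1) * wbE c N z * (1 - c * wbE c N z) *
        (((k : ℂ) + N) * z ^ (k + N - 1) * DE c N z
          - 2 * ((N : ℂ) + 1) * z ^ (k + 2 * N) * wbE c N z) / DE c N z ^ 3
noncomputable def A2E (c : ℂ) (N k : ℕ) (z : ℂ) : ℂ :=
  (k : ℂ) * z ^ (k - 1) * QbE c N z
    - 2 * ((N : ℂ) + 1) ^ 2 * z ^ (k + N) * ((starRingEnd ℂ) z) ^ N *
        ((1 - 2 * c * wbE c N z) * DE c N z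
          - 2 * wE c N z * wbE c N z * (1 - c * wbE c N z)) / DE c N z ^ 3
noncomputable def B1E (c : ℂ) (N k : ℕ) (z : ℂ) : ℂ :=
  (-2 * ((N : ℂ) + 1) * ((k : ℂ) + N + 1) * z ^ (k + N) * ((starRingEnd ℂ) z) ^ N * DE c N z
    + 4 * ((N : ℂ) + 1) ^ 2 * z ^ (k + 2 * N + 1) * ((starRingEnd ℂ) z) ^ N * wbE c N z)
    / DE c N z ^ 3
noncomputable def B2E (c : ℂ) (N k : ℕ) (z : ℂ) : ℂ :=
  (-2 * ((N : ℂ) + 1) * (N : ℂ) * z ^ (k + N + 1) * ((starRingEnd ℂ) z) ^ (N - 1) * DE c N z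
    + 4 * ((N : ℂ) + 1) ^ 2 * z ^ (k + N + 1) * ((starRingEnd ℂ) z) ^ (2 * N) * wE c N z)
    / DE c N z ^ 3

lemma Wir.congr_fun {f g : ℂ → ℂ} {z a b : ℂ} (h : Wir f z a b) (e : ∀ w, f w = g w) :
    Wir g z a b := by
  have : f = g := funext e
  rwa [this] at h

lemma NcastNe (N : ℕ) : ((N : ℂ) + 1) ≠ 0 := by
  exact_mod_cast Nat.succ_ne_zero N

lemma wir_wbE (c : ℂ) (N : ℕ) (z : ℂ) :
    Wir (wbE c N) z 0 (((N : ℂ) + 1) * ((starRingEnd ℂ) z) ^ N) := by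
  have h := (wir_conj_pow (N + 1) z).sub (wir_const ((starRingEnd ℂ) c) z)
  exact h.congr_coeff (by ring) (by push_cast [Nat.add_sub_cancel]; ring)

lemma wir_wE (c : ℂ) (N : ℕ) (z : ℂ) :
    Wir (wE c N) z (((N : ℂ) + 1) * z ^ N) 0 := by
  have h := (wir_pow (N + 1) z).sub (wir_const c z)
  exact h.congr_coeff (by push_cast [Nat.add_sub_cancel]; ring) (by ring)

lemma wir_DE (c : ℂ) (N : ℕ) (z : ℂ) :
    Wir (DE c N) z (((N : ℂ) + 1) * z ^ N * wbE c N z)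
      (((N : ℂ) + 1) * wE c N z * ((starRingEnd ℂ) z) ^ N) := by
  have h := (wir_const 1 z).add ((wir_wE c N z).mul (wir_wbE c N z))
  exact h.congr_coeff (by ring) (by ring)

lemma wir_DE2 (c : ℂ) (N : ℕ) (z : ℂ) :
    Wir (fun w => DE c N w ^ 2) z
      (2 * DE c N z * (((N : ℂ) + 1) * z ^ N * wbE c N z))
      (2 * DE c N z * (((N : ℂ) + 1) * wE c N z * ((starRingEnd ℂ) z) ^ N)) := by
  have h := ((wir_DE c N z).mul (wir_DE c N z)).congr_fun (fun w => (pow_two (DE c N w)).symm)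
  exact h.congr_coeff (by ring) (by ring)

lemma wir_QE (c : ℂ) (N k : ℕ) (z : ℂ) :
    Wir (QE c N k) z (QaE c N z) (QbE c N z) := by
  have h0 := DE_ne c N z
  have ht := ((wir_const (2 : ℂ) z).mul (wir_pow (N + 1) z)).mul (wir_wbE c N z)
  have h := (wir_const (((N : ℂ) + 1 + k) / ((N : ℂ) + 1)) z).sub
    (ht.div (wir_DE c N z) h0)
  refine h.congr_coeff ?_ ?_ <;>
  · simp only [QaE, QbE, DE, wE]
    have h0' : (1 : ℂ) + (z ^ (N + 1) - c) * wbE c N z ≠ 0 := by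
      simpa [DE, wE] using h0
    push_cast [Nat.add_sub_cancel]
    field_simp
    ring

lemma wir_phiE (c : ℂ) (N k : ℕ) (z : ℂ) :
    Wir (φE c N k) z (AE c N k z) (BE c N k z) := by
  have h0 := DE_ne c N z
  have h := (wir_pow k z).mul (wir_QE c N k z)
  refine h.congr_coeff ?_ ?_ <;>
  · simp only [AE, BE, QaE, QbE]
    field_simp
    ring

lemma wir_AE (c : ℂ) (N k : ℕ) (z : ℂ) :
    Wir (AE c N k) z (A1E c N k z) (A2E c N k z) := by
  have h0 := DE_ne c N z
  have h02 : DE c N z ^ 2 ≠ 0 := pow_ne_zero 2 h0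
  have ht1 := ((wir_const ((k : ℂ)) z).mul (wir_pow (k - 1) z)).mul (wir_QE c N k z)
  have hnum := ((((wir_const (2 * ((N : ℂ) + 1)) z).mul (wir_pow (k + N) z)).mul
      (wir_wbE c N z)).mul
    ((wir_const (1 : ℂ) z).sub ((wir_const c z).mul (wir_wbE c N z))))
  have hfrac := hnum.div (wir_DE2 c N z) h02
  have h := ht1.sub hfrac
  refine h.congr_coeff ?_ ?_ <;>
  · simp only [A1E, A2E, QaE, QbE, DE, wE]
    have h0' : (1 : ℂ) + (z ^ (N + 1) - c) * wbE c N z ≠ 0 := by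
      simpa [DE, wE] using h0
    push_cast [Nat.add_sub_cancel]
    field_simp
    ring

lemma wir_BE (c : ℂ) (N k : ℕ) (z : ℂ) :
    Wir (BE c N k) z (B1E c N k z) (B2E c N k z) := by
  have h0 := DE_ne c N z
  have h02 : DE c N z ^ 2 ≠ 0 := pow_ne_zero 2 h0
  have hnum := (((wir_const (-2 * ((N : ℂ) + 1)) z).mul (wir_pow (k + N + 1) z)).mul
    (wir_conj_pow N z))
  have h := hnum.div (wir_DE2 c N z) h02
  refine h.congr_coeff ?_ ?_ <;>
  · simp only [B1E, B2E, DE, wE]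
    have h0' : (1 : ℂ) + (z ^ (N + 1) - c) * wbE c N z ≠ 0 := by
      simpa [DE, wE] using h0
    push_cast [Nat.add_sub_cancel]
    field_simp
    ring

set_option maxHeartbeats 2000000 in
lemma key_identity (c : ℂ) (N k : ℕ) (z : ℂ) :
    2 * A2E c N k z + 2 * B1E c N k z +
      (8 * ((N : ℂ) + 1) ^ 2 * (z * (starRingEnd ℂ) z) ^ N / DE c N z ^ 2) * φE c N k z
      = 0 := by
  have h0 : (1 : ℂ) + (z ^ (N + 1) - c) * wbE c N z ≠ 0 := by
    simpa [DE, wE] using DE_ne c N z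
  have hN : ((N : ℂ) + 1) ≠ 0 := NcastNe N
  rcases k with _ | k <;>
  · simp only [A2E, B1E, φE, QE, QaE, QbE, DE, wE, mul_pow,
      Nat.add_sub_cancel, Nat.cast_zero, Nat.cast_add, Nat.cast_one, pow_zero, Nat.sub_zero]
    push_cast
    field_simp
    ring


lemma Wir.hasFDerivAt {f : ℂ → ℂ} {z a b : ℂ} (h : Wir f z a b) :
    HasFDerivAt f (LM a b) z := h

lemma Wir.fderiv_eq {f : ℂ → ℂ} {z a b : ℂ} (h : Wir f z a b) :
    fderiv ℝ f z = LM a b := HasFDerivAt.fderiv h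

lemma fderiv_phiE_one (c : ℂ) (N k : ℕ) :
    (fun w => fderiv ℝ (φE c N k) w 1) = fun w => AE c N k w + BE c N k w :=
  funext fun w => by rw [(wir_phiE c N k w).fderiv_eq]; simp

lemma fderiv_phiE_I (c : ℂ) (N k : ℕ) :
    (fun w => fderiv ℝ (φE c N k) w Complex.I)
      = fun w => (AE c N k w - BE c N k w) * Complex.I :=
  funext fun w => by rw [(wir_phiE c N k w).fderiv_eq]; simp [Complex.conj_I]; ring

lemma wir_sum (c : ℂ) (N k : ℕ) (z : ℂ) :
    Wir (fun w => AE c N k w + BE c N k w) z (A1E c N k z + B1E c N k z)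
      (A2E c N k z + B2E c N k z) :=
  (wir_AE c N k z).add (wir_BE c N k z)

lemma wir_diffI (c : ℂ) (N k : ℕ) (z : ℂ) :
    Wir (fun w => (AE c N k w - BE c N k w) * Complex.I) z
      ((AE c N k z - BE c N k z) * 0 + Complex.I * (A1E c N k z - B1E c N k z))
      ((AE c N k z - BE c N k z) * 0 + Complex.I * (A2E c N k z - B2E c N k z)) :=
  ((wir_AE c N k z).sub (wir_BE c N k z)).mul (wir_const Complex.I z)

lemma lapC_phiE (c : ℂ) (N k : ℕ) (z : ℂ) :
    planeLaplacianC (φE c N k) z = 2 * A2E c N k z + 2 * B1E c N k z := by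
  unfold planeLaplacianC
  rw [fderiv_phiE_one, fderiv_phiE_I, (wir_sum c N k z).fderiv_eq,
    (wir_diffI c N k z).fderiv_eq]
  simp only [LM_apply, Complex.conj_I, map_one, mul_one, mul_zero, zero_add, mul_neg]
  linear_combination ((A1E c N k z - B1E c N k z) - (A2E c N k z - B2E c N k z)) *
    Complex.I_mul_I

lemma lapT_phiE (c : ℂ) (N k : ℕ) (T : ℂ →L[ℝ] ℝ) (z : ℂ) :
    planeLaplacian (fun w => T (φE c N k w)) z = T (2 * A2E c N k z + 2 * B1E c N k z) := by
  unfold planeLaplacian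
  have e1 : (fun w => fderiv ℝ (fun w => T (φE c N k w)) w 1)
      = fun w => T (AE c N k w + BE c N k w) := funext fun w => by
    have hc : HasFDerivAt (fun w => T (φE c N k w))
        (T.comp (LM (AE c N k w) (BE c N k w))) w :=
      T.hasFDerivAt.comp w (wir_phiE c N k w).hasFDerivAt
    rw [hc.fderiv]; simp
  have eI : (fun w => fderiv ℝ (fun w => T (φE c N k w)) w Complex.I)
      = fun w => T ((AE c N k w - BE c N k w) * Complex.I) := funext fun w => by
    have hc : HasFDerivAt (fun w => T (φE c N k w))
        (T.comp (LM (AE c N k w) (BE c N k w))) w :=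
      T.hasFDerivAt.comp w (wir_phiE c N k w).hasFDerivAt
    rw [hc.fderiv]
    simp only [ContinuousLinearMap.comp_apply, LM_apply, Complex.conj_I, mul_neg]
    congr 1; ring
  rw [e1, eI]
  have h1 : HasFDerivAt (fun w => T (AE c N k w + BE c N k w))
      (T.comp (LM (A1E c N k z + B1E c N k z) (A2E c N k z + B2E c N k z))) z :=
    T.hasFDerivAt.comp z (wir_sum c N k z).hasFDerivAt
  have h2 : HasFDerivAt (fun w => T ((AE c N k w - BE c N k w) * Complex.I))
      (T.comp (LM ((AE c N k z - BE c N k z) * 0 + Complex.I * (A1E c N k z - B1E c N k z))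
        ((AE c N k z - BE c N k z) * 0 + Complex.I * (A2E c N k z - B2E c N k z)))) z :=
    T.hasFDerivAt.comp z (wir_diffI c N k z).hasFDerivAt
  rw [h1.fderiv, h2.fderiv]
  simp only [ContinuousLinearMap.comp_apply, LM_apply, Complex.conj_I, map_one, mul_one,
    mul_zero, zero_add, mul_neg]
  rw [← map_add]
  congr 1
  linear_combination ((A1E c N k z - B1E c N k z) - (A2E c N k z - B2E c N k z)) *
    Complex.I_mul_I

lemma abs_cast_pow (z : ℂ) (N : ℕ) :
    ((‖z‖ : ℝ) : ℂ) ^ (2 * N) = (z * (starRingEnd ℂ) z) ^ N := by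
  rw [pow_mul]
  congr 1
  rw [← Complex.ofReal_pow, Complex.sq_norm, Complex.mul_conj]


/-- The functions `φ_k` solve the linearized equation `Δφ + Vφ = 0` on all of `ℂ`,
and in particular so do their real and imaginary parts. -/
theorem phi_k_solves_linearized (c : ℂ) (N k : ℕ)
    (V : ℂ → ℝ)
    (hV : ∀ z : ℂ, V z = 8 * (N + 1) ^ 2 * ‖z‖ ^ (2 * N) /
      (1 + ‖z ^ (N + 1) - c‖ ^ 2) ^ 2)
    (φ : ℂ → ℂ)
    (hφ : ∀ z : ℂ, φ z = z ^ k * (((N : ℂ) + 1 + k) / ((N : ℂ) + 1) -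
      2 * z ^ (N + 1) * (starRingEnd ℂ) (z ^ (N + 1) - c) /
        (((1 + ‖z ^ (N + 1) - c‖ ^ 2 : ℝ)) : ℂ))) :
    (∀ z : ℂ, planeLaplacianC φ z + (V z : ℂ) * φ z = 0) ∧
    (∀ z : ℂ, planeLaplacian (fun w => (φ w).re) z + V z * (φ z).re = 0) ∧
    (∀ z : ℂ, planeLaplacian (fun w => (φ w).im) z + V z * (φ z).im = 0) := by
  have hφE : φ = φE c N k := funext fun z => by
    rw [hφ z]
    simp only [φE, QE]
    rw [← wbE_eq c N z, ← DE_eq c N z]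
  subst hφE
  have hVc : ∀ z : ℂ, (V z : ℂ) =
      8 * ((N : ℂ) + 1) ^ 2 * (z * (starRingEnd ℂ) z) ^ N / DE c N z ^ 2 := fun z => by
    rw [hV z]
    push_cast
    rw [abs_cast_pow]
    rw [show (1 + ((‖z ^ (N + 1) - c‖ : ℝ) : ℂ) ^ 2) = DE c N z from by
      rw [DE_eq]; push_cast; ring]
  have hmain : ∀ z : ℂ, planeLaplacianC (φE c N k) z + (V z : ℂ) * φE c N k z = 0 := fun z => by
    rw [lapC_phiE c N k z, hVc z]
    exact key_identity c N k z
  refine ⟨hmain, fun z => ?_, fun z => ?_⟩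
  · have h2 := lapT_phiE c N k Complex.reCLM z
    have h3 := congrArg Complex.re (hmain z)
    rw [lapC_phiE c N k z] at h3
    simp only [Complex.add_re, Complex.zero_re, Complex.mul_re, Complex.ofReal_re,
      Complex.ofReal_im, zero_mul, sub_zero] at h3
    have e : (fun w => (φE c N k w).re) = fun w => Complex.reCLM (φE c N k w) := rfl
    rw [e, h2]
    simp only [Complex.reCLM_apply, Complex.add_re, Complex.mul_re, Complex.re_ofNat,
      Complex.im_ofNat, zero_mul, sub_zero] at h3 ⊢
    linarith
  · have h2 := lapT_phiE c N k Complex.imCLM z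
    have h3 := congrArg Complex.im (hmain z)
    rw [lapC_phiE c N k z] at h3
    simp only [Complex.add_im, Complex.zero_im, Complex.mul_im, Complex.ofReal_re,
      Complex.ofReal_im, zero_mul, add_zero] at h3
    have e : (fun w => (φE c N k w).im) = fun w => Complex.imCLM (φE c N k w) := rfl
    rw [e, h2]
    simp only [Complex.imCLM_apply, Complex.add_im, Complex.mul_im, Complex.re_ofNat,
      Complex.im_ofNat, zero_mul, add_zero] at h3 ⊢
    linarith
end

section
/- Let c ∈ ℂ and N ∈ ℕ. Each of the three functions Z₀(z) = (1−|z^{N+1}−c|²)/(1+|z^{N+1}−c|²), Z₁(z) = Re(z^{N+1}−c)/(1+|z^{N+1}−c|²), Z₂(z) = Im(z^{N+1}−c)/(1+|z^{N+1}−c|²) is bounded on ℂ and satisfies Δφ + Vφ = 0 on all of ℂ, where V(z) = 8(N+1)²|z|^{2N}/(1+|z^{N+1}−c|²)². -/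
set_option maxHeartbeats 1000000

open Complex ContinuousLinearMap

noncomputable def dd (w : ℂ) : ℝ := 1 + Complex.normSq w

lemma dd_pos (w : ℂ) : 0 < dd w :=
  add_pos_of_pos_of_nonneg one_pos (normSq_nonneg w)

lemma dd_ne (w : ℂ) : dd w ≠ 0 := (dd_pos w).ne'

noncomputable def nsq' (w : ℂ) : ℂ →L[ℝ] ℝ :=
  (2*w.re) • Complex.reCLM + (2*w.im) • Complex.imCLM

lemma hx_deriv (w : ℂ) : HasFDerivAt (fun w : ℂ => w.re) Complex.reCLM w :=
  Complex.reCLM.hasFDerivAt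

lemma hy_deriv (w : ℂ) : HasFDerivAt (fun w : ℂ => w.im) Complex.imCLM w :=
  Complex.imCLM.hasFDerivAt

lemma hnsq (w : ℂ) : HasFDerivAt Complex.normSq (nsq' w) w := by
  have h : HasFDerivAt (fun w : ℂ => w.re * w.re + w.im * w.im)
      ((w.re • Complex.reCLM + w.re • Complex.reCLM) +
        (w.im • Complex.imCLM + w.im • Complex.imCLM)) w :=
    ((hx_deriv w).mul (hx_deriv w)).add ((hy_deriv w).mul (hy_deriv w))
  have hfun : (Complex.normSq : ℂ → ℝ) = fun w : ℂ => w.re * w.re + w.im * w.im :=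
    funext fun w => Complex.normSq_apply w
  rw [hfun]
  convert h using 1
  ext v
  simp [nsq']
  ring

lemma hdd (w : ℂ) : HasFDerivAt dd (nsq' w) w := by
  have h : HasFDerivAt (fun w : ℂ => 1 + Complex.normSq w) (nsq' w) w := (hnsq w).const_add 1
  exact h

/-- quotient rule for real-valued functions on ℂ -/
lemma myDiv {n d : ℂ → ℝ} {n' d' : ℂ →L[ℝ] ℝ} {x : ℂ}
    (hn : HasFDerivAt n n' x) (hd : HasFDerivAt d d' x) (hx : d x ≠ 0) :
    HasFDerivAt (fun w => n w / d w) ((1 / d x) • n' - (n x / d x ^ 2) • d') x := by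
  have hinv : HasFDerivAt (fun w => (d w)⁻¹) ((-(d x ^ 2)⁻¹) • d') x := by
    have h := (hasDerivAt_inv hx).comp_hasFDerivAt x hd
    exact h
  have h2 : HasFDerivAt (fun w => n w * (d w)⁻¹) (n x • -(d x ^ 2)⁻¹ • d' + (d x)⁻¹ • n') x :=
    hn.mul hinv
  have hfun : (fun w => n w / d w) = fun w => n w * (d w)⁻¹ := by
    funext w; rw [div_eq_mul_inv]
  rw [hfun]
  convert h2 using 1
  ext v
  simp
  field_simp
  ring

noncomputable def nfun (a e k : ℝ) (w : ℂ) : ℝ :=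
  a*(1 - Complex.normSq w) + e*w.re + k*w.im

noncomputable def nfun' (a e k : ℝ) (w : ℂ) : ℂ →L[ℝ] ℝ :=
  (-(2*a)*w.re + e) • Complex.reCLM + (-(2*a)*w.im + k) • Complex.imCLM

lemma hnfun (a e k : ℝ) (w : ℂ) : HasFDerivAt (nfun a e k) (nfun' a e k w) w := by
  have h : HasFDerivAt (fun w : ℂ => a*(1 - Complex.normSq w) + e*w.re + k*w.im)
      ((a • ((0 : ℂ →L[ℝ] ℝ) - nsq' w) + e • Complex.reCLM) + k • Complex.imCLM) w :=
    ((((hasFDerivAt_const (1:ℝ) w).sub (hnsq w)).const_mul a).add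
      ((hx_deriv w).const_mul e)).add ((hy_deriv w).const_mul k)
  have h2 : HasFDerivAt (nfun a e k)
      ((a • ((0 : ℂ →L[ℝ] ℝ) - nsq' w) + e • Complex.reCLM) + k • Complex.imCLM) w := h
  convert h2 using 1
  ext v
  simp [nfun', nsq']
  ring

noncomputable def sfun1 (a e k : ℝ) (w : ℂ) : ℝ :=
  ((-(2*a)*w.re + e) * dd w - 2*w.re * nfun a e k w) / dd w ^ 2

noncomputable def sfun2 (a e k : ℝ) (w : ℂ) : ℝ :=
  ((-(2*a)*w.im + k) * dd w - 2*w.im * nfun a e k w) / dd w ^ 2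

noncomputable def phifd (a e k : ℝ) (w : ℂ) : ℂ →L[ℝ] ℝ :=
  sfun1 a e k w • Complex.reCLM + sfun2 a e k w • Complex.imCLM

lemma hphi (a e k : ℝ) (w : ℂ) :
    HasFDerivAt (fun w => nfun a e k w / dd w) (phifd a e k w) w := by
  have h := myDiv (hnfun a e k w) (hdd w) (dd_ne w)
  convert h using 1
  ext v
  simp [phifd, sfun1, sfun2, nfun', nsq', smul_eq_mul]
  have hd := dd_ne w
  field_simp
  ring

lemma hdd2 (z : ℂ) : HasFDerivAt (fun w => dd w ^ 2) ((2 * dd z) • nsq' z) z := by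
  have h : HasFDerivAt (fun w => dd w * dd w) (dd z • nsq' z + dd z • nsq' z) z :=
    (hdd z).mul (hdd z)
  have hfun : (fun w : ℂ => dd w ^ 2) = fun w => dd w * dd w := by
    funext w; ring
  rw [hfun]
  convert h using 1
  ext v
  simp
  ring

lemma hphi2 (a e k : ℝ) (z : ℂ) :
    ∃ φ'' : ℂ →L[ℝ] (ℂ →L[ℝ] ℝ), HasFDerivAt (phifd a e k) φ'' z ∧
      φ'' 1 1 + φ'' Complex.I Complex.I
        = -8 * (nfun a e k z / dd z) / dd z ^ 2 := by
  have hlin1 : HasFDerivAt (fun w : ℂ => -(2*a)*w.re + e) ((-(2*a)) • Complex.reCLM) z :=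
    ((hx_deriv z).const_mul (-(2*a))).add_const e
  have hlin2 : HasFDerivAt (fun w : ℂ => -(2*a)*w.im + k) ((-(2*a)) • Complex.imCLM) z :=
    ((hy_deriv z).const_mul (-(2*a))).add_const k
  have h2x : HasFDerivAt (fun w : ℂ => 2*w.re) ((2:ℝ) • Complex.reCLM) z :=
    (hx_deriv z).const_mul 2
  have h2y : HasFDerivAt (fun w : ℂ => 2*w.im) ((2:ℝ) • Complex.imCLM) z :=
    (hy_deriv z).const_mul 2
  have hNu1 := (hlin1.mul (hdd z)).sub (h2x.mul (hnfun a e k z))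
  have hNu2 := (hlin2.mul (hdd z)).sub (h2y.mul (hnfun a e k z))
  have hden : (dd z ^ 2 : ℝ) ≠ 0 := pow_ne_zero 2 (dd_ne z)
  have hs1 : HasFDerivAt (sfun1 a e k) _ z := myDiv hNu1 (hdd2 z) hden
  have hs2 : HasFDerivAt (sfun2 a e k) _ z := myDiv hNu2 (hdd2 z) hden
  refine ⟨_, (hs1.smul_const Complex.reCLM).add (hs2.smul_const Complex.imCLM), ?_⟩
  simp only [ContinuousLinearMap.add_apply, ContinuousLinearMap.smulRight_apply,
    ContinuousLinearMap.smul_apply, ContinuousLinearMap.coe_sub',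
    Pi.sub_apply, ContinuousLinearMap.coe_smul', Pi.smul_apply,
    Complex.reCLM_apply, Complex.imCLM_apply, nsq', nfun',
    Complex.one_re, Complex.one_im, Complex.I_re, Complex.I_im,
    smul_eq_mul]
  have hnf : nfun a e k z = a*(1 - (z.re*z.re+z.im*z.im)) + e*z.re + k*z.im := by
    simp [nfun, Complex.normSq_apply]
  have hddz : dd z = 1 + (z.re*z.re+z.im*z.im) := by
    simp [dd, Complex.normSq_apply]
  have hP : (0:ℝ) < 1 + (z.re*z.re+z.im*z.im) := by nlinarith [sq_nonneg z.re, sq_nonneg z.im]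
  rw [hnf, hddz]
  field_simp
  ring

lemma master (φ : ℂ → ℝ) (φ' : ℂ → ℂ →L[ℝ] ℝ) (g g' : ℂ → ℂ) (z g''z : ℂ)
    (Φ : ℂ → ℝ)
    (hΦ : ∀ w, Φ w = φ (g w))
    (hφ : ∀ w, HasFDerivAt φ (φ' w) w)
    (hg : ∀ w, HasDerivAt g (g' w) w)
    (hg' : HasDerivAt g' g''z z)
    (φ'' : ℂ →L[ℝ] ℂ →L[ℝ] ℝ)
    (hφ'' : HasFDerivAt φ' φ'' (g z)) :
    planeLaplacian Φ z = Complex.normSq (g' z) * (φ'' 1 1 + φ'' Complex.I Complex.I) := by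
  have hΦeq : Φ = fun w => φ (g w) := funext hΦ
  subst hΦeq
  have hcomp : ∀ w, HasFDerivAt (fun w => φ (g w))
      ((φ' (g w)).comp
        (((1 : ℂ →L[ℂ] ℂ).smulRight (g' w)).restrictScalars ℝ)) w :=
    fun w => (hφ (g w)).comp w ((hg w).hasFDerivAt.restrictScalars ℝ)
  have hfd : ∀ v : ℂ, (fun w => fderiv ℝ (fun w => φ (g w)) w v)
      = fun w => φ' (g w) (v * g' w) := by
    intro v
    funext w
    rw [(hcomp w).fderiv]
    simp [smul_eq_mul]
  have hc : HasFDerivAt (fun w => φ' (g w))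
      (φ''.comp (((1 : ℂ →L[ℂ] ℂ).smulRight (g' z)).restrictScalars ℝ)) z :=
    hφ''.comp z ((hg z).hasFDerivAt.restrictScalars ℝ)
  have hu : ∀ v : ℂ, HasFDerivAt (fun w => v * g' w)
      (((1 : ℂ →L[ℂ] ℂ).smulRight (v * g''z)).restrictScalars ℝ) z :=
    fun v => (hg'.const_mul v).hasFDerivAt.restrictScalars ℝ
  have happ : ∀ v : ℂ, HasFDerivAt (fun w => φ' (g w) (v * g' w)) _ z :=
    fun v => hc.clm_apply (hu v)
  have key : ∀ p : ℂ, φ'' p p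
      = p.re^2 * φ'' 1 1 + p.re*p.im*(φ'' 1 Complex.I + φ'' Complex.I 1)
        + p.im^2 * φ'' Complex.I Complex.I := by
    intro p
    have hp : p = p.re • (1:ℂ) + p.im • Complex.I := by
      apply Complex.ext <;> simp
    conv_lhs => rw [hp]
    simp only [map_add, map_smul, ContinuousLinearMap.add_apply,
      ContinuousLinearMap.smul_apply, smul_eq_mul]
    ring
  unfold planeLaplacian
  rw [hfd 1, hfd Complex.I, (happ 1).fderiv, (happ Complex.I).fderiv]
  simp only [ContinuousLinearMap.add_apply, ContinuousLinearMap.comp_apply,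
    ContinuousLinearMap.flip_apply, ContinuousLinearMap.coe_restrictScalars',
    ContinuousLinearMap.smulRight_apply, ContinuousLinearMap.one_apply,
    smul_eq_mul, one_mul]
  have hI : Complex.I * (Complex.I * g''z) = -g''z := by
    rw [← mul_assoc, Complex.I_mul_I]; ring
  rw [hI, map_neg]
  rw [key (g' z), key (Complex.I * g' z)]
  simp only [Complex.mul_re, Complex.mul_im, Complex.I_re, Complex.I_im,
    Complex.normSq_apply]
  ring

/-- Each of `Z₀, Z₁, Z₂` is bounded on `ℂ` and solves `Δφ + Vφ = 0` on all of `ℂ`. -/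
theorem Z_bounded_solutions (c : ℂ) (N : ℕ)
    (V : ℂ → ℝ)
    (hV : ∀ z : ℂ, V z = 8 * (N + 1) ^ 2 * ‖z‖ ^ (2 * N) /
      (1 + ‖z ^ (N + 1) - c‖ ^ 2) ^ 2)
    (Z₀ Z₁ Z₂ : ℂ → ℝ)
    (hZ₀ : ∀ z : ℂ, Z₀ z = (1 - ‖z ^ (N + 1) - c‖ ^ 2) /
      (1 + ‖z ^ (N + 1) - c‖ ^ 2))
    (hZ₁ : ∀ z : ℂ, Z₁ z = (z ^ (N + 1) - c).re / (1 + ‖z ^ (N + 1) - c‖ ^ 2))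
    (hZ₂ : ∀ z : ℂ, Z₂ z = (z ^ (N + 1) - c).im / (1 + ‖z ^ (N + 1) - c‖ ^ 2)) :
    ∀ Z ∈ ({Z₀, Z₁, Z₂} : Set (ℂ → ℝ)),
      (∃ M : ℝ, ∀ z : ℂ, |Z z| ≤ M) ∧
      ∀ z : ℂ, planeLaplacian Z z + V z * Z z = 0 := by
  -- derivative facts about g
  have hg : ∀ w : ℂ, HasDerivAt (fun w : ℂ => w ^ (N+1) - c) (((N:ℂ)+1) * w ^ N) w := by
    intro w
    have h := (hasDerivAt_pow (N+1) w).sub_const c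
    have : ((N:ℂ)+1) * w ^ N = ((N+1 : ℕ) : ℂ) * w ^ (N + 1 - 1) := by push_cast; norm_num
    rw [this]
    exact h
  have hg' : ∀ z : ℂ, HasDerivAt (fun w : ℂ => ((N:ℂ)+1) * w ^ N)
      (((N:ℂ)+1) * ((N:ℂ) * z ^ (N-1))) z := by
    intro z
    exact (hasDerivAt_pow N z).const_mul (((N:ℂ))+1)
  -- common PDE verification
  have main : ∀ (a e k : ℝ) (Z : ℂ → ℝ),
      (∀ w : ℂ, Z w = nfun a e k (w ^ (N+1) - c) / dd (w ^ (N+1) - c)) →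
      ∀ z : ℂ, planeLaplacian Z z + V z * Z z = 0 := by
    intro a e k Z hΦ z
    obtain ⟨φ'', hφ'', hval⟩ := hphi2 a e k (z ^ (N+1) - c)
    have hl := master (fun t => nfun a e k t / dd t) (phifd a e k)
      (fun w => w ^ (N+1) - c) (fun w => ((N:ℂ)+1) * w ^ N) z
      (((N:ℂ)+1) * ((N:ℂ) * z ^ (N-1))) Z hΦ (hphi a e k) hg (hg' z) φ'' hφ''
    rw [hval] at hl
    have hns : Complex.normSq (((N:ℂ)+1) * z ^ N)
        = ((N:ℝ)+1) ^ 2 * ‖z‖ ^ (2*N) := by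
      rw [← Complex.sq_norm, norm_mul, norm_pow]
      have : ‖(N:ℂ)+1‖ = (N:ℝ)+1 := by
        have : ((N:ℂ)+1) = ((N+1 : ℕ) : ℂ) := by push_cast; ring
        rw [this, Complex.norm_natCast]; push_cast; ring
      rw [this, mul_pow, ← pow_mul]
      ring
    have hdd2 : dd (z ^ (N+1) - c) = 1 + ‖z ^ (N+1) - c‖ ^ 2 := by
      simp [dd, Complex.sq_norm]
    rw [hl, hns, hV z, hΦ z, hdd2]
    ring
  intro Z hZ
  have habs : ∀ w : ℂ, (0:ℝ) < 1 + ‖w ^ (N+1) - c‖ ^ 2 := by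
    intro w
    have := sq_nonneg ‖w ^ (N+1) - c‖
    linarith
  rcases hZ with h | h | h
  · -- Z = Z₀
    subst h
    constructor
    · refine ⟨1, fun z => ?_⟩
      rw [hZ₀ z, abs_div, abs_of_pos (habs z)]
      refine (div_le_one (habs z)).mpr (abs_le.mpr ⟨?_, ?_⟩)
      · have := sq_nonneg ‖z ^ (N+1) - c‖; linarith
      · have := sq_nonneg ‖z ^ (N+1) - c‖; linarith
    · refine main 1 0 0 _ (fun w => ?_)
      rw [hZ₀ w]
      simp [nfun, dd, Complex.sq_norm]
  · -- Z = Z₁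
    subst h
    constructor
    · refine ⟨1, fun z => ?_⟩
      rw [hZ₁ z, abs_div, abs_of_pos (habs z)]
      refine (div_le_one (habs z)).mpr ?_
      have h1 := Complex.abs_re_le_norm (z ^ (N+1) - c)
      have h2 := norm_nonneg (z ^ (N+1) - c)
      nlinarith
    · refine main 0 1 0 _ (fun w => ?_)
      rw [hZ₁ w]
      simp [nfun, dd, Complex.sq_norm]
  · -- Z = Z₂
    subst h
    constructor
    · refine ⟨1, fun z => ?_⟩
      rw [hZ₂ z, abs_div, abs_of_pos (habs z)]
      refine (div_le_one (habs z)).mpr ?_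
      have h1 := Complex.abs_im_le_norm (z ^ (N+1) - c)
      have h2 := norm_nonneg (z ^ (N+1) - c)
      nlinarith
    · refine main 0 0 1 _ (fun w => ?_)
      rw [hZ₂ w]
      simp [nfun, dd, Complex.sq_norm]
end

section
/- Let c ∈ ℂ, N ∈ ℕ, and set φ₀(z) = Re( 1 − 2 z^{N+1}\overline{(z^{N+1}−c)}/(1+|z^{N+1}−c|²) ). There exist constants C > 0 and ρ₀ > 0 such that for all 0 < ρ < ρ₀ and all integers k ≥ 1: |(1/2π)∫₀^{2π} φ₀(ρe^{iθ}) dθ − 1| ≤ C ρ^{N+1}, |∫₀^{2π} cos(kθ) φ₀(ρe^{iθ}) dθ| ≤ C ρ^{N+1}/(k+1), and |∫₀^{2π} sin(kθ) φ₀(ρe^{iθ}) dθ| ≤ C ρ^{N+1}/(k+1). -/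
open intervalIntegral

namespace Phi0Aux

/-- `u θ = Re(w \bar c)` where `w = r e^{i n θ}`, written in real coordinates. -/
noncomputable def uu (a b : ℝ) (n : ℕ) (r θ : ℝ) : ℝ :=
  r * (a * Real.cos (n * θ) + b * Real.sin (n * θ))

noncomputable def den (a b : ℝ) (n : ℕ) (r θ : ℝ) : ℝ :=
  1 + r ^ 2 + a ^ 2 + b ^ 2 - 2 * uu a b n r θ

noncomputable def ff (a b : ℝ) (n : ℕ) (r θ : ℝ) : ℝ :=
  -2 * (r ^ 2 - uu a b n r θ) / den a b n r θ

noncomputable def uu' (a b : ℝ) (n : ℕ) (r θ : ℝ) : ℝ :=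
  r * (n * (b * Real.cos (n * θ) - a * Real.sin (n * θ)))

noncomputable def ff' (a b : ℝ) (n : ℕ) (r θ : ℝ) : ℝ :=
  2 * uu' a b n r θ * (1 - r ^ 2 + a ^ 2 + b ^ 2) / (den a b n r θ) ^ 2

lemma one_le_den (a b : ℝ) (n : ℕ) (r θ : ℝ) : 1 ≤ den a b n r θ := by
  have h := Real.sin_sq_add_cos_sq ((n : ℝ) * θ)
  have h1 := sq_nonneg (r * Real.cos ((n : ℝ) * θ) - a)
  have h2 := sq_nonneg (r * Real.sin ((n : ℝ) * θ) - b)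
  unfold den uu
  nlinarith

lemma den_pos (a b : ℝ) (n : ℕ) (r θ : ℝ) : 0 < den a b n r θ :=
  lt_of_lt_of_le one_pos (one_le_den a b n r θ)

lemma hasDerivAt_uu (a b : ℝ) (n : ℕ) (r θ : ℝ) :
    HasDerivAt (uu a b n r) (uu' a b n r θ) θ := by
  have hn : HasDerivAt (fun x : ℝ => (n : ℝ) * x) (n : ℝ) θ := by
    simpa using (hasDerivAt_id θ).const_mul (n : ℝ)
  have hc : HasDerivAt (fun x : ℝ => Real.cos ((n : ℝ) * x))
      (-Real.sin ((n : ℝ) * θ) * n) θ := (Real.hasDerivAt_cos _).comp θ hn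
  have hs : HasDerivAt (fun x : ℝ => Real.sin ((n : ℝ) * x))
      (Real.cos ((n : ℝ) * θ) * n) θ := (Real.hasDerivAt_sin _).comp θ hn
  have := ((hc.const_mul a).add (hs.const_mul b)).const_mul r
  exact this.congr_deriv (by unfold uu' ; ring)

lemma hasDerivAt_ff (a b : ℝ) (n : ℕ) (r θ : ℝ) :
    HasDerivAt (ff a b n r) (ff' a b n r θ) θ := by
  have hu := hasDerivAt_uu a b n r θ
  have hnum : HasDerivAt (fun x => -2 * (r ^ 2 - uu a b n r x)) (2 * uu' a b n r θ) θ := by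
    have := ((hasDerivAt_const θ (r ^ 2)).sub hu).const_mul (-2 : ℝ)
    exact this.congr_deriv (by ring)
  have hden : HasDerivAt (den a b n r) (-2 * uu' a b n r θ) θ := by
    have := ((hasDerivAt_const θ (1 + r ^ 2 + a ^ 2 + b ^ 2)).sub (hu.const_mul 2))
    exact this.congr_deriv (by ring)
  have hd0 : den a b n r θ ≠ 0 := (den_pos a b n r θ).ne'
  have := hnum.div hden hd0
  refine this.congr_deriv ?_
  unfold ff' den
  field_simp
  ring

lemma continuous_uu (a b : ℝ) (n : ℕ) (r : ℝ) : Continuous (uu a b n r) := by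
  unfold uu; fun_prop

lemma continuous_den (a b : ℝ) (n : ℕ) (r : ℝ) : Continuous (den a b n r) := by
  unfold den uu; fun_prop

lemma continuous_ff (a b : ℝ) (n : ℕ) (r : ℝ) : Continuous (ff a b n r) := by
  unfold ff
  exact (continuous_const.mul (continuous_const.sub (continuous_uu a b n r))).div
    (continuous_den a b n r) (fun x => (den_pos a b n r x).ne')

lemma continuous_uu' (a b : ℝ) (n : ℕ) (r : ℝ) : Continuous (uu' a b n r) := by
  unfold uu'; fun_prop

lemma continuous_ff' (a b : ℝ) (n : ℕ) (r : ℝ) : Continuous (ff' a b n r) := by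
  unfold ff'
  exact ((continuous_const.mul (continuous_uu' a b n r)).mul continuous_const).div
    ((continuous_den a b n r).pow 2)
    (fun x => pow_ne_zero 2 (den_pos a b n r x).ne')

end Phi0Aux

namespace Phi0Aux

lemma abs_uu_le (a b : ℝ) (n : ℕ) {r : ℝ} (hr : 0 ≤ r) (θ : ℝ) :
    |uu a b n r θ| ≤ r * (|a| + |b|) := by
  unfold uu
  rw [abs_mul, abs_of_nonneg hr]
  have : |a * Real.cos ((n : ℝ) * θ) + b * Real.sin ((n : ℝ) * θ)| ≤ |a| + |b| := by
    calc |a * Real.cos ((n : ℝ) * θ) + b * Real.sin ((n : ℝ) * θ)|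
        ≤ |a * Real.cos ((n : ℝ) * θ)| + |b * Real.sin ((n : ℝ) * θ)| := abs_add_le _ _
      _ = |a| * |Real.cos ((n : ℝ) * θ)| + |b| * |Real.sin ((n : ℝ) * θ)| := by
          rw [abs_mul, abs_mul]
      _ ≤ |a| * 1 + |b| * 1 := by
          gcongr
          · exact Real.abs_cos_le_one _
          · exact Real.abs_sin_le_one _
      _ = |a| + |b| := by ring
  gcongr

lemma abs_uu'_le (a b : ℝ) (n : ℕ) {r : ℝ} (hr : 0 ≤ r) (θ : ℝ) :
    |uu' a b n r θ| ≤ r * (n * (|a| + |b|)) := by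
  unfold uu'
  rw [abs_mul, abs_of_nonneg hr, abs_mul, abs_of_nonneg (by positivity : (0:ℝ) ≤ (n:ℝ))]
  have : |b * Real.cos ((n : ℝ) * θ) - a * Real.sin ((n : ℝ) * θ)| ≤ |a| + |b| := by
    calc |b * Real.cos ((n : ℝ) * θ) - a * Real.sin ((n : ℝ) * θ)|
        ≤ |b * Real.cos ((n : ℝ) * θ)| + |a * Real.sin ((n : ℝ) * θ)| := abs_sub _ _
      _ = |b| * |Real.cos ((n : ℝ) * θ)| + |a| * |Real.sin ((n : ℝ) * θ)| := by
          rw [abs_mul, abs_mul]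
      _ ≤ |b| * 1 + |a| * 1 := by
          gcongr
          · exact Real.abs_cos_le_one _
          · exact Real.abs_sin_le_one _
      _ = |a| + |b| := by ring
  gcongr

lemma abs_ff_le (a b : ℝ) (n : ℕ) {r : ℝ} (hr : 0 ≤ r) (hr1 : r ≤ 1) (θ : ℝ) :
    |ff a b n r θ| ≤ 2 * (1 + |a| + |b|) * r := by
  unfold ff
  rw [abs_div, abs_of_pos (den_pos a b n r θ)]
  have h1 : |(-2 : ℝ) * (r ^ 2 - uu a b n r θ)| ≤ 2 * (1 + |a| + |b|) * r := by
    rw [abs_mul]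
    have h2 : |r ^ 2 - uu a b n r θ| ≤ r ^ 2 + |uu a b n r θ| := by
      have := abs_sub (r ^ 2) (uu a b n r θ)
      rwa [abs_of_nonneg (sq_nonneg r)] at this
    have h3 := abs_uu_le a b n hr θ
    have h4 : r ^ 2 ≤ r := by nlinarith
    have h5 : |(-2 : ℝ)| = 2 := by norm_num
    rw [h5]
    nlinarith [abs_nonneg (uu a b n r θ)]
  calc |(-2 : ℝ) * (r ^ 2 - uu a b n r θ)| / den a b n r θ
      ≤ |(-2 : ℝ) * (r ^ 2 - uu a b n r θ)| :=
        div_le_self (abs_nonneg _) (one_le_den a b n r θ)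
    _ ≤ 2 * (1 + |a| + |b|) * r := h1

lemma abs_ff'_le (a b : ℝ) (n : ℕ) {r : ℝ} (hr : 0 ≤ r) (hr1 : r ≤ 1) (θ : ℝ) :
    |ff' a b n r θ| ≤ 2 * (n * (|a| + |b|)) * (2 + a ^ 2 + b ^ 2) * r := by
  unfold ff'
  have hden := one_le_den a b n r θ
  have hden2 : 1 ≤ (den a b n r θ) ^ 2 := by nlinarith
  rw [abs_div, abs_of_pos (by positivity : (0:ℝ) < (den a b n r θ) ^ 2)]
  have h1 : |2 * uu' a b n r θ * (1 - r ^ 2 + a ^ 2 + b ^ 2)|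
      ≤ 2 * (n * (|a| + |b|)) * (2 + a ^ 2 + b ^ 2) * r := by
    rw [abs_mul, abs_mul]
    have h3 := abs_uu'_le a b n hr θ
    have h4 : |(1 : ℝ) - r ^ 2 + a ^ 2 + b ^ 2| ≤ 2 + a ^ 2 + b ^ 2 := by
      rw [abs_of_nonneg (by nlinarith)]
      nlinarith
    have h5 : |(2 : ℝ)| = 2 := by norm_num
    rw [h5]
    nlinarith [abs_nonneg (uu' a b n r θ), abs_nonneg a, abs_nonneg b,
      mul_nonneg (mul_nonneg hr (by positivity : (0:ℝ) ≤ (n:ℝ))) (by positivity : (0:ℝ) ≤ |a| + |b|)]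
  calc |2 * uu' a b n r θ * (1 - r ^ 2 + a ^ 2 + b ^ 2)| / (den a b n r θ) ^ 2
      ≤ |2 * uu' a b n r θ * (1 - r ^ 2 + a ^ 2 + b ^ 2)| :=
        div_le_self (abs_nonneg _) hden2
    _ ≤ _ := h1

lemma sin_nat_mul_two_pi' (n : ℕ) : Real.sin ((n : ℝ) * (2 * Real.pi)) = 0 := by
  simpa using Real.sin_add_nat_mul_two_pi 0 n

lemma ff_periodic (a b : ℝ) (n : ℕ) (r : ℝ) :
    ff a b n r (2 * Real.pi) = ff a b n r 0 := by
  unfold ff den uu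
  norm_num [Real.cos_nat_mul_two_pi, sin_nat_mul_two_pi']

end Phi0Aux

namespace Phi0Aux

lemma repr_phi (c : ℂ) (n : ℕ) (ρ θ : ℝ) (hρ : 0 ≤ ρ) :
    (1 - 2 * ((ρ : ℂ) * Complex.exp (Complex.I * θ)) ^ n *
        (starRingEnd ℂ) (((ρ : ℂ) * Complex.exp (Complex.I * θ)) ^ n - c) /
        (((1 + ‖((ρ : ℂ) * Complex.exp (Complex.I * θ)) ^ n - c‖ ^ 2 : ℝ)) : ℂ)).re
    = 1 + ff c.re c.im n (ρ ^ n) θ := by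
  have hw : ((ρ : ℂ) * Complex.exp (Complex.I * θ)) ^ n
      = ((ρ ^ n : ℝ) : ℂ) * Complex.exp ((((n : ℝ) * θ : ℝ) : ℂ) * Complex.I) := by
    rw [mul_pow, ← Complex.exp_nat_mul]
    push_cast
    ring_nf
  rw [hw]
  set x : ℝ := (n : ℝ) * θ with hx
  set r : ℝ := ρ ^ n with hrdef
  set w : ℂ := ((r : ℝ) : ℂ) * Complex.exp ((x : ℂ) * Complex.I) with hwdef
  have hre : w.re = r * Real.cos x := by
    simp [hwdef, Complex.mul_re, Complex.exp_ofReal_mul_I_re, Complex.exp_ofReal_mul_I_im]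
  have him : w.im = r * Real.sin x := by
    simp [hwdef, Complex.mul_im, Complex.exp_ofReal_mul_I_re, Complex.exp_ofReal_mul_I_im]
  have habs : ‖w - c‖ ^ 2 = (w.re - c.re) ^ 2 + (w.im - c.im) ^ 2 := by
    rw [Complex.sq_norm, Complex.normSq_apply]
    simp [Complex.sub_re, Complex.sub_im]
    ring
  have hnum : (2 * w * (starRingEnd ℂ) (w - c)).re
      = 2 * (w.re * (w.re - c.re) + w.im * (w.im - c.im)) := by
    simp [Complex.mul_re, Complex.sub_re, Complex.sub_im]
    ring
  rw [Complex.sub_re, Complex.div_ofReal_re, Complex.one_re, hnum, habs, hre, him]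
  have hp := Real.sin_sq_add_cos_sq x
  have hD : 1 + ((r * Real.cos x - c.re) ^ 2 + (r * Real.sin x - c.im) ^ 2)
      = den c.re c.im n r θ := by
    unfold den uu
    rw [← hx]
    linear_combination (r ^ 2) * hp
  have hN : 2 * ((r * Real.cos x) * (r * Real.cos x - c.re)
        + (r * Real.sin x) * (r * Real.sin x - c.im))
      = 2 * (r ^ 2 - uu c.re c.im n r θ) := by
    unfold uu
    rw [← hx]
    linear_combination (2 * r ^ 2) * hp
  rw [hD, hN]
  unfold ff
  have hd0 : den c.re c.im n r θ ≠ 0 := (den_pos c.re c.im n r θ).ne'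
  field_simp
  ring

end Phi0Aux

namespace Phi0Aux

lemma cos_nat_two_pi (k : ℕ) : Real.cos ((k : ℝ) * (2 * Real.pi)) = 1 :=
  Real.cos_nat_mul_two_pi k

lemma hasDerivAt_sin_div (k : ℕ) (hk : 1 ≤ k) (x : ℝ) :
    HasDerivAt (fun θ : ℝ => Real.sin ((k : ℝ) * θ) / k) (Real.cos ((k : ℝ) * x)) x := by
  have hk0 : (k : ℝ) ≠ 0 := Nat.cast_ne_zero.mpr (by omega)
  have h1 : HasDerivAt (fun θ : ℝ => (k : ℝ) * θ) (k : ℝ) x := by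
    simpa using (hasDerivAt_id x).const_mul (k : ℝ)
  have h2 := ((Real.hasDerivAt_sin ((k : ℝ) * x)).comp x h1).div_const (k : ℝ)
  exact h2.congr_deriv (by field_simp)

lemma hasDerivAt_neg_cos_div (k : ℕ) (hk : 1 ≤ k) (x : ℝ) :
    HasDerivAt (fun θ : ℝ => -Real.cos ((k : ℝ) * θ) / k) (Real.sin ((k : ℝ) * x)) x := by
  have hk0 : (k : ℝ) ≠ 0 := Nat.cast_ne_zero.mpr (by omega)
  have h1 : HasDerivAt (fun θ : ℝ => (k : ℝ) * θ) (k : ℝ) x := by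
    simpa using (hasDerivAt_id x).const_mul (k : ℝ)
  have h2 := (((Real.hasDerivAt_cos ((k : ℝ) * x)).comp x h1).div_const (k : ℝ)).neg
  have h3 : HasDerivAt (fun θ : ℝ => -(Real.cos ((k : ℝ) * θ) / k))
      (-(-Real.sin ((k : ℝ) * x) * k / k)) x := h2
  convert h3 using 1
  · funext θ; ring
  · field_simp

/-- Integration by parts bound for the cosine Fourier coefficient. -/
lemma cos_coeff_bound (g g' : ℝ → ℝ) (hg : ∀ x, HasDerivAt g (g' x) x)
    (hg' : Continuous g') (M : ℝ) (hM : ∀ x, |g' x| ≤ M)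
    (k : ℕ) (hk : 1 ≤ k) :
    |∫ θ in (0 : ℝ)..(2 * Real.pi), g θ * Real.cos ((k : ℝ) * θ)| ≤ 2 * Real.pi * M / k := by
  have hk0 : (k : ℝ) ≠ 0 := Nat.cast_ne_zero.mpr (by omega)
  have hkpos : (0 : ℝ) < k := by positivity
  have hibp := intervalIntegral.integral_mul_deriv_eq_deriv_mul
    (u := g) (u' := g') (v := fun θ => Real.sin ((k : ℝ) * θ) / k)
    (v' := fun θ => Real.cos ((k : ℝ) * θ))
    (a := 0) (b := 2 * Real.pi)
    (fun x _ => hg x) (fun x _ => hasDerivAt_sin_div k hk x)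
    (hg'.intervalIntegrable _ _)
    ((Real.continuous_cos.comp (continuous_const.mul continuous_id)).intervalIntegrable _ _)
  rw [hibp]
  have hs2 : Real.sin ((k : ℝ) * (2 * Real.pi)) = 0 := sin_nat_mul_two_pi' k
  have hs0 : Real.sin ((k : ℝ) * 0) = 0 := by simp
  simp only [hs2, hs0, Real.sin_zero, zero_div, mul_zero, sub_zero, zero_sub, abs_neg]
  have hbound : ∀ x ∈ Set.uIoc (0 : ℝ) (2 * Real.pi),
      ‖g' x * (Real.sin ((k : ℝ) * x) / k)‖ ≤ M / k := by
    intro x _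
    rw [Real.norm_eq_abs, abs_mul, abs_div]
    have h1 := hM x
    have h2 : |Real.sin ((k : ℝ) * x)| ≤ 1 := Real.abs_sin_le_one _
    have h3 : |(k : ℝ)| = k := abs_of_pos hkpos
    rw [h3]
    have hM0 : 0 ≤ M := le_trans (abs_nonneg _) (hM 0)
    calc |g' x| * (|Real.sin ((k : ℝ) * x)| / k) ≤ M * (1 / k) := by
          gcongr
      _ = M / k := by ring
  have := intervalIntegral.norm_integral_le_of_norm_le_const hbound
  rw [Real.norm_eq_abs] at this
  calc |∫ x in (0:ℝ)..(2*Real.pi), g' x * (Real.sin ((k : ℝ) * x) / k)|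
      ≤ M / k * |2 * Real.pi - 0| := this
    _ = 2 * Real.pi * M / k := by
        rw [sub_zero, abs_of_pos Real.two_pi_pos]
        ring

end Phi0Aux


namespace Phi0Aux

/-- Integration by parts bound for the sine Fourier coefficient (needs periodicity). -/
lemma sin_coeff_bound (g g' : ℝ → ℝ) (hg : ∀ x, HasDerivAt g (g' x) x)
    (hg' : Continuous g') (M : ℝ) (hM : ∀ x, |g' x| ≤ M)
    (hper : g (2 * Real.pi) = g 0)
    (k : ℕ) (hk : 1 ≤ k) :
    |∫ θ in (0 : ℝ)..(2 * Real.pi), g θ * Real.sin ((k : ℝ) * θ)| ≤ 2 * Real.pi * M / k := by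
  have hk0 : (k : ℝ) ≠ 0 := Nat.cast_ne_zero.mpr (by omega)
  have hkpos : (0 : ℝ) < k := by positivity
  have hibp := intervalIntegral.integral_mul_deriv_eq_deriv_mul
    (u := g) (u' := g') (v := fun θ => -Real.cos ((k : ℝ) * θ) / k)
    (v' := fun θ => Real.sin ((k : ℝ) * θ))
    (a := 0) (b := 2 * Real.pi)
    (fun x _ => hg x) (fun x _ => hasDerivAt_neg_cos_div k hk x)
    (hg'.intervalIntegrable _ _)
    ((Real.continuous_sin.comp (continuous_const.mul continuous_id)).intervalIntegrable _ _)
  rw [hibp]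
  have hc2 : Real.cos ((k : ℝ) * (2 * Real.pi)) = 1 := cos_nat_two_pi k
  have hboundary : g (2 * Real.pi) * (-Real.cos ((k : ℝ) * (2 * Real.pi)) / k)
      - g 0 * (-Real.cos ((k : ℝ) * 0) / k) = 0 := by
    rw [hc2, hper]
    simp
  have heq : g (2 * Real.pi) * (-Real.cos ((k : ℝ) * (2 * Real.pi)) / k)
        - g 0 * (-Real.cos ((k : ℝ) * 0) / k)
        - (∫ x in (0:ℝ)..(2*Real.pi), g' x * (-Real.cos ((k : ℝ) * x) / k))
      = -(∫ x in (0:ℝ)..(2*Real.pi), g' x * (-Real.cos ((k : ℝ) * x) / k)) := by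
    rw [hboundary]; ring
  rw [heq, abs_neg]
  have hbound : ∀ x ∈ Set.uIoc (0 : ℝ) (2 * Real.pi),
      ‖g' x * (-Real.cos ((k : ℝ) * x) / k)‖ ≤ M / k := by
    intro x _
    rw [Real.norm_eq_abs, abs_mul, abs_div, abs_neg]
    have h2 : |Real.cos ((k : ℝ) * x)| ≤ 1 := Real.abs_cos_le_one _
    have h3 : |(k : ℝ)| = k := abs_of_pos hkpos
    rw [h3]
    have hM0 : 0 ≤ M := le_trans (abs_nonneg _) (hM 0)
    calc |g' x| * (|Real.cos ((k : ℝ) * x)| / k) ≤ M * (1 / k) := by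
          gcongr
          exact hM x
      _ = M / k := by ring
  have := intervalIntegral.norm_integral_le_of_norm_le_const hbound
  rw [Real.norm_eq_abs] at this
  calc |∫ x in (0:ℝ)..(2*Real.pi), g' x * (-Real.cos ((k : ℝ) * x) / k)|
      ≤ M / k * |2 * Real.pi - 0| := this
    _ = 2 * Real.pi * M / k := by
        rw [sub_zero, abs_of_pos Real.two_pi_pos]
        ring

end Phi0Aux

namespace Phi0Aux

lemma integral_cos_k (k : ℕ) (hk : 1 ≤ k) :
    ∫ θ in (0 : ℝ)..(2 * Real.pi), Real.cos ((k : ℝ) * θ) = 0 := by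
  have hk0 : (k : ℝ) ≠ 0 := Nat.cast_ne_zero.mpr (by omega)
  rw [intervalIntegral.integral_comp_mul_left Real.cos hk0]
  rw [integral_cos]
  rw [mul_zero, Real.sin_zero, sin_nat_mul_two_pi' k]
  simp

lemma integral_sin_k (k : ℕ) (hk : 1 ≤ k) :
    ∫ θ in (0 : ℝ)..(2 * Real.pi), Real.sin ((k : ℝ) * θ) = 0 := by
  have hk0 : (k : ℝ) ≠ 0 := Nat.cast_ne_zero.mpr (by omega)
  rw [intervalIntegral.integral_comp_mul_left Real.sin hk0]
  rw [integral_sin]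
  rw [mul_zero, Real.cos_zero, cos_nat_two_pi k]
  simp

end Phi0Aux


open Phi0Aux in
/-- Fourier-type estimates for `φ₀` on small circles: the mean of `φ₀(ρe^{iθ})` is
`1 + O(ρ^{N+1})`, and its `cos(kθ)`, `sin(kθ)` Fourier coefficients are
`O(ρ^{N+1}/(k+1))`, uniformly in `k ≥ 1`. -/
theorem phi0_fourier_estimates (c : ℂ) (N : ℕ)
    (φ₀ : ℂ → ℝ)
    (hφ₀ : ∀ z : ℂ, φ₀ z = (1 - 2 * z ^ (N + 1) * (starRingEnd ℂ) (z ^ (N + 1) - c) /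
      (((1 + ‖z ^ (N + 1) - c‖ ^ 2 : ℝ)) : ℂ)).re) :
    ∃ C > (0 : ℝ), ∃ ρ₀ > (0 : ℝ), ∀ ρ : ℝ, 0 < ρ → ρ < ρ₀ →
      |(1 / (2 * Real.pi)) *
          (∫ θ in (0 : ℝ)..(2 * Real.pi), φ₀ ((ρ : ℂ) * Complex.exp (Complex.I * θ))) - 1|
        ≤ C * ρ ^ (N + 1) ∧
      ∀ k : ℕ, 1 ≤ k →
        |∫ θ in (0 : ℝ)..(2 * Real.pi),
            Real.cos (k * θ) * φ₀ ((ρ : ℂ) * Complex.exp (Complex.I * θ))|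
          ≤ C * ρ ^ (N + 1) / (k + 1) ∧
        |∫ θ in (0 : ℝ)..(2 * Real.pi),
            Real.sin (k * θ) * φ₀ ((ρ : ℂ) * Complex.exp (Complex.I * θ))|
          ≤ C * ρ ^ (N + 1) / (k + 1) := by
  set a : ℝ := c.re with ha
  set b : ℝ := c.im with hb
  set A : ℝ := |a| + |b| with hA
  set CD : ℝ := 2 * (((N : ℝ) + 1) * A) * (2 + a ^ 2 + b ^ 2) with hCD
  have hA0 : 0 ≤ A := by positivity
  have hCD0 : 0 ≤ CD := by positivity
  refine ⟨2 * (1 + A) + 4 * Real.pi * CD + 1, by positivity, 1, one_pos, ?_⟩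
  intro ρ hρ0 hρ1
  set r : ℝ := ρ ^ (N + 1) with hrdef
  have hr0 : 0 < r := by positivity
  have hr1 : r ≤ 1 := pow_le_one₀ hρ0.le hρ1.le
  have hrepr : ∀ θ : ℝ, φ₀ ((ρ : ℂ) * Complex.exp (Complex.I * θ)) = 1 + ff a b (N + 1) r θ := by
    intro θ
    rw [hφ₀]
    exact repr_phi c (N + 1) ρ θ hρ0.le
  have hcont_ff : Continuous (ff a b (N + 1) r) := continuous_ff a b (N + 1) r
  have hcont_ff' : Continuous (ff' a b (N + 1) r) := continuous_ff' a b (N + 1) r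
  have hMf : ∀ θ, |ff a b (N + 1) r θ| ≤ 2 * (1 + A) * r := by
    intro θ
    have h := abs_ff_le a b (N + 1) hr0.le hr1 θ
    rw [hA]
    nlinarith [hr0.le]
  have hMf' : ∀ θ, |ff' a b (N + 1) r θ| ≤ CD * r := by
    intro θ
    have := abs_ff'_le a b (N + 1) hr0.le hr1 θ
    calc |ff' a b (N + 1) r θ| ≤ 2 * (((N:ℝ) + 1) * (|a| + |b|)) * (2 + a ^ 2 + b ^ 2) * r := by
          convert this using 3
          push_cast
          ring
      _ = CD * r := by rw [hCD, hA]
  constructor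
  · -- mean estimate
    have h1 : (∫ θ in (0 : ℝ)..(2 * Real.pi), φ₀ ((ρ : ℂ) * Complex.exp (Complex.I * θ)))
        = 2 * Real.pi + ∫ θ in (0 : ℝ)..(2 * Real.pi), ff a b (N + 1) r θ := by
      rw [intervalIntegral.integral_congr (g := fun θ => 1 + ff a b (N + 1) r θ)
        (fun θ _ => hrepr θ)]
      rw [intervalIntegral.integral_add intervalIntegrable_const
        (hcont_ff.intervalIntegrable _ _)]
      simp
    rw [h1]
    have hIb : |∫ θ in (0 : ℝ)..(2 * Real.pi), ff a b (N + 1) r θ|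
        ≤ 2 * (1 + A) * r * (2 * Real.pi) := by
      have := intervalIntegral.norm_integral_le_of_norm_le_const
        (C := 2 * (1 + A) * r) (f := ff a b (N + 1) r) (a := 0) (b := 2 * Real.pi)
        (fun x _ => by rw [Real.norm_eq_abs]; exact hMf x)
      rw [Real.norm_eq_abs, sub_zero, abs_of_pos Real.two_pi_pos] at this
      linarith
    have hpi : (2 * Real.pi) ≠ 0 := (Real.two_pi_pos).ne'
    have heq : (1 / (2 * Real.pi)) *
        (2 * Real.pi + ∫ θ in (0 : ℝ)..(2 * Real.pi), ff a b (N + 1) r θ) - 1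
        = (∫ θ in (0 : ℝ)..(2 * Real.pi), ff a b (N + 1) r θ) / (2 * Real.pi) := by
      field_simp
      ring
    rw [heq, abs_div, abs_of_pos Real.two_pi_pos]
    rw [div_le_iff₀ Real.two_pi_pos]
    calc |∫ θ in (0 : ℝ)..(2 * Real.pi), ff a b (N + 1) r θ|
        ≤ 2 * (1 + A) * r * (2 * Real.pi) := hIb
      _ ≤ (2 * (1 + A) + 4 * Real.pi * CD + 1) * r * (2 * Real.pi) := by
          gcongr
          have h4 : (0:ℝ) ≤ 4 * Real.pi * CD :=
            mul_nonneg (by positivity) hCD0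
          linarith
      _ = (2 * (1 + A) + 4 * Real.pi * CD + 1) * ρ ^ (N + 1) * (2 * Real.pi) := by rw [hrdef]
  · -- Fourier coefficients
    intro k hk
    have hkpos : (0 : ℝ) < k := by
      have : (1 : ℝ) ≤ k := by exact_mod_cast hk
      linarith
    have hk1 : (0 : ℝ) < (k : ℝ) + 1 := by linarith
    have hfrac : 2 * Real.pi * (CD * r) / k
        ≤ (2 * (1 + A) + 4 * Real.pi * CD + 1) * ρ ^ (N + 1) / ((k : ℝ) + 1) := by
      rw [div_le_div_iff₀ hkpos hk1, ← hrdef]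
      have hk2 : (k : ℝ) + 1 ≤ 2 * k := by
        have : (1 : ℝ) ≤ k := by exact_mod_cast hk
        linarith
      calc 2 * Real.pi * (CD * r) * ((k : ℝ) + 1)
          ≤ 2 * Real.pi * (CD * r) * (2 * k) := by
            have h3 : (0:ℝ) ≤ 2 * Real.pi * (CD * r) := by positivity
            exact mul_le_mul_of_nonneg_left hk2 h3
        _ = 4 * Real.pi * CD * r * k := by ring
        _ ≤ (2 * (1 + A) + 4 * Real.pi * CD + 1) * r * k := by
            have h5 : (0:ℝ) ≤ (2 * (1 + A) + 1) * (r * k) := by positivity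
            nlinarith
    constructor
    · -- cosine
      have h1 : (∫ θ in (0 : ℝ)..(2 * Real.pi),
            Real.cos ((k : ℝ) * θ) * φ₀ ((ρ : ℂ) * Complex.exp (Complex.I * θ)))
          = (∫ θ in (0 : ℝ)..(2 * Real.pi), Real.cos ((k : ℝ) * θ))
            + ∫ θ in (0 : ℝ)..(2 * Real.pi), ff a b (N + 1) r θ * Real.cos ((k : ℝ) * θ) := by
        rw [intervalIntegral.integral_congr
          (g := fun θ => Real.cos ((k : ℝ) * θ) + ff a b (N + 1) r θ * Real.cos ((k : ℝ) * θ))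
          (fun θ _ => by rw [hrepr θ]; ring)]
        have hc1 : IntervalIntegrable (fun θ : ℝ => Real.cos ((k : ℝ) * θ))
            MeasureTheory.volume 0 (2 * Real.pi) :=
          (by fun_prop : Continuous fun θ : ℝ => Real.cos ((k : ℝ) * θ)).intervalIntegrable _ _
        have hc2 : IntervalIntegrable (fun θ : ℝ => ff a b (N + 1) r θ * Real.cos ((k : ℝ) * θ))
            MeasureTheory.volume 0 (2 * Real.pi) :=
          (hcont_ff.mul (by fun_prop : Continuous fun θ : ℝ => Real.cos ((k : ℝ) * θ))).intervalIntegrable _ _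
        exact intervalIntegral.integral_add hc1 hc2
      rw [h1, integral_cos_k k hk, zero_add]
      calc |∫ θ in (0 : ℝ)..(2 * Real.pi), ff a b (N + 1) r θ * Real.cos ((k : ℝ) * θ)|
          ≤ 2 * Real.pi * (CD * r) / k :=
            cos_coeff_bound (ff a b (N + 1) r) (ff' a b (N + 1) r)
              (hasDerivAt_ff a b (N + 1) r) hcont_ff' (CD * r) hMf' k hk
        _ ≤ _ := hfrac
    · -- sine
      have h1 : (∫ θ in (0 : ℝ)..(2 * Real.pi),
            Real.sin ((k : ℝ) * θ) * φ₀ ((ρ : ℂ) * Complex.exp (Complex.I * θ)))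
          = (∫ θ in (0 : ℝ)..(2 * Real.pi), Real.sin ((k : ℝ) * θ))
            + ∫ θ in (0 : ℝ)..(2 * Real.pi), ff a b (N + 1) r θ * Real.sin ((k : ℝ) * θ) := by
        rw [intervalIntegral.integral_congr
          (g := fun θ => Real.sin ((k : ℝ) * θ) + ff a b (N + 1) r θ * Real.sin ((k : ℝ) * θ))
          (fun θ _ => by rw [hrepr θ]; ring)]
        have hc1 : IntervalIntegrable (fun θ : ℝ => Real.sin ((k : ℝ) * θ))
            MeasureTheory.volume 0 (2 * Real.pi) :=
          (by fun_prop : Continuous fun θ : ℝ => Real.sin ((k : ℝ) * θ)).intervalIntegrable _ _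
        have hc2 : IntervalIntegrable (fun θ : ℝ => ff a b (N + 1) r θ * Real.sin ((k : ℝ) * θ))
            MeasureTheory.volume 0 (2 * Real.pi) :=
          (hcont_ff.mul (by fun_prop : Continuous fun θ : ℝ => Real.sin ((k : ℝ) * θ))).intervalIntegrable _ _
        exact intervalIntegral.integral_add hc1 hc2
      rw [h1, integral_sin_k k hk, zero_add]
      calc |∫ θ in (0 : ℝ)..(2 * Real.pi), ff a b (N + 1) r θ * Real.sin ((k : ℝ) * θ)|
          ≤ 2 * Real.pi * (CD * r) / k :=
            sin_coeff_bound (ff a b (N + 1) r) (ff' a b (N + 1) r)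
              (hasDerivAt_ff a b (N + 1) r) hcont_ff' (CD * r) hMf'
              (ff_periodic a b (N + 1) r) k hk
        _ ≤ _ := hfrac
end

section
/- Let c ∈ ℂ, N ∈ ℕ and define φ₀(z) = Re( 1 − 2 z^{N+1}\overline{(z^{N+1}−c)}/(1+|z^{N+1}−c|²) ), and for j ≥ 1, φ_j¹(z) = ((N+1)/(N+1+j)) Re φ_j(z) and φ_j²(z) = ((N+1)/(N+1+j)) Im φ_j(z), where φ_j(z) = z^j( (N+1+j)/(N+1) − 2 z^{N+1}\overline{(z^{N+1}−c)}/(1+|z^{N+1}−c|²) ). Then there exists ρ₀ > 0 such that for every 0 < ρ < ρ₀, the linear span of the family of functions θ ↦ φ₀(ρe^{iθ}), θ ↦ φ_k¹(ρe^{iθ}), θ ↦ φ_k²(ρe^{iθ}) (k ≥ 1) is dense in L²(0, 2π). Equivalently, if ψ ∈ L²(0,2π) satisfies ∫₀^{2π} ψ(θ)φ₀(ρe^{iθ})dθ = 0 and ∫₀^{2π} ψ(θ)φ_k^i(ρe^{iθ})dθ = 0 for all k ≥ 1 and i = 1,2, then ψ = 0 almost everywhere. -/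
open intervalIntegral MeasureTheory

open Set Complex AddCircle

local notation "π" => Real.pi

lemma two_pi_pos' : (0:ℝ) < 2 * π := by positivity

lemma coeff_eq (f : ℝ → ℂ) (n : ℤ) :
    haveI : Fact ((0:ℝ) < 2 * π) := ⟨two_pi_pos'⟩
    fourierCoeff (AddCircle.liftIoc (2*π) 0 f) n
      = (1/(2*π) : ℝ) • ∫ θ in (0:ℝ)..(2*π), Complex.exp (-Complex.I*n*θ) * f θ := by
  haveI : Fact ((0:ℝ) < 2 * π) := ⟨two_pi_pos'⟩
  rw [fourierCoeff_eq_intervalIntegral _ n 0, zero_add]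
  congr 1
  apply intervalIntegral.integral_congr_ae
  filter_upwards [] with θ hθ
  rw [Set.uIoc_of_le two_pi_pos'.le] at hθ
  rw [AddCircle.liftIoc_coe_apply (by rwa [zero_add])]
  rw [fourier_coe_apply, smul_eq_mul]
  congr 2
  push_cast
  field_simp [Real.pi_ne_zero]

lemma parseval_2pi (f : ℝ → ℂ) (hm : Measurable f)
    (hf : MemLp f 2 (volume.restrict (Set.Ioc 0 (2*π)))) :
    haveI : Fact ((0:ℝ) < 2 * π) := ⟨two_pi_pos'⟩
    Summable (fun n : ℤ => ‖fourierCoeff (AddCircle.liftIoc (2*π) 0 f) n‖^2) ∧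
    ∑' n : ℤ, ‖fourierCoeff (AddCircle.liftIoc (2*π) 0 f) n‖^2
      = (1/(2*π)) * ∫ θ in Set.Ioc (0:ℝ) (2*π), ‖f θ‖^2 := by
  haveI : Fact ((0:ℝ) < 2 * π) := ⟨two_pi_pos'⟩
  set g : AddCircle (2*π) → ℂ := AddCircle.liftIoc (2*π) 0 f with hg
  have hgm : Measurable g := by
    have : g = ((fun x : Set.Ioc (0:ℝ) (0 + 2*π) => f x) ∘
        (AddCircle.measurableEquivIoc (2*π) 0)) := rfl
    rw [this]
    exact (hm.comp measurable_subtype_coe).comp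
      (AddCircle.measurableEquivIoc (2*π) 0).measurable
  have hcoe : ∀ᵐ (x:ℝ) ∂(volume.restrict (Set.Ioc (0:ℝ) (0 + 2*π))), g ((x : ℝ) : AddCircle (2*π)) = f x := by
    filter_upwards [ae_restrict_mem measurableSet_Ioc] with x hx
    exact AddCircle.liftIoc_coe_apply hx
  have hg2 : MemLp g 2 (volume : Measure (AddCircle (2*π))) := by
    refine ⟨hgm.aestronglyMeasurable, ?_⟩
    rw [← eLpNorm_comp_measurePreserving (p := 2) hgm.aestronglyMeasurable
      (AddCircle.measurePreserving_mk (2*π) 0)]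
    have heq : eLpNorm (fun x : ℝ => g ((x:ℝ) : AddCircle (2*π))) 2
        (volume.restrict (Set.Ioc 0 (0 + 2*π)))
        = eLpNorm f 2 (volume.restrict (Set.Ioc 0 (0 + 2*π))) := eLpNorm_congr_ae hcoe
    rw [show (g ∘ ((↑·) : ℝ → AddCircle (2*π))) = fun x : ℝ => g ((x:ℝ) : AddCircle (2*π)) from rfl,
      heq, zero_add]
    exact hf.2
  have hhaar : (haarAddCircle : Measure (AddCircle (2*π)))
      = (ENNReal.ofReal (2*π))⁻¹ • (volume : Measure (AddCircle (2*π))) := by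
    rw [AddCircle.volume_eq_smul_haarAddCircle, smul_smul, ENNReal.inv_mul_cancel, one_smul]
    · exact ne_of_gt (ENNReal.ofReal_pos.mpr two_pi_pos')
    · exact ENNReal.ofReal_ne_top
  have hgh : MemLp g 2 (haarAddCircle : Measure (AddCircle (2*π))) := by
    rw [hhaar]
    exact hg2.smul_measure (ENNReal.inv_ne_top.mpr (ne_of_gt (ENNReal.ofReal_pos.mpr two_pi_pos')))
  set L := hgh.toLp g with hL
  have hLcoeff : ∀ n : ℤ, fourierCoeff (L : AddCircle (2*π) → ℂ) n = fourierCoeff g n := by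
    intro n
    simp only [fourierCoeff]
    apply MeasureTheory.integral_congr_ae
    filter_upwards [hgh.coeFn_toLp] with t ht
    rw [ht]
  have hpars := tsum_sq_fourierCoeff L
  have hsummable : Summable (fun n : ℤ => ‖fourierCoeff g n‖^2) := by
    have h1 : Memℓp (⇑(fourierBasis.repr L)) 2 := lp.memℓp _
    have h2 := (memℓp_gen_iff (p := 2) (by norm_num)).mp h1
    have h3 : (fun n : ℤ => ‖(fourierBasis.repr L) n‖ ^ (2:ENNReal).toReal)
        = fun n : ℤ => ‖fourierCoeff g n‖^2 := by
      funext n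
      rw [fourierBasis_repr, hLcoeff]
      norm_num
    rwa [h3] at h2
  refine ⟨hsummable, ?_⟩
  have hLHS : ∑' n : ℤ, ‖fourierCoeff g n‖^2
      = ∫ t : AddCircle (2*π), ‖L t‖ ^ 2 ∂haarAddCircle := by
    rw [← hpars]; congr 1; funext n; rw [hLcoeff]
  rw [hLHS]
  have : ∫ t : AddCircle (2*π), ‖L t‖ ^ 2 ∂haarAddCircle
      = ∫ t : AddCircle (2*π), ‖g t‖ ^ 2 ∂haarAddCircle := by
    apply MeasureTheory.integral_congr_ae
    filter_upwards [hgh.coeFn_toLp] with t ht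
    rw [ht]
  rw [this, hhaar, MeasureTheory.integral_smul_measure]
  rw [← AddCircle.integral_preimage (2*π) 0 (fun t => ‖g t‖^2)]
  have : ∫ x in Set.Ioc (0:ℝ) (0 + 2*π), ‖g ((x:ℝ) : AddCircle (2*π))‖^2 = ∫ θ in Set.Ioc (0:ℝ) (2*π), ‖f θ‖^2 := by
    rw [zero_add]
    apply MeasureTheory.integral_congr_ae
    filter_upwards [ae_restrict_mem measurableSet_Ioc] with x hx
    rw [hg, AddCircle.liftIoc_coe_apply (show x ∈ Set.Ioc (0:ℝ) (0 + 2*π) by rwa [zero_add])]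
  rw [this, smul_eq_mul]
  congr 1
  rw [ENNReal.toReal_inv, ENNReal.toReal_ofReal two_pi_pos'.le]
  norm_num

lemma conj_intervalIntegral (f : ℝ → ℂ) (a b : ℝ) (hf : IntervalIntegrable f volume a b) :
    (starRingEnd ℂ) (∫ θ in a..b, f θ) = ∫ θ in a..b, (starRingEnd ℂ) (f θ) := by
  have := (Complex.conjCLE.toContinuousLinearMap.intervalIntegral_comp_comm hf)
  simpa using this.symm

lemma re_intervalIntegral (f : ℝ → ℂ) (a b : ℝ) (hf : IntervalIntegrable f volume a b) :
    (∫ θ in a..b, f θ).re = ∫ θ in a..b, (f θ).re := by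
  have := (Complex.reCLM.intervalIntegral_comp_comm hf)
  simpa using this.symm

lemma im_intervalIntegral (f : ℝ → ℂ) (a b : ℝ) (hf : IntervalIntegrable f volume a b) :
    (∫ θ in a..b, f θ).im = ∫ θ in a..b, (f θ).im := by
  have := (Complex.imCLM.intervalIntegral_comp_comm hf)
  simpa using this.symm

set_option maxHeartbeats 1000000 in

/-- Completeness of the family `{φ₀, φ_k¹, φ_k² : k ≥ 1}` restricted to small circles:
for `ρ` small, any `ψ ∈ L²(0,2π)` that is orthogonal to all the functions
`θ ↦ φ₀(ρe^{iθ})`, `θ ↦ φ_k¹(ρe^{iθ})`, `θ ↦ φ_k²(ρe^{iθ})` vanishes a.e.;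
equivalently, their span is dense in `L²(0,2π)`. -/
theorem circle_restrictions_complete (c : ℂ) (N : ℕ)
    (φ₀ : ℂ → ℝ)
    (hφ₀ : ∀ z : ℂ, φ₀ z = (1 - 2 * z ^ (N + 1) * (starRingEnd ℂ) (z ^ (N + 1) - c) /
      (((1 + ‖z ^ (N + 1) - c‖ ^ 2 : ℝ)) : ℂ)).re)
    (φ : ℕ → ℂ → ℂ)
    (hφ : ∀ (j : ℕ) (z : ℂ), φ j z = z ^ j * (((N : ℂ) + 1 + j) / ((N : ℂ) + 1) -
      2 * z ^ (N + 1) * (starRingEnd ℂ) (z ^ (N + 1) - c) /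
        (((1 + ‖z ^ (N + 1) - c‖ ^ 2 : ℝ)) : ℂ)))
    (φ1 φ2 : ℕ → ℂ → ℝ)
    (hφ1 : ∀ (j : ℕ) (z : ℂ), φ1 j z = (((N : ℝ) + 1) / ((N : ℝ) + 1 + j)) * (φ j z).re)
    (hφ2 : ∀ (j : ℕ) (z : ℂ), φ2 j z = (((N : ℝ) + 1) / ((N : ℝ) + 1 + j)) * (φ j z).im) :
    ∃ ρ₀ > (0 : ℝ), ∀ ρ : ℝ, 0 < ρ → ρ < ρ₀ →
      ∀ ψ : ℝ → ℝ,
        MemLp ψ 2 (volume.restrict (Set.Ioo (0 : ℝ) (2 * Real.pi))) →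
        (∫ θ in (0 : ℝ)..(2 * Real.pi),
            ψ θ * φ₀ ((ρ : ℂ) * Complex.exp (Complex.I * θ))) = 0 →
        (∀ k : ℕ, 1 ≤ k →
          (∫ θ in (0 : ℝ)..(2 * Real.pi),
              ψ θ * φ1 k ((ρ : ℂ) * Complex.exp (Complex.I * θ))) = 0 ∧
          (∫ θ in (0 : ℝ)..(2 * Real.pi),
              ψ θ * φ2 k ((ρ : ℂ) * Complex.exp (Complex.I * θ))) = 0) →
        ∀ᵐ θ ∂(volume.restrict (Set.Ioo (0 : ℝ) (2 * Real.pi))), ψ θ = 0 := by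
  haveI : Fact ((0:ℝ) < 2 * Real.pi) := ⟨two_pi_pos'⟩
  refine ⟨1/2, by norm_num, ?_⟩
  intro ρ hρ hρ2 ψ hψ h0 hk
  have h2π : (0:ℝ) < 2*π := two_pi_pos'
  have hIoo : volume.restrict (Set.Ioo (0:ℝ) (2*Real.pi))
      = volume.restrict (Set.Ioc (0:ℝ) (2*Real.pi)) :=
    Measure.restrict_congr_set Ioo_ae_eq_Ioc
  rw [hIoo] at hψ ⊢
  obtain ⟨ψ', hψ'sm, hψae⟩ := hψ.aestronglyMeasurable
  have hψ'meas : Measurable ψ' := hψ'sm.measurable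
  have hψ'L2 : MemLp ψ' 2 (volume.restrict (Set.Ioc (0:ℝ) (2*π))) := hψ.ae_eq hψae
  haveI hfin : IsFiniteMeasure (volume.restrict (Set.Ioc (0:ℝ) (2*π))) :=
    ⟨by rw [Measure.restrict_apply_univ]; exact measure_Ioc_lt_top⟩
  have hψ'int : Integrable ψ' (volume.restrict (Set.Ioc (0:ℝ) (2*π))) :=
    hψ'L2.integrable one_le_two
  have hae' : ∀ᵐ θ ∂(volume : Measure ℝ), θ ∈ Set.Ioc (0:ℝ) (2*π) → ψ θ = ψ' θ :=
    (ae_restrict_iff' measurableSet_Ioc).mp hψae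
  have hcongr : ∀ X : ℝ → ℝ, (∫ θ in (0:ℝ)..(2*π), ψ θ * X θ)
      = ∫ θ in (0:ℝ)..(2*π), ψ' θ * X θ := by
    intro X
    apply intervalIntegral.integral_congr_ae
    filter_upwards [hae'] with θ hθ hmem
    rw [Set.uIoc_of_le h2π.le] at hmem
    rw [hθ hmem]
  -- basic objects
  set z : ℝ → ℂ := fun θ => (ρ : ℂ) * Complex.exp (Complex.I * θ) with hzdef
  set G : ℝ → ℂ := fun θ => 2 * (z θ) ^ (N + 1) * (starRingEnd ℂ) ((z θ) ^ (N + 1) - c) /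
      (((1 + ‖(z θ) ^ (N + 1) - c‖ ^ 2 : ℝ)) : ℂ) with hGdef
  have hzc : Continuous z := by
    exact continuous_const.mul (Complex.continuous_exp.comp
      (continuous_const.mul Complex.continuous_ofReal))
  have hzabs : ∀ θ : ℝ, ‖z θ‖ = ρ := by
    intro θ
    rw [hzdef]
    simp [Complex.norm_exp, Complex.norm_real, abs_of_pos hρ]
  have hGb : ∀ θ : ℝ, ‖G θ‖ ≤ 1/2 := by
    intro θ
    have habs : ‖(z θ) ^ (N+1)‖ = ρ^(N+1) := by rw [norm_pow, hzabs]
    set t := ‖(z θ) ^ (N + 1) - c‖ with ht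
    have ht0 : 0 ≤ t := norm_nonneg _
    have hval : ‖G θ‖ = 2 * ρ^(N+1) * t / (1 + t^2) := by
      rw [hGdef]
      simp only [norm_div, norm_mul, Complex.norm_two, Complex.norm_conj, Complex.norm_real, Real.norm_eq_abs]
      rw [habs, ← ht, abs_of_pos (by positivity)]
    rw [hval]
    have hρ1 : ρ^(N+1) ≤ ρ := by
      calc ρ^(N+1) ≤ ρ^1 := pow_le_pow_of_le_one hρ.le (by linarith) (by omega)
        _ = ρ := pow_one ρ
    rw [div_le_iff₀ (by positivity)]
    nlinarith [sq_nonneg (1 - t), sq_nonneg t]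
  have hGcont : Continuous G := by
    rw [hGdef]
    apply Continuous.div
    · exact (continuous_const.mul (hzc.pow (N+1))).mul
        (continuous_star.comp ((hzc.pow (N+1)).sub continuous_const))
    · exact Complex.continuous_ofReal.comp (continuous_const.add
        ((continuous_norm.comp ((hzc.pow (N+1)).sub continuous_const)).pow 2))
    · intro θ
      rw [Ne, Complex.ofReal_eq_zero]
      positivity
  have hGmeas : Measurable G := hGcont.measurable
  -- pointwise formulas
  set A : ℕ → ℂ := fun k => ((N : ℂ) + 1 + k) / ((N : ℂ) + 1) with hAdef
  have hφz : ∀ (k : ℕ) (θ : ℝ), φ k (z θ) = (z θ)^k * (A k - G θ) := by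
    intro k θ; rw [hφ]
  have hφ₀z : ∀ θ : ℝ, φ₀ (z θ) = 1 - (G θ).re := by
    intro θ; rw [hφ₀, Complex.sub_re, Complex.one_re]
  have hAre : ∀ k : ℕ, A k = ((((N:ℝ)+1+k) / ((N:ℝ)+1) : ℝ) : ℂ) := by
    intro k; rw [hAdef]; push_cast; ring
  have hAnorm : ∀ k : ℕ, (1:ℝ) ≤ ‖A k‖ := by
    intro k
    rw [hAre, Complex.norm_real, Real.norm_eq_abs, abs_of_pos (by positivity)]
    rw [le_div_iff₀ (by positivity)]
    norm_num
  set E : ℕ → ℝ → ℂ := fun k θ => Complex.exp (Complex.I * k * θ) with hEdef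
  have hzk : ∀ (k : ℕ) (θ : ℝ), (z θ)^k = (ρ:ℂ)^k * E k θ := by
    intro k θ
    rw [hzdef, hEdef]
    simp only [mul_pow]
    congr 1
    rw [← Complex.exp_nat_mul]
    congr 1
    ring
  have hEnorm : ∀ (k : ℕ) (θ : ℝ), ‖E k θ‖ = 1 := by
    intro k θ
    rw [hEdef, Complex.norm_exp]
    simp [Complex.mul_re]
  -- the three functions
  set Ψ : ℝ → ℂ := fun θ => ((ψ' θ : ℝ) : ℂ) with hΨdef
  set F : ℝ → ℂ := fun θ => Ψ θ * G θ with hFdef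
  set F' : ℝ → ℂ := fun θ => Ψ θ * (starRingEnd ℂ) (G θ) with hF'def
  have hΨmeas : Measurable Ψ := Complex.measurable_ofReal.comp hψ'meas
  have hFmeas : Measurable F := hΨmeas.mul hGmeas
  have hF'meas : Measurable F' := hΨmeas.mul ((continuous_star.measurable).comp hGmeas)
  have hΨnorm : ∀ θ, ‖Ψ θ‖ = |ψ' θ| := fun θ => by
    rw [hΨdef]; exact Complex.norm_real _
  have hΨ2 : MemLp Ψ 2 (volume.restrict (Set.Ioc (0:ℝ) (2*π))) :=
    hψ'L2.of_le hΨmeas.aestronglyMeasurable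
      (Filter.Eventually.of_forall fun θ => by rw [hΨnorm]; exact le_of_eq rfl)
  have hF2 : MemLp F 2 (volume.restrict (Set.Ioc (0:ℝ) (2*π))) := by
    apply hψ'L2.of_le hFmeas.aestronglyMeasurable
    apply Filter.Eventually.of_forall
    intro θ
    rw [hFdef]
    calc ‖Ψ θ * G θ‖ = ‖Ψ θ‖ * ‖G θ‖ := norm_mul _ _
      _ ≤ ‖Ψ θ‖ * 1 := by
          apply mul_le_mul_of_nonneg_left _ (norm_nonneg _)
          linarith [hGb θ]
      _ = |ψ' θ| := by rw [mul_one, hΨnorm]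
      _ = ‖ψ' θ‖ := rfl
  have hF'2 : MemLp F' 2 (volume.restrict (Set.Ioc (0:ℝ) (2*π))) := by
    apply hψ'L2.of_le hF'meas.aestronglyMeasurable
    apply Filter.Eventually.of_forall
    intro θ
    rw [hF'def]
    calc ‖Ψ θ * (starRingEnd ℂ) (G θ)‖ = ‖Ψ θ‖ * ‖G θ‖ := by
          rw [norm_mul, RCLike.norm_conj]
      _ ≤ ‖Ψ θ‖ * 1 := by
          apply mul_le_mul_of_nonneg_left _ (norm_nonneg _)
          linarith [hGb θ]
      _ = ‖ψ' θ‖ := by rw [mul_one, hΨnorm]; rfl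
  -- integrability builder
  have hIntH : ∀ h : ℝ → ℂ, Continuous h → (∃ C, ∀ θ, ‖h θ‖ ≤ C) →
      IntervalIntegrable (fun θ => h θ * Ψ θ) volume 0 (2*π) := by
    intro h hc hC
    rw [intervalIntegrable_iff_integrableOn_Ioc_of_le h2π.le]
    exact (hψ'int.ofReal).bdd_mul hc.aestronglyMeasurable.restrict (Filter.Eventually.of_forall hC.choose_spec)
  have hIntHR : ∀ h : ℝ → ℝ, Continuous h → (∃ C, ∀ θ, ‖h θ‖ ≤ C) →
      IntervalIntegrable (fun θ => ψ' θ * h θ) volume 0 (2*π) := by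
    intro h hc hC
    rw [intervalIntegrable_iff_integrableOn_Ioc_of_le h2π.le]
    have := hψ'int.bdd_mul hc.aestronglyMeasurable.restrict (Filter.Eventually.of_forall hC.choose_spec)
    exact this.congr (Filter.Eventually.of_forall fun θ => mul_comm _ _)
  have hEcont : ∀ k : ℕ, Continuous (E k) := by
    intro k
    rw [hEdef]
    exact Complex.continuous_exp.comp (continuous_const.mul Complex.continuous_ofReal)
  have hIa : ∀ k : ℕ, IntervalIntegrable (fun θ => E k θ * Ψ θ) volume 0 (2*π) := by
    intro k
    exact hIntH (E k) (hEcont k) ⟨1, fun θ => le_of_eq (hEnorm k θ)⟩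
  have hIb : ∀ k : ℕ, IntervalIntegrable (fun θ => E k θ * F θ) volume 0 (2*π) := by
    intro k
    have := hIntH (fun θ => E k θ * G θ) ((hEcont k).mul hGcont)
      ⟨1/2, fun θ => by
        rw [norm_mul, hEnorm, one_mul]; exact hGb θ⟩
    have heq : (fun θ => E k θ * F θ) = fun θ => (E k θ * G θ) * Ψ θ := by
      funext θ; simp only [hFdef]; ring
    rw [heq]; exact this
  -- integral of ψ'·Re φ and ψ'·Im φ vanish, hence complex integral vanishes
  have hmain : ∀ k : ℕ, 1 ≤ k →
      (A k) * (∫ θ in (0:ℝ)..(2*π), E k θ * Ψ θ) = ∫ θ in (0:ℝ)..(2*π), E k θ * F θ := by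
    intro k hk1
    obtain ⟨hI1, hI2⟩ := hk k hk1
    have hI1' : (∫ θ in (0:ℝ)..(2*π), ψ' θ * φ1 k (z θ)) = 0 := (hcongr _).symm.trans hI1
    have hI2' : (∫ θ in (0:ℝ)..(2*π), ψ' θ * φ2 k (z θ)) = 0 := (hcongr _).symm.trans hI2
    have hcr : (((N:ℝ)+1) / ((N:ℝ)+1+k)) ≠ 0 := by positivity
    have hre : (∫ θ in (0:ℝ)..(2*π), ψ' θ * (φ k (z θ)).re) = 0 := by
      have e1 : ∀ θ : ℝ, ψ' θ * φ1 k (z θ)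
          = (((N:ℝ)+1) / ((N:ℝ)+1+k)) * (ψ' θ * (φ k (z θ)).re) := by
        intro θ; rw [hφ1]; ring
      rw [intervalIntegral.integral_congr (fun θ _ => e1 θ),
        intervalIntegral.integral_const_mul] at hI1'
      exact (mul_eq_zero.mp hI1').resolve_left hcr
    have him : (∫ θ in (0:ℝ)..(2*π), ψ' θ * (φ k (z θ)).im) = 0 := by
      have e2 : ∀ θ : ℝ, ψ' θ * φ2 k (z θ)
          = (((N:ℝ)+1) / ((N:ℝ)+1+k)) * (ψ' θ * (φ k (z θ)).im) := by
        intro θ; rw [hφ2]; ring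
      rw [intervalIntegral.integral_congr (fun θ _ => e2 θ),
        intervalIntegral.integral_const_mul] at hI2'
      exact (mul_eq_zero.mp hI2').resolve_left hcr
    have hWi : IntervalIntegrable (fun θ => (fun t => φ k (z t)) θ * Ψ θ) volume 0 (2*π) := by
      apply hIntH
      · have : (fun t => φ k (z t)) = fun t => (z t)^k * (A k - G t) := funext (hφz k)
        rw [this]
        exact (hzc.pow k).mul (continuous_const.sub hGcont)
      · refine ⟨ρ^k * (‖A k‖ + 1/2), fun θ => ?_⟩
        rw [hφz, norm_mul]
        have h1 : ‖(z θ)^k‖ = ρ^k := by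
          rw [norm_pow, hzabs]
        rw [h1]
        apply mul_le_mul_of_nonneg_left _ (by positivity)
        calc ‖A k - G θ‖ ≤ ‖A k‖ + ‖G θ‖ := norm_sub_le _ _
          _ ≤ ‖A k‖ + 1/2 := by linarith [hGb θ]
    have hW : (∫ θ in (0:ℝ)..(2*π), φ k (z θ) * Ψ θ) = 0 := by
      apply Complex.ext
      · rw [re_intervalIntegral _ _ _ hWi]
        have : (fun θ => (φ k (z θ) * Ψ θ).re) = fun θ => ψ' θ * (φ k (z θ)).re := by
          funext θ
          rw [hΨdef, mul_comm, Complex.re_ofReal_mul]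
        rw [this, hre, Complex.zero_re]
      · rw [im_intervalIntegral _ _ _ hWi]
        have : (fun θ => (φ k (z θ) * Ψ θ).im) = fun θ => ψ' θ * (φ k (z θ)).im := by
          funext θ
          rw [hΨdef, mul_comm, Complex.im_ofReal_mul]
        rw [this, him, Complex.zero_im]
    have hWeq : (fun θ : ℝ => φ k (z θ) * Ψ θ)
        = fun θ => ((ρ:ℂ)^k) * ((A k) * (E k θ * Ψ θ) - E k θ * F θ) := by
      funext θ
      rw [hφz, hzk]
      simp only [hFdef]
      ring
    rw [hWeq, intervalIntegral.integral_const_mul] at hW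
    have hρk : ((ρ:ℂ))^k ≠ 0 := by
      apply pow_ne_zero
      simp only [Ne, Complex.ofReal_eq_zero]
      exact hρ.ne'
    have hsub := (mul_eq_zero.mp hW).resolve_left hρk
    rw [intervalIntegral.integral_sub ((hIa k).const_mul (A k)) (hIb k),
      intervalIntegral.integral_const_mul, sub_eq_zero] at hsub
    exact hsub
  -- the k = 0 identity
  have hmain0 : (∫ θ in (0:ℝ)..(2*π), Ψ θ)
      = ((((∫ θ in (0:ℝ)..(2*π), F θ).re : ℝ)) : ℂ) := by
    have h0' : (∫ θ in (0:ℝ)..(2*π), ψ' θ * φ₀ (z θ)) = 0 := (hcongr _).symm.trans h0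
    have e0 : ∀ θ : ℝ, ψ' θ * φ₀ (z θ) = ψ' θ - ψ' θ * (G θ).re := by
      intro θ; rw [hφ₀z]; ring
    rw [intervalIntegral.integral_congr (fun θ _ => e0 θ)] at h0'
    have hiψ : IntervalIntegrable ψ' volume 0 (2*π) :=
      (intervalIntegrable_iff_integrableOn_Ioc_of_le h2π.le).mpr hψ'int
    have hiG : IntervalIntegrable (fun θ => ψ' θ * (G θ).re) volume 0 (2*π) := by
      apply hIntHR
      · exact Complex.continuous_re.comp hGcont
      · refine ⟨1/2, fun θ => ?_⟩
        calc ‖(G θ).re‖ = |(G θ).re| := rfl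
          _ ≤ ‖G θ‖ := Complex.abs_re_le_norm _
          _ ≤ 1/2 := hGb θ
    rw [intervalIntegral.integral_sub hiψ hiG, sub_eq_zero] at h0'
    have hre : (∫ θ in (0:ℝ)..(2*π), F θ).re = ∫ θ in (0:ℝ)..(2*π), ψ' θ * (G θ).re := by
      have hiF : IntervalIntegrable F volume 0 (2*π) := by
        have h1 := hIntH G hGcont ⟨1/2, hGb⟩
        have heqF : F = fun θ => G θ * Ψ θ := by
          funext θ; simp only [hFdef]; ring
        rw [heqF]; exact h1
      rw [re_intervalIntegral _ _ _ hiF]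
      congr 1
      funext θ
      rw [hFdef, hΨdef, Complex.re_ofReal_mul]
    rw [hre, ← h0']
    rw [hΨdef, intervalIntegral.integral_ofReal]
  -- norm comparison of the basic integrals
  have hCD : ∀ k : ℕ, 1 ≤ k →
      ‖∫ θ in (0:ℝ)..(2*π), E k θ * Ψ θ‖ ≤ ‖∫ θ in (0:ℝ)..(2*π), E k θ * F θ‖ := by
    intro k hk1
    calc ‖∫ θ in (0:ℝ)..(2*π), E k θ * Ψ θ‖
        = 1 * ‖∫ θ in (0:ℝ)..(2*π), E k θ * Ψ θ‖ := (one_mul _).symm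
      _ ≤ ‖A k‖ * ‖∫ θ in (0:ℝ)..(2*π), E k θ * Ψ θ‖ :=
          mul_le_mul_of_nonneg_right (hAnorm k) (norm_nonneg _)
      _ = ‖(A k) * ∫ θ in (0:ℝ)..(2*π), E k θ * Ψ θ‖ := (norm_mul _ _).symm
      _ = ‖∫ θ in (0:ℝ)..(2*π), E k θ * F θ‖ := by rw [hmain k hk1]
  -- conjugation identities
  have hconjE : ∀ (k : ℕ) (θ : ℝ), (starRingEnd ℂ) (E k θ) = Complex.exp (-(Complex.I * k * θ)) := by
    intro k θ
    rw [hEdef, ← Complex.exp_conj]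
    congr 1
    simp [Complex.conj_ofReal]
  have hconjC : ∀ k : ℕ, (starRingEnd ℂ) (∫ θ in (0:ℝ)..(2*π), E k θ * Ψ θ)
      = ∫ θ in (0:ℝ)..(2*π), Complex.exp (-(Complex.I * k * θ)) * Ψ θ := by
    intro k
    rw [conj_intervalIntegral _ _ _ (hIa k)]
    apply intervalIntegral.integral_congr
    intro θ _
    simp only [map_mul, hconjE, hΨdef, Complex.conj_ofReal]
  have hconjD : ∀ k : ℕ, (starRingEnd ℂ) (∫ θ in (0:ℝ)..(2*π), E k θ * F θ)
      = ∫ θ in (0:ℝ)..(2*π), Complex.exp (-(Complex.I * k * θ)) * F' θ := by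
    intro k
    rw [conj_intervalIntegral _ _ _ (hIb k)]
    apply intervalIntegral.integral_congr
    intro θ _
    simp only [hFdef, hF'def, map_mul, hconjE, hΨdef, Complex.conj_ofReal]
  -- the key coefficient bound
  have key : ∀ n : ℤ,
      ‖fourierCoeff (AddCircle.liftIoc (2*π) 0 Ψ) n‖^2
        ≤ ‖fourierCoeff (AddCircle.liftIoc (2*π) 0 F) n‖^2
          + ‖fourierCoeff (AddCircle.liftIoc (2*π) 0 F') n‖^2 := by
    intro n
    have hpos : (0:ℝ) < 1/(2*π) := by positivity
    rcases lt_trichotomy n 0 with hn | hn | hn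
    · -- n < 0 : compare with F
      set k : ℕ := n.natAbs with hkdef
      have hk1 : 1 ≤ k := Int.natAbs_pos.mpr hn.ne
      have hnk : ((n:ℤ):ℂ) = -((k:ℕ):ℂ) := by
        have h' : (n:ℤ) = -((k:ℕ):ℤ) := by omega
        rw [h']
        push_cast
        ring
      have hexp : ∀ θ : ℝ, Complex.exp (-Complex.I*(n:ℂ)*θ) = E k θ := by
        intro θ
        rw [hEdef]
        congr 1
        rw [hnk]
        ring
      have e1 : fourierCoeff (AddCircle.liftIoc (2*π) 0 Ψ) n
          = (1/(2*π) : ℝ) • ∫ θ in (0:ℝ)..(2*π), E k θ * Ψ θ := by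
        rw [coeff_eq]
        congr 1
        apply intervalIntegral.integral_congr
        intro θ _
        simp only [hexp]
      have e2 : fourierCoeff (AddCircle.liftIoc (2*π) 0 F) n
          = (1/(2*π) : ℝ) • ∫ θ in (0:ℝ)..(2*π), E k θ * F θ := by
        rw [coeff_eq]
        congr 1
        apply intervalIntegral.integral_congr
        intro θ _
        simp only [hexp]
      have hle : ‖fourierCoeff (AddCircle.liftIoc (2*π) 0 Ψ) n‖
          ≤ ‖fourierCoeff (AddCircle.liftIoc (2*π) 0 F) n‖ := by
        rw [e1, e2, norm_smul, norm_smul]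
        exact mul_le_mul_of_nonneg_left (hCD k hk1) (norm_nonneg _)
      nlinarith [norm_nonneg (fourierCoeff (AddCircle.liftIoc (2*π) 0 Ψ) n),
        norm_nonneg (fourierCoeff (AddCircle.liftIoc (2*π) 0 F) n),
        norm_nonneg (fourierCoeff (AddCircle.liftIoc (2*π) 0 F') n),
        sq_nonneg (‖fourierCoeff (AddCircle.liftIoc (2*π) 0 F') n‖)]
    · -- n = 0 : compare with F via real parts
      subst hn
      have hexp : ∀ θ : ℝ, Complex.exp (-Complex.I*((0:ℤ):ℂ)*θ) = 1 := by
        intro θ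
        norm_num
      have e1 : fourierCoeff (AddCircle.liftIoc (2*π) 0 Ψ) 0
          = (1/(2*π) : ℝ) • ∫ θ in (0:ℝ)..(2*π), Ψ θ := by
        rw [coeff_eq]
        congr 1
        apply intervalIntegral.integral_congr
        intro θ _
        simp only [hexp, one_mul]
      have e2 : fourierCoeff (AddCircle.liftIoc (2*π) 0 F) 0
          = (1/(2*π) : ℝ) • ∫ θ in (0:ℝ)..(2*π), F θ := by
        rw [coeff_eq]
        congr 1
        apply intervalIntegral.integral_congr
        intro θ _
        simp only [hexp, one_mul]
      have hle : ‖fourierCoeff (AddCircle.liftIoc (2*π) 0 Ψ) 0‖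
          ≤ ‖fourierCoeff (AddCircle.liftIoc (2*π) 0 F) 0‖ := by
        rw [e1, e2, norm_smul, norm_smul]
        apply mul_le_mul_of_nonneg_left _ (norm_nonneg _)
        rw [hmain0]
        calc ‖((((∫ θ in (0:ℝ)..(2*π), F θ).re : ℝ)) : ℂ)‖
            = |(∫ θ in (0:ℝ)..(2*π), F θ).re| := Complex.norm_real _
          _ ≤ ‖∫ θ in (0:ℝ)..(2*π), F θ‖ := Complex.abs_re_le_norm _
          _ = ‖∫ θ in (0:ℝ)..(2*π), F θ‖ := rfl
      nlinarith [norm_nonneg (fourierCoeff (AddCircle.liftIoc (2*π) 0 Ψ) 0),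
        norm_nonneg (fourierCoeff (AddCircle.liftIoc (2*π) 0 F) 0),
        norm_nonneg (fourierCoeff (AddCircle.liftIoc (2*π) 0 F') 0),
        sq_nonneg (‖fourierCoeff (AddCircle.liftIoc (2*π) 0 F') 0‖)]
    · -- n > 0 : compare with F'
      set k : ℕ := n.toNat with hkdef
      have hk1 : 1 ≤ k := by omega
      have hnk : ((n:ℤ):ℂ) = ((k:ℕ):ℂ) := by
        have h' : (n:ℤ) = ((k:ℕ):ℤ) := by omega
        rw [h']
        push_cast
        ring
      have hexp : ∀ θ : ℝ, Complex.exp (-Complex.I*(n:ℂ)*θ)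
          = Complex.exp (-(Complex.I * k * θ)) := by
        intro θ
        congr 1
        rw [hnk]
        ring
      have e1 : fourierCoeff (AddCircle.liftIoc (2*π) 0 Ψ) n
          = (1/(2*π) : ℝ) • (starRingEnd ℂ) (∫ θ in (0:ℝ)..(2*π), E k θ * Ψ θ) := by
        rw [coeff_eq, hconjC]
        congr 1
        apply intervalIntegral.integral_congr
        intro θ _
        simp only [hexp]
      have e2 : fourierCoeff (AddCircle.liftIoc (2*π) 0 F') n
          = (1/(2*π) : ℝ) • (starRingEnd ℂ) (∫ θ in (0:ℝ)..(2*π), E k θ * F θ) := by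
        rw [coeff_eq, hconjD]
        congr 1
        apply intervalIntegral.integral_congr
        intro θ _
        simp only [hexp]
      have hle : ‖fourierCoeff (AddCircle.liftIoc (2*π) 0 Ψ) n‖
          ≤ ‖fourierCoeff (AddCircle.liftIoc (2*π) 0 F') n‖ := by
        rw [e1, e2, norm_smul, norm_smul, RCLike.norm_conj, RCLike.norm_conj]
        exact mul_le_mul_of_nonneg_left (hCD k hk1) (norm_nonneg _)
      nlinarith [norm_nonneg (fourierCoeff (AddCircle.liftIoc (2*π) 0 Ψ) n),
        norm_nonneg (fourierCoeff (AddCircle.liftIoc (2*π) 0 F) n),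
        norm_nonneg (fourierCoeff (AddCircle.liftIoc (2*π) 0 F') n),
        sq_nonneg (‖fourierCoeff (AddCircle.liftIoc (2*π) 0 F) n‖)]
  -- Parseval and conclusion
  obtain ⟨sumΨ, parsΨ⟩ := parseval_2pi Ψ hΨmeas hΨ2
  obtain ⟨sumF, parsF⟩ := parseval_2pi F hFmeas hF2
  obtain ⟨sumF', parsF'⟩ := parseval_2pi F' hF'meas hF'2
  have htsum : ∑' n : ℤ, ‖fourierCoeff (AddCircle.liftIoc (2*π) 0 Ψ) n‖^2
      ≤ ∑' n : ℤ, (‖fourierCoeff (AddCircle.liftIoc (2*π) 0 F) n‖^2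
        + ‖fourierCoeff (AddCircle.liftIoc (2*π) 0 F') n‖^2) :=
    Summable.tsum_le_tsum key sumΨ (sumF.add sumF')
  rw [sumF.tsum_add sumF', parsΨ, parsF, parsF'] at htsum
  -- compare the three integrals
  have hΨsq : (∫ θ in Set.Ioc (0:ℝ) (2*π), ‖Ψ θ‖^2) = ∫ θ in Set.Ioc (0:ℝ) (2*π), (ψ' θ)^2 := by
    apply MeasureTheory.integral_congr_ae
    apply Filter.Eventually.of_forall
    intro θ
    simp only [hΨnorm, _root_.sq_abs]
  have hsqint : Integrable (fun θ => (ψ' θ)^2) (volume.restrict (Set.Ioc (0:ℝ) (2*π))) :=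
    hψ'L2.integrable_sq
  have hFsq : (∫ θ in Set.Ioc (0:ℝ) (2*π), ‖F θ‖^2)
      ≤ (1/4) * ∫ θ in Set.Ioc (0:ℝ) (2*π), (ψ' θ)^2 := by
    rw [← MeasureTheory.integral_const_mul]
    apply MeasureTheory.integral_mono_ae
    · exact (memLp_two_iff_integrable_sq_norm hFmeas.aestronglyMeasurable.restrict).mp hF2
    · exact hsqint.const_mul _
    · apply Filter.Eventually.of_forall
      intro θ
      have h1 : ‖F θ‖ ≤ (1/2) * |ψ' θ| := by
        rw [hFdef]
        calc ‖Ψ θ * G θ‖ = ‖Ψ θ‖ * ‖G θ‖ := norm_mul _ _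
          _ ≤ ‖Ψ θ‖ * (1/2) := mul_le_mul_of_nonneg_left (hGb θ) (norm_nonneg _)
          _ = (1/2) * |ψ' θ| := by rw [hΨnorm]; ring
      have h2 : (0:ℝ) ≤ ‖F θ‖ := norm_nonneg _
      nlinarith [_root_.sq_abs (ψ' θ), abs_nonneg (ψ' θ)]
  have hF'sq : (∫ θ in Set.Ioc (0:ℝ) (2*π), ‖F' θ‖^2)
      ≤ (1/4) * ∫ θ in Set.Ioc (0:ℝ) (2*π), (ψ' θ)^2 := by
    rw [← MeasureTheory.integral_const_mul]
    apply MeasureTheory.integral_mono_ae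
    · exact (memLp_two_iff_integrable_sq_norm hF'meas.aestronglyMeasurable.restrict).mp hF'2
    · exact hsqint.const_mul _
    · apply Filter.Eventually.of_forall
      intro θ
      have h1 : ‖F' θ‖ ≤ (1/2) * |ψ' θ| := by
        rw [hF'def]
        calc ‖Ψ θ * (starRingEnd ℂ) (G θ)‖ = ‖Ψ θ‖ * ‖G θ‖ := by
              rw [norm_mul, RCLike.norm_conj]
          _ ≤ ‖Ψ θ‖ * (1/2) := mul_le_mul_of_nonneg_left (hGb θ) (norm_nonneg _)
          _ = (1/2) * |ψ' θ| := by rw [hΨnorm]; ring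
      have h2 : (0:ℝ) ≤ ‖F' θ‖ := norm_nonneg _
      nlinarith [_root_.sq_abs (ψ' θ), abs_nonneg (ψ' θ)]
  rw [hΨsq] at htsum
  set Iψ : ℝ := ∫ θ in Set.Ioc (0:ℝ) (2*π), (ψ' θ)^2 with hIψdef
  have hIψ0 : 0 ≤ Iψ := by
    rw [hIψdef]
    apply MeasureTheory.integral_nonneg
    intro θ
    positivity
  have hineq : (1/(2*π)) * Iψ ≤ (1/(2*π)) * ((1/4)*Iψ) + (1/(2*π)) * ((1/4)*Iψ) := by
    calc (1/(2*π)) * Iψ ≤ _ := htsum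
      _ ≤ (1/(2*π)) * ((1/4)*Iψ) + (1/(2*π)) * ((1/4)*Iψ) := by
          have hc : (0:ℝ) ≤ 1/(2*π) := by positivity
          gcongr
  have hIψzero : Iψ = 0 := by
    have hπ0 : (0:ℝ) < 1/(2*π) := by positivity
    nlinarith
  have hψ'zero : ∀ᵐ θ ∂(volume.restrict (Set.Ioc (0:ℝ) (2*π))), (ψ' θ)^2 = 0 := by
    have := (MeasureTheory.integral_eq_zero_iff_of_nonneg_ae
      (Filter.Eventually.of_forall (fun θ => by positivity)) hsqint).mp hIψzero
    filter_upwards [this] with θ hθ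
    exact hθ
  filter_upwards [hψ'zero, hψae] with θ h1 h2
  rw [h2]
  exact pow_eq_zero_iff (by norm_num) |>.mp h1
end

section
/- Let c ∈ ℂ, N ∈ ℕ, k ∈ ℕ, and φ_k(z) = z^k( (N+1+k)/(N+1) − 2 z^{N+1}\overline{(z^{N+1}−c)}/(1+|z^{N+1}−c|²) ). There exist constants C > 0 and R₀ > 0 such that for all z with |z| ≥ R₀, | φ_k(z) − ((k−N−1)/(N+1)) z^k | ≤ C |z|^{k−N−1}. -/
/-- Asymptotics of `φ_k` at infinity:
`φ_k(z) = ((k-N-1)/(N+1)) z^k + O(|z|^{k-N-1})` as `|z| → ∞`. -/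
theorem phi_k_asymptotics (c : ℂ) (N k : ℕ)
    (φ : ℂ → ℂ)
    (hφ : ∀ z : ℂ, φ z = z ^ k * (((N : ℂ) + 1 + k) / ((N : ℂ) + 1) -
      2 * z ^ (N + 1) * (starRingEnd ℂ) (z ^ (N + 1) - c) /
        (((1 + ‖z ^ (N + 1) - c‖ ^ 2 : ℝ)) : ℂ))) :
    ∃ C > (0 : ℝ), ∃ R₀ > (0 : ℝ), ∀ z : ℂ, R₀ ≤ ‖z‖ →
      ‖φ z - (((k : ℂ) - N - 1) / ((N : ℂ) + 1)) * z ^ k‖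
        ≤ C * ‖z‖ ^ ((k : ℤ) - N - 1) := by
  set A : ℝ := 1 + ‖c‖ + ‖c‖ ^ 2 with hA
  have hc0 : 0 ≤ ‖c‖ := norm_nonneg c
  refine ⟨8 * A, by positivity, 1 + 2 * ‖c‖, by positivity, ?_⟩
  intro z hz
  have hz1 : (1:ℝ) ≤ ‖z‖ := by linarith
  have hz0 : ‖z‖ ≠ 0 := by linarith
  set w : ℂ := z ^ (N + 1) with hwdef
  have hwab : ‖w‖ = ‖z‖ ^ (N + 1) := by
    rw [hwdef, norm_pow]
  have hw1 : (1:ℝ) ≤ ‖w‖ := by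
    rw [hwab]; exact one_le_pow₀ hz1
  have hw0 : (0:ℝ) < ‖w‖ := by linarith
  have hzw : ‖z‖ ≤ ‖w‖ := by
    rw [hwab]; exact le_self_pow₀ hz1 (by omega)
  have hw2c : 2 * ‖c‖ ≤ ‖w‖ := by linarith
  set D : ℝ := 1 + ‖w - c‖ ^ 2 with hD
  have hDpos : (0:ℝ) < D := by positivity
  have hD0 : ((D:ℝ):ℂ) ≠ 0 := by
    exact_mod_cast hDpos.ne'
  have hN0 : ((N:ℂ) + 1) ≠ 0 := by
    have := Nat.cast_add_one_ne_zero (R := ℂ) N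
    push_cast at this ⊢; exact this
  have hDm : ((D:ℝ):ℂ) = 1 + (w - c) * (starRingEnd ℂ) (w - c) := by
    rw [hD, Complex.mul_conj]
    push_cast [Complex.sq_norm]
    ring
  have hcm : ((‖c‖ ^ 2 : ℝ):ℂ) = c * (starRingEnd ℂ) c := by
    rw [Complex.mul_conj]; push_cast [Complex.sq_norm]; ring
  -- key algebraic identity
  have key : φ z - (((k : ℂ) - N - 1) / ((N : ℂ) + 1)) * z ^ k =
      2 * z ^ k * (1 + ((‖c‖ ^ 2 : ℝ):ℂ) - c * (starRingEnd ℂ) w) / ((D:ℝ):ℂ) := by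
    rw [hφ z, ← hwdef, ← hD, hcm]
    field_simp
    rw [hDm]
    simp only [map_sub]
    ring
  rw [key]
  have habs : ‖2 * z ^ k * (1 + ((‖c‖ ^ 2 : ℝ):ℂ) - c * (starRingEnd ℂ) w) / ((D:ℝ):ℂ)‖
      = 2 * ‖z‖ ^ k * ‖1 + ((‖c‖ ^ 2 : ℝ):ℂ) - c * (starRingEnd ℂ) w‖ / D := by
    rw [norm_div, norm_mul, norm_mul, norm_pow]
    simp [Complex.norm_real, Real.norm_eq_abs, abs_of_pos hDpos]
  rw [habs]
  -- numerator bound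
  have hnum : ‖1 + ((‖c‖ ^ 2 : ℝ):ℂ) - c * (starRingEnd ℂ) w‖ ≤ A * ‖w‖ := by
    calc ‖1 + ((‖c‖ ^ 2 : ℝ):ℂ) - c * (starRingEnd ℂ) w‖
        ≤ ‖1 + ((‖c‖ ^ 2 : ℝ):ℂ)‖ + ‖c * (starRingEnd ℂ) w‖ :=
          norm_sub_le _ _
      _ ≤ (1 + ‖c‖ ^ 2) + ‖c‖ * ‖w‖ := by
          rw [norm_mul, Complex.norm_conj]
          have : ‖1 + ((‖c‖ ^ 2 : ℝ):ℂ)‖ = 1 + ‖c‖ ^ 2 := by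
            rw [show (1 + ((‖c‖ ^ 2 : ℝ):ℂ)) = (((1 + ‖c‖ ^ 2 : ℝ)):ℂ) by push_cast; ring,
              Complex.norm_real, Real.norm_eq_abs, abs_of_pos (by positivity)]
          rw [this]
      _ ≤ A * ‖w‖ := by
          rw [hA]; nlinarith
  -- denominator bound
  have hden : ‖w‖ ^ 2 / 4 ≤ D := by
    have h1 : ‖w‖ ≤ ‖w - c‖ + ‖c‖ := by
      calc ‖w‖ = ‖(w - c) + c‖ := by ring_nf
        _ ≤ ‖w - c‖ + ‖c‖ := norm_add_le _ _
    have h2 : ‖w‖ / 2 ≤ ‖w - c‖ := by linarith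
    have h4 : (0:ℝ) ≤ ‖w - c‖ := norm_nonneg _
    rw [hD]; nlinarith
  -- rewrite RHS power
  have hzpow : ‖z‖ ^ ((k : ℤ) - N - 1) = ‖z‖ ^ k / ‖z‖ ^ (N + 1) := by
    have he : (k : ℤ) - N - 1 = (k : ℤ) - ((N + 1 : ℕ) : ℤ) := by push_cast; ring
    rw [he, zpow_sub₀ hz0, zpow_natCast, zpow_natCast]
  rw [hzpow, ← hwab]
  have hP : (0:ℝ) ≤ ‖z‖ ^ k := by positivity
  calc 2 * ‖z‖ ^ k * ‖1 + ((‖c‖ ^ 2 : ℝ):ℂ) - c * (starRingEnd ℂ) w‖ / D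
      ≤ 2 * ‖z‖ ^ k * (A * ‖w‖) / (‖w‖ ^ 2 / 4) := by
        apply div_le_div₀ (by positivity) ?_ (by positivity) hden
        have : 0 ≤ A := by rw [hA]; positivity
        nlinarith [hnum]
    _ = 8 * A * (‖z‖ ^ k / ‖w‖) := by
        field_simp
        ring
end

section
/- Let c ∈ ℂ, N ∈ ℕ, and for k ∈ ℕ set φ_k(z) = z^k( (N+1+k)/(N+1) − 2 z^{N+1}\overline{(z^{N+1}−c)}/(1+|z^{N+1}−c|²) ). Then φ_k is bounded on ℂ if and only if k = 0 or k = N+1. In particular, for every k ≥ 1 with k ≠ N+1 the function φ_k is unbounded on ℂ. -/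
open Complex

private lemma den_ne' (w : ℂ) : (((1 + ‖w‖ ^ 2 : ℝ)) : ℂ) ≠ 0 := by
  rw [Complex.ofReal_ne_zero]; positivity

private lemma den_eq' (w : ℂ) :
    (((1 + ‖w‖ ^ 2 : ℝ)) : ℂ) = 1 + w * (starRingEnd ℂ) w := by
  rw [Complex.sq_norm]; push_cast; rw [Complex.mul_conj]

private lemma key' (c : ℂ) (N k : ℕ) (z : ℂ) :
    z ^ k * (((N : ℂ) + 1 + k) / ((N : ℂ) + 1) -
      2 * z ^ (N + 1) * (starRingEnd ℂ) (z ^ (N + 1) - c) /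
        (((1 + ‖z ^ (N + 1) - c‖ ^ 2 : ℝ)) : ℂ)) =
    z ^ k * (((k : ℂ) - ((N : ℂ) + 1)) / ((N : ℂ) + 1) +
      2 * (1 - c * (starRingEnd ℂ) (z ^ (N + 1) - c)) /
        (((1 + ‖z ^ (N + 1) - c‖ ^ 2 : ℝ)) : ℂ)) := by
  have h1 : ((N : ℂ) + 1) ≠ 0 := by
    have : ((N + 1 : ℕ) : ℂ) ≠ 0 := Nat.cast_ne_zero.mpr (Nat.succ_ne_zero N)
    push_cast at this; exact this
  have hDe := den_eq' (z ^ (N + 1) - c)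
  have hD0 := den_ne' (z ^ (N + 1) - c)
  set u := (starRingEnd ℂ) (z ^ (N + 1) - c) with hu
  set D := (((1 + ‖z ^ (N + 1) - c‖ ^ 2 : ℝ)) : ℂ) with hDdef
  have hinv : ((N : ℂ) + 1) * ((N : ℂ) + 1)⁻¹ = 1 := mul_inv_cancel₀ h1
  have hDinv : D * D⁻¹ = 1 := mul_inv_cancel₀ hD0
  linear_combination (2 * z ^ k / D) * hDe + (2 * z ^ k) * hinv - (2 * z ^ k) * hDinv

private lemma bnd2' (c w : ℂ) :
    ‖2 * (1 - c * (starRingEnd ℂ) w) / (((1 + ‖w‖ ^ 2 : ℝ)) : ℂ)‖ ≤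
      2 * (1 + ‖c‖ * ‖w‖) / (1 + ‖w‖ ^ 2) := by
  rw [norm_div, norm_mul, Complex.norm_real, Real.norm_eq_abs, _root_.abs_of_nonneg (by positivity),
    Complex.norm_two]
  gcongr 2 * ?_ / _
  calc ‖1 - c * (starRingEnd ℂ) w‖
      ≤ ‖(1 : ℂ)‖ + ‖c * (starRingEnd ℂ) w‖ := by
        simpa [sub_eq_add_neg] using norm_add_le 1 (-(c * (starRingEnd ℂ) w))
    _ = 1 + ‖c‖ * ‖w‖ := by simp

/-- The function `φ_k` is bounded on `ℂ` if and only if `k = 0` or `k = N+1`;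
in particular, for every `k ≥ 1` with `k ≠ N+1`, `φ_k` is unbounded. -/
theorem phi_k_bounded_iff (c : ℂ) (N k : ℕ)
    (φ : ℂ → ℂ)
    (hφ : ∀ z : ℂ, φ z = z ^ k * (((N : ℂ) + 1 + k) / ((N : ℂ) + 1) -
      2 * z ^ (N + 1) * (starRingEnd ℂ) (z ^ (N + 1) - c) /
        (((1 + ‖z ^ (N + 1) - c‖ ^ 2 : ℝ)) : ℂ))) :
    ((∃ M : ℝ, ∀ z : ℂ, ‖φ z‖ ≤ M) ↔ (k = 0 ∨ k = N + 1)) ∧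
    (1 ≤ k → k ≠ N + 1 → ¬ ∃ M : ℝ, ∀ z : ℂ, ‖φ z‖ ≤ M) := by
  have hA : ∀ z : ℂ, φ z = z ^ k * (((k : ℂ) - ((N : ℂ) + 1)) / ((N : ℂ) + 1) +
      2 * (1 - c * (starRingEnd ℂ) (z ^ (N + 1) - c)) /
        (((1 + ‖z ^ (N + 1) - c‖ ^ 2 : ℝ)) : ℂ)) :=
    fun z => (hφ z).trans (key' c N k z)
  have ha0 : 0 ≤ ‖c‖ := norm_nonneg c
  set a := ‖c‖ with hadef
  -- Unboundedness
  have hun : 1 ≤ k → k ≠ N + 1 → ¬ ∃ M : ℝ, ∀ z : ℂ, ‖φ z‖ ≤ M := by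
    rintro hk1 hkN ⟨M, hM⟩
    set r : ℝ := max (max 1 (4 * ((N : ℝ) + 1) * (1 + a) + a)) (2 * ((N : ℝ) + 1) * (M + 1))
      with hrdef
    have hr1 : (1 : ℝ) ≤ r := le_trans (le_max_left _ _) (le_max_left _ _)
    have hr2 : 4 * ((N : ℝ) + 1) * (1 + a) + a ≤ r :=
      le_trans (le_max_right _ _) (le_max_left _ _)
    have hr3 : 2 * ((N : ℝ) + 1) * (M + 1) ≤ r := le_max_right _ _
    set z : ℂ := (r : ℂ) with hzdef
    have habsz : ‖z‖ = r := by
      rw [hzdef, Complex.norm_real, Real.norm_eq_abs, _root_.abs_of_nonneg (by linarith)]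
    set w := z ^ (N + 1) - c with hwdef
    set t := ‖w‖ with htdef
    have ht0 : 0 ≤ t := norm_nonneg w
    have hrn : r ≤ r ^ (N + 1) := le_self_pow₀ hr1 (Nat.succ_ne_zero N)
    have habszn : ‖z ^ (N + 1)‖ = r ^ (N + 1) := by
      rw [norm_pow, habsz]
    have htlow : 4 * ((N : ℝ) + 1) * (1 + a) ≤ t := by
      have h := norm_sub_norm_le (z ^ (N + 1)) c
      skip
      rw [habszn] at h
      have : r ^ (N + 1) - a ≤ t := h
      linarith
    have hNpos : (0 : ℝ) ≤ (N : ℝ) := Nat.cast_nonneg N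
    have ht1 : 1 ≤ t := by nlinarith
    have hb2 := bnd2' c w
    have hsmall : 2 * (1 + a * t) / (1 + t ^ 2) ≤ 1 / (2 * ((N : ℝ) + 1)) := by
      rw [div_le_div_iff₀ (by positivity) (by positivity)]
      nlinarith [mul_le_mul_of_nonneg_right htlow ht0]
    have hfirst : 1 / ((N : ℝ) + 1) ≤
        ‖((k : ℂ) - ((N : ℂ) + 1)) / ((N : ℂ) + 1)‖ := by
      have hnum : ((k : ℂ) - ((N : ℂ) + 1)) = (((k : ℤ) - ((N : ℤ) + 1) : ℤ) : ℂ) := by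
        push_cast; ring
      have hden : ((N : ℂ) + 1) = (((N + 1 : ℕ) : ℕ) : ℂ) := by push_cast; ring
      rw [norm_div, hnum, hden, Complex.norm_intCast, Complex.norm_natCast]
      have hne : ((k : ℤ) - ((N : ℤ) + 1)) ≠ 0 := by
        intro h
        apply hkN
        have : (k : ℤ) = (N : ℤ) + 1 := by linarith [sub_eq_zero.mp h]
        exact_mod_cast this
      have h1le : (1 : ℝ) ≤ |(((k : ℤ) - ((N : ℤ) + 1) : ℤ) : ℝ)| := by
        have := Int.one_le_abs hne
        exact_mod_cast this
      have : ((N + 1 : ℕ) : ℝ) = (N : ℝ) + 1 := by push_cast; ring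
      rw [this, div_le_div_iff₀ (by positivity) (by positivity)]
      nlinarith [h1le, hNpos]
    -- lower bound on the bracket
    set s := 2 * (1 - c * (starRingEnd ℂ) w) / (((1 + ‖w‖ ^ 2 : ℝ)) : ℂ) with hsdef
    have habss : ‖s‖ ≤ 1 / (2 * ((N : ℝ) + 1)) := le_trans hb2 hsmall
    have hbr : 1 / (2 * ((N : ℝ) + 1)) ≤
        ‖((k : ℂ) - ((N : ℂ) + 1)) / ((N : ℂ) + 1) + s‖ := by
      have h := norm_sub_norm_le (((k : ℂ) - ((N : ℂ) + 1)) / ((N : ℂ) + 1)) (-s)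
      simp only [sub_neg_eq_add, norm_neg] at h
      have h2n1 : (0 : ℝ) < (N : ℝ) + 1 := by positivity
      have : 1 / ((N : ℝ) + 1) - 1 / (2 * ((N : ℝ) + 1)) = 1 / (2 * ((N : ℝ) + 1)) := by
        field_simp; ring
      linarith
    have hφz := hA z
    have habsφ : ‖φ z‖ = r ^ k *
        ‖((k : ℂ) - ((N : ℂ) + 1)) / ((N : ℂ) + 1) + s‖ := by
      rw [hφz, norm_mul, norm_pow, habsz]
    have hrk : r ≤ r ^ k := le_self_pow₀ hr1 (by omega)
    have hMz := hM z
    rw [habsφ] at hMz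
    have hstep : r * (1 / (2 * ((N : ℝ) + 1))) ≤ r ^ k *
        ‖((k : ℂ) - ((N : ℂ) + 1)) / ((N : ℂ) + 1) + s‖ := by
      apply mul_le_mul hrk hbr (by positivity) (by positivity)
    have hfin : M + 1 ≤ r * (1 / (2 * ((N : ℝ) + 1))) := by
      rw [mul_one_div, le_div_iff₀ (by positivity)]
      nlinarith
    linarith
  refine ⟨⟨fun h => ?_, fun h => ?_⟩, hun⟩
  · by_contra hcon
    push_neg at hcon
    exact hun (Nat.one_le_iff_ne_zero.mpr hcon.1) hcon.2 h
  · rcases h with rfl | rfl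
    · -- k = 0
      refine ⟨3 + a, fun z => ?_⟩
      rw [hA z]
      set w := z ^ (N + 1) - c with hwdef
      set t := ‖w‖ with htdef
      have ht0 : 0 ≤ t := norm_nonneg w
      have hfz : (((0 : ℕ) : ℂ) - ((N : ℂ) + 1)) / ((N : ℂ) + 1) = -1 := by
        have h1 : ((N : ℂ) + 1) ≠ 0 := by
          have : ((N + 1 : ℕ) : ℂ) ≠ 0 := Nat.cast_ne_zero.mpr (Nat.succ_ne_zero N)
          push_cast at this; exact this
        rw [Nat.cast_zero, zero_sub, neg_div, div_self h1]
      rw [pow_zero, one_mul, hfz]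
      set s := 2 * (1 - c * (starRingEnd ℂ) w) / (((1 + ‖w‖ ^ 2 : ℝ)) : ℂ) with hsdef
      have hb2 := bnd2' c w
      have htri : ‖-1 + s‖ ≤ 1 + ‖s‖ := by
        calc ‖-1 + s‖ ≤ ‖-1‖ + ‖s‖ := norm_add_le _ _
          _ = 1 + ‖s‖ := by simp
      have : 2 * (1 + a * t) / (1 + t ^ 2) ≤ 2 + a := by
        rw [div_le_iff₀ (by positivity)]
        nlinarith [sq_nonneg (t - 1), mul_nonneg ha0 (sq_nonneg (t - 1))]
      linarith [le_trans hb2 this, htri]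
    · -- k = N + 1
      refine ⟨2 * (1 + a) ^ 2, fun z => ?_⟩
      rw [hA z]
      set w := z ^ (N + 1) - c with hwdef
      set t := ‖w‖ with htdef
      have ht0 : 0 ≤ t := norm_nonneg w
      have hfz : (((N + 1 : ℕ) : ℂ) - ((N : ℂ) + 1)) / ((N : ℂ) + 1) = 0 := by
        have : (((N + 1 : ℕ) : ℂ) - ((N : ℂ) + 1)) = 0 := by push_cast; ring
        rw [this, zero_div]
      rw [hfz, zero_add, norm_mul]
      set s := 2 * (1 - c * (starRingEnd ℂ) w) / (((1 + ‖w‖ ^ 2 : ℝ)) : ℂ) with hsdef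
      have hb2 := bnd2' c w
      have hzn : ‖z ^ (N + 1)‖ ≤ t + a := by
        have : z ^ (N + 1) = w + c := by rw [hwdef]; ring
        rw [this]
        calc ‖w + c‖ ≤ ‖w‖ + ‖c‖ := norm_add_le _ _
          _ = t + a := rfl
      have hs0 : 0 ≤ ‖s‖ := norm_nonneg s
      calc ‖z ^ (N + 1)‖ * ‖s‖
          ≤ (t + a) * (2 * (1 + a * t) / (1 + t ^ 2)) := by
            apply mul_le_mul hzn hb2 hs0 (by positivity)
        _ ≤ 2 * (1 + a) ^ 2 := by
            rw [mul_div_assoc', div_le_iff₀ (by positivity)]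
            nlinarith [sq_nonneg (2 * t - 1), mul_nonneg ha0 (sq_nonneg (2 * t - 1)),
              mul_nonneg (mul_nonneg ha0 ha0) (sq_nonneg (2 * t - 1)),
              mul_nonneg ha0 ht0, mul_nonneg ha0 (sq_nonneg t)]
end

section
/- Let c = c₁ + ic₂ ∈ ℂ (c₁, c₂ ∈ ℝ), N ∈ ℕ, and set Z₀(z) = (1−|z^{N+1}−c|²)/(1+|z^{N+1}−c|²), Z₁(z) = Re(z^{N+1}−c)/(1+|z^{N+1}−c|²), Z₂(z) = Im(z^{N+1}−c)/(1+|z^{N+1}−c|²). Define φ₀(z) = 1 − 2 z^{N+1}\overline{(z^{N+1}−c)}/(1+|z^{N+1}−c|²) and φ_{N+1}(z) = 2 z^{N+1}( 1 − z^{N+1}\overline{(z^{N+1}−c)}/(1+|z^{N+1}−c|²) ). Then for every z ∈ ℂ the following identities hold: Re φ₀(z) = Z₀(z) − 2c₁Z₁(z) − 2c₂Z₂(z); (1/2)Re φ_{N+1}(z) = c₁Z₀(z) + (1−c₁²+c₂²)Z₁(z) − 2c₁c₂Z₂(z); and (1/2)Im φ_{N+1}(z) = c₂Z₀(z) − 2c₁c₂Z₁(z)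 + (1+c₁²−c₂²)Z₂(z). -/
set_option maxHeartbeats 1000000

/-- Expression of `Re φ₀`, `(1/2)Re φ_{N+1}` and `(1/2)Im φ_{N+1}` as explicit real
linear combinations of `Z₀, Z₁, Z₂`, with coefficients depending on `c = c₁ + ic₂`. -/
theorem phi_in_terms_of_Z (c : ℂ) (c₁ c₂ : ℝ) (hc : c = Complex.mk c₁ c₂) (N : ℕ)
    (Z₀ Z₁ Z₂ : ℂ → ℝ)
    (hZ₀ : ∀ z : ℂ, Z₀ z = (1 - ‖z ^ (N + 1) - c‖ ^ 2) /
      (1 + ‖z ^ (N + 1) - c‖ ^ 2))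
    (hZ₁ : ∀ z : ℂ, Z₁ z = (z ^ (N + 1) - c).re / (1 + ‖z ^ (N + 1) - c‖ ^ 2))
    (hZ₂ : ∀ z : ℂ, Z₂ z = (z ^ (N + 1) - c).im / (1 + ‖z ^ (N + 1) - c‖ ^ 2))
    (φ₀ φN1 : ℂ → ℂ)
    (hφ₀ : ∀ z : ℂ, φ₀ z = 1 - 2 * z ^ (N + 1) * (starRingEnd ℂ) (z ^ (N + 1) - c) /
      (((1 + ‖z ^ (N + 1) - c‖ ^ 2 : ℝ)) : ℂ))
    (hφN1 : ∀ z : ℂ, φN1 z = 2 * z ^ (N + 1) *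
      (1 - z ^ (N + 1) * (starRingEnd ℂ) (z ^ (N + 1) - c) /
        (((1 + ‖z ^ (N + 1) - c‖ ^ 2 : ℝ)) : ℂ))) :
    ∀ z : ℂ,
      (φ₀ z).re = Z₀ z - 2 * c₁ * Z₁ z - 2 * c₂ * Z₂ z ∧
      (1 / 2 : ℝ) * (φN1 z).re =
        c₁ * Z₀ z + (1 - c₁ ^ 2 + c₂ ^ 2) * Z₁ z - 2 * c₁ * c₂ * Z₂ z ∧
      (1 / 2 : ℝ) * (φN1 z).im =
        c₂ * Z₀ z - 2 * c₁ * c₂ * Z₁ z + (1 + c₁ ^ 2 - c₂ ^ 2) * Z₂ z := by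
  intro z
  set w := z ^ (N + 1) with hw
  have habs : (‖w - c‖) ^ 2 = (w - c).re ^ 2 + (w - c).im ^ 2 := by
    rw [Complex.sq_norm, Complex.normSq_apply]; ring
  set x := (w - c).re with hx
  set y := (w - c).im with hy
  have hcre : c.re = c₁ := by rw [hc]
  have hcim : c.im = c₂ := by rw [hc]
  have hwre : w.re = x + c₁ := by simp [hx, Complex.sub_re, hcre]
  have hwim : w.im = y + c₂ := by simp [hy, Complex.sub_im, hcim]
  have hD : (1 : ℝ) + ‖w - c‖ ^ 2 > 0 := by positivity
  have hD' : (1 : ℝ) + x ^ 2 + y ^ 2 ≠ 0 := by positivity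
  rw [hZ₀ z, hZ₁ z, hZ₂ z, hφ₀ z, hφN1 z]
  simp only [← hw, ← hx, ← hy, habs]
  refine ⟨?_, ?_, ?_⟩ <;>
  · simp only [Complex.sub_re, Complex.sub_im, Complex.mul_re, Complex.mul_im,
      Complex.one_re, Complex.one_im, Complex.div_ofReal_re, Complex.div_ofReal_im,
      Complex.conj_re, Complex.conj_im, Complex.re_ofNat, Complex.im_ofNat,
      hwre, hwim, hcre, hcim]
    field_simp
    ring
end
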